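/- arXiv:1904.06561 — 3 statements merged into one kernel-verified Lean document; each statement's English description precedes it below -/
import Mathlib

section
/- (Theorem 3.1, first-order variation formula.) Suppose the costate ψ satisfies the Hamiltonian equation ψ(x) = ∇_φH(x) for a.e. x ∈ G, i.e. ψ(x) = ∇_φF₁(x,φ(x),u(x)) + ∫_G ∇_{φ(x)}F₂(x,z,φ(x),φ(z),u(x),u(z)) dz + ∫_G ψ(y)∇_φf₁(y,x,φ(x),u(x)) dy + ∫_G ∫_G ψ(y)∇_{φ(x)}f₂(y,x,z,φ(x),φ(z),u(x),u(z)) dz dy, and suppose bounded measurable variations δφ : G → ℝ^n, δu : G → ℝ^m satisfy the linearized state equation δφ(x) = ∫_G [∇_φf₁(x,y,φ(y),u(y))δφ(y) + ∇_uf₁(x,y,φ(y),u(y))δu(y)] dy + ∫_G ∫_G [∇_{φ(y)}f₂(x,y,z,φ(y),φ(z),u(y),u(z))δφ(y) + ∇_{u(y)}f₂(x,y,z,φ(y),φ(z),u(y),u(z))δu(y)] dz dy for a.e. x ∈ G. Then the first variation of the cost, δJ := ∫_G [∇_φF₁(x,φ(x),u(x))δφ(x) + ∇_uF₁(x,φ(x),u(x))δu(x)]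 dx + ∫_G ∫_G [∇_{φ(x)}F₂(x,z,φ(x),φ(z),u(x),u(z))δφ(x) + ∇_{u(x)}F₂(x,z,φ(x),φ(z),u(x),u(z))δu(x)] dz dx, equals ∫_G (∇_uH(x)) δu(x) dx. -/
set_option maxHeartbeats 1000000

open MeasureTheory Set Filter Metric

section Helpers

variable {α : Type*} [MeasurableSpace α] {μ : Measure α}

lemma integrable_bdd {F : Type*} [NormedAddCommGroup F] [IsFiniteMeasure μ]
    {f : α → F} (hf : AEStronglyMeasurable f μ) {C : ℝ} (hC : ∀ a, ‖f a‖ ≤ C) :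
    Integrable f μ :=
  (integrable_const C).mono' hf (Filter.Eventually.of_forall hC)

lemma clm_eq_sum {k : ℕ} {F : Type*} [NormedAddCommGroup F] [NormedSpace ℝ F]
    (L : (Fin k → ℝ) →L[ℝ] F) :
    L = ∑ i : Fin k,
      (ContinuousLinearMap.proj i : (Fin k → ℝ) →L[ℝ] ℝ).smulRight (L ((Pi.single i (1:ℝ) : Fin k → ℝ))) := by
  ext v
  have hv : v = ∑ i : Fin k, v i • (Pi.single i (1:ℝ) : Fin k → ℝ) := by
    conv_lhs => rw [← Finset.univ_sum_single v]
    refine Finset.sum_congr rfl fun i _ => ?_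
    rw [← Pi.single_smul, smul_eq_mul, mul_one]
  conv_lhs => rw [hv]
  rw [map_sum]
  simp [ContinuousLinearMap.smulRight_apply]

/-- A parametrized family of derivatives is strongly measurable. -/
lemma sm_fderiv_param {k : ℕ} {F : Type*} [NormedAddCommGroup F] [NormedSpace ℝ F]
    [MeasurableSpace F] [BorelSpace F] [SecondCountableTopology F]
    {g : α → (Fin k → ℝ) → F}
    (hg : Measurable fun q : α × (Fin k → ℝ) => g q.1 q.2)
    (hdiff : ∀ a, Differentiable ℝ (g a))
    {p : α → Fin k → ℝ} (hp : Measurable p) :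
    StronglyMeasurable fun a => fderiv ℝ (g a) (p a) := by
  have hquot : ∀ (i : Fin k), ∀ (j : ℕ), Measurable fun a =>
      (j:ℝ) • (g a (p a + ((j:ℝ))⁻¹ • (Pi.single i (1:ℝ) : Fin k → ℝ)) - g a (p a)) := by
    intro i j
    apply Measurable.const_smul
    exact ((hg.comp (measurable_id.prodMk
        (hp.add_const (((j:ℝ))⁻¹ • (Pi.single i (1:ℝ) : Fin k → ℝ))))).sub
      (hg.comp (measurable_id.prodMk hp)))
  set Lj : ℕ → α → (Fin k → ℝ) →L[ℝ] F := fun j a =>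
    ∑ i : Fin k, (ContinuousLinearMap.proj i : (Fin k → ℝ) →L[ℝ] ℝ).smulRight
      ((j:ℝ) • (g a (p a + ((j:ℝ))⁻¹ • (Pi.single i (1:ℝ) : Fin k → ℝ)) - g a (p a))) with hLj
  have hLjsm : ∀ j, StronglyMeasurable (Lj j) := by
    intro j
    apply Finset.stronglyMeasurable_fun_sum
    intro i _
    exact ((ContinuousLinearMap.smulRightL ℝ (Fin k → ℝ) F
      (ContinuousLinearMap.proj i)).continuous.comp_stronglyMeasurable
      ((hquot i j).stronglyMeasurable))
  refine stronglyMeasurable_of_tendsto atTop hLjsm ?_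
  rw [tendsto_pi_nhds]
  intro a
  have hc : Tendsto (fun j : ℕ => ‖(j:ℝ)‖) atTop atTop :=
    (tendsto_natCast_atTop_atTop (R := ℝ)).congr fun j => (Real.norm_natCast j).symm
  have hlim : ∀ i : Fin k, Tendsto (fun j : ℕ =>
      (j:ℝ) • (g a (p a + ((j:ℝ))⁻¹ • (Pi.single i (1:ℝ) : Fin k → ℝ)) - g a (p a))) atTop
      (nhds (fderiv ℝ (g a) (p a) ((Pi.single i (1:ℝ) : Fin k → ℝ)))) :=
    fun i => ((hdiff a (p a)).hasFDerivAt).lim ((Pi.single i (1:ℝ) : Fin k → ℝ)) hc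
  rw [show fderiv ℝ (g a) (p a) = ∑ i : Fin k,
      (ContinuousLinearMap.proj i : (Fin k → ℝ) →L[ℝ] ℝ).smulRight
        (fderiv ℝ (g a) (p a) ((Pi.single i (1:ℝ) : Fin k → ℝ))) from clm_eq_sum _]
  exact tendsto_finset_sum _ fun i _ =>
    ((ContinuousLinearMap.smulRightL ℝ (Fin k → ℝ) F
      (ContinuousLinearMap.proj i)).continuous.tendsto _).comp (hlim i)

lemma norm_fderiv_le_iter {E F : Type*} [NormedAddCommGroup E] [NormedSpace ℝ E]
    [NormedAddCommGroup F] [NormedSpace ℝ F] {h : E → F} {p : E} :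
    ‖fderiv ℝ h p‖ ≤ ‖iteratedFDeriv ℝ 1 h p‖ := by
  refine ContinuousLinearMap.opNorm_le_bound _ (norm_nonneg _) fun v => ?_
  have := (iteratedFDeriv ℝ 1 h p).le_opNorm (fun _ => v)
  simpa [iteratedFDeriv_one_apply] using this

/-- Differentiation under the integral sign, constant-bound version. -/
lemma hasFDerivAt_integral_param {E F : Type*} [NormedAddCommGroup E] [NormedSpace ℝ E]
    [NormedAddCommGroup F] [NormedSpace ℝ F] [CompleteSpace F] [IsFiniteMeasure μ]
    {g : α → E → F} {g' : α → E → (E →L[ℝ] F)} {C C' : ℝ}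
    (hmeas : ∀ w, AEStronglyMeasurable (fun a => g a w) μ)
    (hbd : ∀ a w, ‖g a w‖ ≤ C)
    (hderiv : ∀ a w, HasFDerivAt (g a) (g' a w) w)
    (h'meas : ∀ w, AEStronglyMeasurable (fun a => g' a w) μ)
    (h'bd : ∀ a w, ‖g' a w‖ ≤ C')
    (w₀ : E) :
    HasFDerivAt (fun w => ∫ a, g a w ∂μ) (∫ a, g' a w₀ ∂μ) w₀ := by
  apply hasFDerivAt_integral_of_dominated_of_fderiv_le
    (F' := fun w a => g' a w) (bound := fun _ => C') Filter.univ_mem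
  · exact Filter.Eventually.of_forall fun w => hmeas w
  · exact integrable_bdd (hmeas w₀) (fun a => hbd a w₀)
  · exact h'meas w₀
  · exact Filter.Eventually.of_forall fun a w _ => h'bd a w
  · exact integrable_const _
  · exact Filter.Eventually.of_forall fun a w _ => hderiv a w




section Helpers2

variable {α : Type*} [MeasurableSpace α]
variable {E P F G' : Type*} [NormedAddCommGroup E] [NormedSpace ℝ E]
  [NormedAddCommGroup P] [NormedSpace ℝ P] [NormedAddCommGroup F] [NormedSpace ℝ F]
  [NormedAddCommGroup G'] [NormedSpace ℝ G']

lemma sm_apply {L : α → E →L[ℝ] F} {v : α → E}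
    (hL : StronglyMeasurable L) (hv : StronglyMeasurable v) :
    StronglyMeasurable fun a => L a (v a) :=
  isBoundedBilinearMap_apply.continuous.comp_stronglyMeasurable (hL.prodMk hv)

lemma sm_comp_clm {L : α → F →L[ℝ] G'} {M : α → E →L[ℝ] F}
    (hL : StronglyMeasurable L) (hM : StronglyMeasurable M) :
    StronglyMeasurable fun a => (L a).comp (M a) :=
  isBoundedBilinearMap_comp.continuous.comp_stronglyMeasurable (hL.prodMk hM)

lemma comp_affine_fderiv {h : P → F} (hd : Differentiable ℝ h) {C : ℝ}
    (hC : ∀ p, ‖fderiv ℝ h p‖ ≤ C) (hC0 : 0 ≤ C)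
    {c : E → P} {L : E →L[ℝ] P} (hc : ∀ e, HasFDerivAt c L e) (hL : ∀ v, ‖L v‖ ≤ ‖v‖) :
    (∀ a, HasFDerivAt (fun e => h (c e)) ((fderiv ℝ h (c a)).comp L) a) ∧
      (∀ a, ‖fderiv ℝ (fun e => h (c e)) a‖ ≤ C) := by
  have key : ∀ a, HasFDerivAt (fun e => h (c e)) ((fderiv ℝ h (c a)).comp L) a :=
    fun a => ((hd (c a)).hasFDerivAt).comp a (hc a)
  refine ⟨key, fun a => ?_⟩
  rw [(key a).fderiv]
  refine ContinuousLinearMap.opNorm_le_bound _ hC0 fun v => ?_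
  calc ‖(fderiv ℝ h (c a)) (L v)‖ ≤ ‖fderiv ℝ h (c a)‖ * ‖L v‖ :=
        (fderiv ℝ h (c a)).le_opNorm _
    _ ≤ C * ‖v‖ := mul_le_mul (hC _) (hL v) (norm_nonneg _) hC0

lemma pd_pair_left {E₂ : Type*} [NormedAddCommGroup E₂] [NormedSpace ℝ E₂]
    {h : E × E₂ → F} (hd : Differentiable ℝ h) {C : ℝ}
    (hC : ∀ p, ‖fderiv ℝ h p‖ ≤ C) (hC0 : 0 ≤ C) (b : E₂) :
    (∀ a, HasFDerivAt (fun x => h (x, b))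
        ((fderiv ℝ h (a, b)).comp ((ContinuousLinearMap.id ℝ E).prod 0)) a) ∧
      (∀ a, ‖fderiv ℝ (fun x => h (x, b)) a‖ ≤ C) := by
  refine comp_affine_fderiv hd hC hC0
    (fun e => (hasFDerivAt_id e).prodMk (hasFDerivAt_const b e)) (fun v => ?_)
  simp [Prod.norm_def]

lemma pd_pair_right {E₂ : Type*} [NormedAddCommGroup E₂] [NormedSpace ℝ E₂]
    {h : E₂ × E → F} (hd : Differentiable ℝ h) {C : ℝ}
    (hC : ∀ p, ‖fderiv ℝ h p‖ ≤ C) (hC0 : 0 ≤ C) (b : E₂) :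
    (∀ a, HasFDerivAt (fun x => h (b, x))
        ((fderiv ℝ h (b, a)).comp ((0 : E →L[ℝ] E₂).prod (ContinuousLinearMap.id ℝ E))) a) ∧
      (∀ a, ‖fderiv ℝ (fun x => h (b, x)) a‖ ≤ C) := by
  refine comp_affine_fderiv hd hC hC0
    (fun e => (hasFDerivAt_const b e).prodMk (hasFDerivAt_id e)) (fun v => ?_)
  simp [Prod.norm_def]

lemma pd_quad_3 {E₁ E₂ E₄ : Type*} [NormedAddCommGroup E₁] [NormedSpace ℝ E₁]
    [NormedAddCommGroup E₂] [NormedSpace ℝ E₂] [NormedAddCommGroup E₄] [NormedSpace ℝ E₄]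
    {h : E₁ × E₂ × E × E₄ → F} (hd : Differentiable ℝ h) {C : ℝ}
    (hC : ∀ p, ‖fderiv ℝ h p‖ ≤ C) (hC0 : 0 ≤ C) (p₁ : E₁) (p₂ : E₂) (p₄ : E₄) :
    (∀ a, HasFDerivAt (fun x => h (p₁, p₂, x, p₄))
        ((fderiv ℝ h (p₁, p₂, a, p₄)).comp
          ((0 : E →L[ℝ] E₁).prod ((0 : E →L[ℝ] E₂).prod
            ((ContinuousLinearMap.id ℝ E).prod (0 : E →L[ℝ] E₄))))) a) ∧
      (∀ a, ‖fderiv ℝ (fun x => h (p₁, p₂, x, p₄)) a‖ ≤ C) := by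
  refine comp_affine_fderiv hd hC hC0
    (fun e => (hasFDerivAt_const p₁ e).prodMk ((hasFDerivAt_const p₂ e).prodMk
      ((hasFDerivAt_id e).prodMk (hasFDerivAt_const p₄ e)))) (fun v => ?_)
  simp [Prod.norm_def]

end Helpers2


section Helpers3
variable {α : Type*} [MeasurableSpace α] {μ : Measure α}

lemma clm_apply_bound {E F : Type*} [NormedAddCommGroup E] [NormedSpace ℝ E]
    [NormedAddCommGroup F] [NormedSpace ℝ F] (L : E →L[ℝ] F) (v : E) {cL cv : ℝ}
    (hL : ‖L‖ ≤ cL) (hv : ‖v‖ ≤ cv) (h0 : 0 ≤ cL) : ‖L v‖ ≤ cL * cv :=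
  le_trans (L.le_opNorm v) (mul_le_mul hL hv (norm_nonneg _) h0)

lemma norm_integral_le_vol {F : Type*} [NormedAddCommGroup F] [NormedSpace ℝ F]
    [IsFiniteMeasure μ] {f : α → F} {c : ℝ} (h : ∀ a, ‖f a‖ ≤ c) :
    ‖∫ a, f a ∂μ‖ ≤ c * (μ Set.univ).toReal :=
  norm_integral_le_of_norm_le_const (Filter.Eventually.of_forall h)

end Helpers3

lemma integral_add4 {α : Type*} [MeasurableSpace α] {μ : MeasureTheory.Measure α}
    {f g h k : α → ℝ} (hf : MeasureTheory.Integrable f μ) (hg : MeasureTheory.Integrable g μ)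
    (hh : MeasureTheory.Integrable h μ) (hk : MeasureTheory.Integrable k μ) :
    ∫ a, (f a + g a + h a + k a) ∂μ
      = (∫ a, f a ∂μ) + (∫ a, g a ∂μ) + (∫ a, h a ∂μ) + ∫ a, k a ∂μ := by
  calc ∫ a, (f a + g a + h a + k a) ∂μ
      = (∫ a, (f a + g a + h a) ∂μ) + ∫ a, k a ∂μ :=
        MeasureTheory.integral_add ((hf.add hg).add hh) hk
    _ = ((∫ a, (f a + g a) ∂μ) + ∫ a, h a ∂μ) + ∫ a, k a ∂μ := by
        rw [show (∫ a, (f a + g a + h a) ∂μ) = (∫ a, (f a + g a) ∂μ) + ∫ a, h a ∂μ from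
          MeasureTheory.integral_add (hf.add hg) hh]
    _ = (∫ a, f a ∂μ) + (∫ a, g a ∂μ) + (∫ a, h a ∂μ) + ∫ a, k a ∂μ := by
        rw [show (∫ a, (f a + g a) ∂μ) = (∫ a, f a ∂μ) + ∫ a, g a ∂μ from
          MeasureTheory.integral_add hf hg]
/-- The Hamiltonian (3.8) of the controlled double Fredholm problem:
`H(x,η,ν) = F₁(x,η,ν) + ∫_G F₂(x,z,η,φ(z),ν,u(z)) dz + ∫_G ψ(y) f₁(y,x,η,ν) dy
  + ∫_G ∫_G ψ(y) f₂(y,x,z,η,φ(z),ν,u(z)) dz dy`. -/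
noncomputable def fredholmHamiltonian {d n m : ℕ} (G : Set (Fin d → ℝ))
    (f₁ : (Fin d → ℝ) → (Fin d → ℝ) → (Fin n → ℝ) → (Fin m → ℝ) → (Fin n → ℝ))
    (f₂ : (Fin d → ℝ) → (Fin d → ℝ) → (Fin d → ℝ) →
      (Fin n → ℝ) → (Fin n → ℝ) → (Fin m → ℝ) → (Fin m → ℝ) → (Fin n → ℝ))
    (F₁ : (Fin d → ℝ) → (Fin n → ℝ) → (Fin m → ℝ) → ℝ)
    (F₂ : (Fin d → ℝ) → (Fin d → ℝ) →
      (Fin n → ℝ) → (Fin n → ℝ) → (Fin m → ℝ) → (Fin m → ℝ) → ℝ)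
    (φ : (Fin d → ℝ) → (Fin n → ℝ)) (u : (Fin d → ℝ) → (Fin m → ℝ))
    (ψ : (Fin d → ℝ) → ((Fin n → ℝ) →L[ℝ] ℝ))
    (x : Fin d → ℝ) (η : Fin n → ℝ) (ν : Fin m → ℝ) : ℝ :=
  F₁ x η ν + (∫ z in G, F₂ x z η (φ z) ν (u z)) +
    (∫ y in G, ψ y (f₁ y x η ν)) +
    ∫ y in G, ∫ z in G, ψ y (f₂ y x z η (φ z) ν (u z))

/-- Theorem 3.1 (first-order variation formula): if the costate satisfies the Hamiltonian
equation `ψ(x) = ∇_φ H(x)` a.e. and the variations satisfy the linearized state equation,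
then the first variation of the cost equals `∫_G ∇_u H(x) δu(x) dx`. -/
theorem fredholm_first_variation_formula
    (d n m : ℕ) (G : Set (Fin d → ℝ)) (hG : MeasurableSet G)
    (hGfin : volume G < ⊤) (hGpos : 0 < volume G)
    (f₁ : (Fin d → ℝ) → (Fin d → ℝ) → (Fin n → ℝ) → (Fin m → ℝ) → (Fin n → ℝ))
    (f₂ : (Fin d → ℝ) → (Fin d → ℝ) → (Fin d → ℝ) →
      (Fin n → ℝ) → (Fin n → ℝ) → (Fin m → ℝ) → (Fin m → ℝ) → (Fin n → ℝ))
    (F₁ : (Fin d → ℝ) → (Fin n → ℝ) → (Fin m → ℝ) → ℝ)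
    (F₂ : (Fin d → ℝ) → (Fin d → ℝ) →
      (Fin n → ℝ) → (Fin n → ℝ) → (Fin m → ℝ) → (Fin m → ℝ) → ℝ)
    -- joint measurability of the data
    (hf₁meas : Measurable fun q : (Fin d → ℝ) × (Fin d → ℝ) × (Fin n → ℝ) × (Fin m → ℝ) =>
      f₁ q.1 q.2.1 q.2.2.1 q.2.2.2)
    (hf₂meas : Measurable fun q : (Fin d → ℝ) × (Fin d → ℝ) × (Fin d → ℝ) ×
        (Fin n → ℝ) × (Fin n → ℝ) × (Fin m → ℝ) × (Fin m → ℝ) =>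
      f₂ q.1 q.2.1 q.2.2.1 q.2.2.2.1 q.2.2.2.2.1 q.2.2.2.2.2.1 q.2.2.2.2.2.2)
    (hF₁meas : Measurable fun q : (Fin d → ℝ) × (Fin n → ℝ) × (Fin m → ℝ) =>
      F₁ q.1 q.2.1 q.2.2)
    (hF₂meas : Measurable fun q : (Fin d → ℝ) × (Fin d → ℝ) ×
        (Fin n → ℝ) × (Fin n → ℝ) × (Fin m → ℝ) × (Fin m → ℝ) =>
      F₂ q.1 q.2.1 q.2.2.1 q.2.2.2.1 q.2.2.2.2.1 q.2.2.2.2.2)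
    -- twice continuous differentiability in the state and control arguments
    (hf₁smooth : ∀ x y, ContDiff ℝ 2 fun p : (Fin n → ℝ) × (Fin m → ℝ) => f₁ x y p.1 p.2)
    (hf₂smooth : ∀ x y z, ContDiff ℝ 2
      fun p : (Fin n → ℝ) × (Fin n → ℝ) × (Fin m → ℝ) × (Fin m → ℝ) =>
        f₂ x y z p.1 p.2.1 p.2.2.1 p.2.2.2)
    (hF₁smooth : ∀ x, ContDiff ℝ 2 fun p : (Fin n → ℝ) × (Fin m → ℝ) => F₁ x p.1 p.2)
    (hF₂smooth : ∀ x z, ContDiff ℝ 2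
      fun p : (Fin n → ℝ) × (Fin n → ℝ) × (Fin m → ℝ) × (Fin m → ℝ) =>
        F₂ x z p.1 p.2.1 p.2.2.1 p.2.2.2)
    -- uniform bounds on the data and their derivatives up to order 2
    (hf₁bd : ∃ C, ∀ x y (p : (Fin n → ℝ) × (Fin m → ℝ)) (k : ℕ), k ≤ 2 →
      ‖iteratedFDeriv ℝ k (fun q : (Fin n → ℝ) × (Fin m → ℝ) => f₁ x y q.1 q.2) p‖ ≤ C)
    (hf₂bd : ∃ C, ∀ x y z (p : (Fin n → ℝ) × (Fin n → ℝ) × (Fin m → ℝ) × (Fin m → ℝ))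
      (k : ℕ), k ≤ 2 →
      ‖iteratedFDeriv ℝ k
        (fun q : (Fin n → ℝ) × (Fin n → ℝ) × (Fin m → ℝ) × (Fin m → ℝ) =>
          f₂ x y z q.1 q.2.1 q.2.2.1 q.2.2.2) p‖ ≤ C)
    (hF₁bd : ∃ C, ∀ x (p : (Fin n → ℝ) × (Fin m → ℝ)) (k : ℕ), k ≤ 2 →
      ‖iteratedFDeriv ℝ k (fun q : (Fin n → ℝ) × (Fin m → ℝ) => F₁ x q.1 q.2) p‖ ≤ C)
    (hF₂bd : ∃ C, ∀ x z (p : (Fin n → ℝ) × (Fin n → ℝ) × (Fin m → ℝ) × (Fin m → ℝ))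
      (k : ℕ), k ≤ 2 →
      ‖iteratedFDeriv ℝ k
        (fun q : (Fin n → ℝ) × (Fin n → ℝ) × (Fin m → ℝ) × (Fin m → ℝ) =>
          F₂ x z q.1 q.2.1 q.2.2.1 q.2.2.2) p‖ ≤ C)
    -- symmetry of f₂ and F₂
    (hf₂symm : ∀ x y z φ₁ φ₂ u₁ u₂, f₂ x y z φ₁ φ₂ u₁ u₂ = f₂ x z y φ₂ φ₁ u₂ u₁)
    (hF₂symm : ∀ x z φ₁ φ₂ u₁ u₂, F₂ x z φ₁ φ₂ u₁ u₂ = F₂ z x φ₂ φ₁ u₂ u₁)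
    -- bounded measurable state, control, costate
    (φ : (Fin d → ℝ) → (Fin n → ℝ)) (u : (Fin d → ℝ) → (Fin m → ℝ))
    (ψ : (Fin d → ℝ) → ((Fin n → ℝ) →L[ℝ] ℝ))
    (hφ : Measurable φ) (hφbd : ∃ C, ∀ x, ‖φ x‖ ≤ C)
    (hu : Measurable u) (hubd : ∃ C, ∀ x, ‖u x‖ ≤ C)
    (hψ : StronglyMeasurable ψ) (hψbd : ∃ C, ∀ x, ‖ψ x‖ ≤ C)
    -- bounded measurable variations
    (δφ : (Fin d → ℝ) → (Fin n → ℝ)) (δu : (Fin d → ℝ) → (Fin m → ℝ))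
    (hδφ : Measurable δφ) (hδφbd : ∃ C, ∀ x, ‖δφ x‖ ≤ C)
    (hδu : Measurable δu) (hδubd : ∃ C, ∀ x, ‖δu x‖ ≤ C)
    -- the costate Hamiltonian equation ψ(x) = ∇_φ H(x) a.e. on G
    (hcostate : ∀ᵐ x ∂volume.restrict G,
      ψ x = fderiv ℝ (fun η => fredholmHamiltonian G f₁ f₂ F₁ F₂ φ u ψ x η (u x)) (φ x))
    -- the linearized state equation a.e. on G
    (hlin : ∀ᵐ x ∂volume.restrict G,
      δφ x =
        (∫ y in G,
          (fderiv ℝ (fun η => f₁ x y η (u y)) (φ y) (δφ y) +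
            fderiv ℝ (fun ν => f₁ x y (φ y) ν) (u y) (δu y))) +
        ∫ y in G, ∫ z in G,
          (fderiv ℝ (fun η => f₂ x y z η (φ z) (u y) (u z)) (φ y) (δφ y) +
            fderiv ℝ (fun ν => f₂ x y z (φ y) (φ z) ν (u z)) (u y) (δu y))) :
    -- conclusion: the first variation of the cost equals ∫_G ∇_u H(x) δu(x) dx
    (∫ x in G,
      (fderiv ℝ (fun η => F₁ x η (u x)) (φ x) (δφ x) +
        fderiv ℝ (fun ν => F₁ x (φ x) ν) (u x) (δu x))) +
    (∫ x in G, ∫ z in G,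
      (fderiv ℝ (fun η => F₂ x z η (φ z) (u x) (u z)) (φ x) (δφ x) +
        fderiv ℝ (fun ν => F₂ x z (φ x) (φ z) ν (u z)) (u x) (δu x))) =
    ∫ x in G,
      fderiv ℝ (fun ν => fredholmHamiltonian G f₁ f₂ F₁ F₂ φ u ψ x (φ x) ν) (u x) (δu x) := by
  classical
  haveI : IsFiniteMeasure (volume.restrict G) :=
    ⟨by rwa [Measure.restrict_apply_univ]⟩
  obtain ⟨C₁, hC₁⟩ := hf₁bd
  obtain ⟨C₂, hC₂⟩ := hf₂bd
  obtain ⟨K₁, hK₁⟩ := hF₁bd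
  obtain ⟨K₂, hK₂⟩ := hF₂bd
  obtain ⟨Cψ, hCψ⟩ := hψbd
  obtain ⟨Cp, hCp⟩ := hδφbd
  obtain ⟨Cq, hCq⟩ := hδubd
  have hC₁0 : 0 ≤ C₁ := (norm_nonneg _).trans (hC₁ 0 0 (0, 0) 0 (by norm_num))
  have hC₂0 : 0 ≤ C₂ := (norm_nonneg _).trans (hC₂ 0 0 0 (0, 0, 0, 0) 0 (by norm_num))
  have hK₁0 : 0 ≤ K₁ := (norm_nonneg _).trans (hK₁ 0 (0, 0) 0 (by norm_num))
  have hK₂0 : 0 ≤ K₂ := (norm_nonneg _).trans (hK₂ 0 0 (0, 0, 0, 0) 0 (by norm_num))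
  have hCψ0 : 0 ≤ Cψ := (norm_nonneg _).trans (hCψ 0)
  have hCp0 : 0 ≤ Cp := (norm_nonneg _).trans (hCp 0)
  have hCq0 : 0 ≤ Cq := (norm_nonneg _).trans (hCq 0)
  -- value bounds
  have vF₁ : ∀ x η ν, ‖F₁ x η ν‖ ≤ K₁ := fun x η ν => by
    simpa [norm_iteratedFDeriv_zero] using hK₁ x (η, ν) 0 (by norm_num)
  have vF₂ : ∀ x z η₁ η₂ ν₁ ν₂, ‖F₂ x z η₁ η₂ ν₁ ν₂‖ ≤ K₂ := fun x z η₁ η₂ ν₁ ν₂ => by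
    simpa [norm_iteratedFDeriv_zero] using hK₂ x z (η₁, η₂, ν₁, ν₂) 0 (by norm_num)
  have vf₁ : ∀ x y η ν, ‖f₁ x y η ν‖ ≤ C₁ := fun x y η ν => by
    simpa [norm_iteratedFDeriv_zero] using hC₁ x y (η, ν) 0 (by norm_num)
  have vf₂ : ∀ x y z η₁ η₂ ν₁ ν₂, ‖f₂ x y z η₁ η₂ ν₁ ν₂‖ ≤ C₂ := fun x y z η₁ η₂ ν₁ ν₂ => by
    simpa [norm_iteratedFDeriv_zero] using hC₂ x y z (η₁, η₂, ν₁, ν₂) 0 (by norm_num)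
  -- joint differentiability and fderiv bounds
  have hF₁d : ∀ x, Differentiable ℝ fun p : (Fin n → ℝ) × (Fin m → ℝ) => F₁ x p.1 p.2 :=
    fun x => (hF₁smooth x).differentiable two_ne_zero
  have hF₁fd : ∀ x p, ‖fderiv ℝ (fun p : (Fin n → ℝ) × (Fin m → ℝ) => F₁ x p.1 p.2) p‖ ≤ K₁ :=
    fun x p => norm_fderiv_le_iter.trans (hK₁ x p 1 one_le_two)
  have hF₂d : ∀ x z, Differentiable ℝ
      fun p : (Fin n → ℝ) × (Fin n → ℝ) × (Fin m → ℝ) × (Fin m → ℝ) =>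
        F₂ x z p.1 p.2.1 p.2.2.1 p.2.2.2 :=
    fun x z => (hF₂smooth x z).differentiable two_ne_zero
  have hF₂fd : ∀ x z p, ‖fderiv ℝ
      (fun p : (Fin n → ℝ) × (Fin n → ℝ) × (Fin m → ℝ) × (Fin m → ℝ) =>
        F₂ x z p.1 p.2.1 p.2.2.1 p.2.2.2) p‖ ≤ K₂ :=
    fun x z p => norm_fderiv_le_iter.trans (hK₂ x z p 1 one_le_two)
  have hf₁d : ∀ x y, Differentiable ℝ fun p : (Fin n → ℝ) × (Fin m → ℝ) => f₁ x y p.1 p.2 :=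
    fun x y => (hf₁smooth x y).differentiable two_ne_zero
  have hf₁fd : ∀ x y p, ‖fderiv ℝ (fun p : (Fin n → ℝ) × (Fin m → ℝ) => f₁ x y p.1 p.2) p‖ ≤ C₁ :=
    fun x y p => norm_fderiv_le_iter.trans (hC₁ x y p 1 one_le_two)
  have hf₂d : ∀ x y z, Differentiable ℝ
      fun p : (Fin n → ℝ) × (Fin n → ℝ) × (Fin m → ℝ) × (Fin m → ℝ) =>
        f₂ x y z p.1 p.2.1 p.2.2.1 p.2.2.2 :=
    fun x y z => (hf₂smooth x y z).differentiable two_ne_zero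
  have hf₂fd : ∀ x y z p, ‖fderiv ℝ
      (fun p : (Fin n → ℝ) × (Fin n → ℝ) × (Fin m → ℝ) × (Fin m → ℝ) =>
        f₂ x y z p.1 p.2.1 p.2.2.1 p.2.2.2) p‖ ≤ C₂ :=
    fun x y z p => norm_fderiv_le_iter.trans (hC₂ x y z p 1 one_le_two)
  -- partial derivatives: existence, value of derivative irrelevant, bounds
  have pdF₁η := fun x ν => pd_pair_left (hF₁d x) (hF₁fd x) hK₁0 ν
  have pdF₁ν := fun x η => pd_pair_right (hF₁d x) (hF₁fd x) hK₁0 η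
  have pdF₂η := fun x z q => pd_pair_left (hF₂d x z) (hF₂fd x z) hK₂0 q
  have pdF₂ν := fun x z p₁ p₂ p₄ => pd_quad_3 (hF₂d x z) (hF₂fd x z) hK₂0 p₁ p₂ p₄
  have pdf₁η := fun x y ν => pd_pair_left (hf₁d x y) (hf₁fd x y) hC₁0 ν
  have pdf₁ν := fun x y η => pd_pair_right (hf₁d x y) (hf₁fd x y) hC₁0 η
  have pdf₂η := fun x y z q => pd_pair_left (hf₂d x y z) (hf₂fd x y z) hC₂0 q
  have pdf₂ν := fun x y z p₁ p₂ p₄ => pd_quad_3 (hf₂d x y z) (hf₂fd x y z) hC₂0 p₁ p₂ p₄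
  -- restated as facts about the literal partial functions
  have dF₁η : ∀ x ν, Differentiable ℝ (fun η => F₁ x η ν) :=
    fun x ν η => ((pdF₁η x ν).1 η).differentiableAt
  have bF₁η : ∀ x ν η, ‖fderiv ℝ (fun η => F₁ x η ν) η‖ ≤ K₁ := fun x ν => (pdF₁η x ν).2
  have dF₁ν : ∀ x η, Differentiable ℝ (fun ν => F₁ x η ν) :=
    fun x η ν => ((pdF₁ν x η).1 ν).differentiableAt
  have bF₁ν : ∀ x η ν, ‖fderiv ℝ (fun ν => F₁ x η ν) ν‖ ≤ K₁ := fun x η => (pdF₁ν x η).2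
  have dF₂η : ∀ x z η₂ ν₁ ν₂, Differentiable ℝ (fun η => F₂ x z η η₂ ν₁ ν₂) :=
    fun x z η₂ ν₁ ν₂ η => ((pdF₂η x z (η₂, ν₁, ν₂)).1 η).differentiableAt
  have bF₂η : ∀ x z η₂ ν₁ ν₂ η, ‖fderiv ℝ (fun η => F₂ x z η η₂ ν₁ ν₂) η‖ ≤ K₂ :=
    fun x z η₂ ν₁ ν₂ => (pdF₂η x z (η₂, ν₁, ν₂)).2
  have dF₂ν : ∀ x z η₁ η₂ ν₂, Differentiable ℝ (fun ν => F₂ x z η₁ η₂ ν ν₂) :=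
    fun x z η₁ η₂ ν₂ ν => ((pdF₂ν x z η₁ η₂ ν₂).1 ν).differentiableAt
  have bF₂ν : ∀ x z η₁ η₂ ν₂ ν, ‖fderiv ℝ (fun ν => F₂ x z η₁ η₂ ν ν₂) ν‖ ≤ K₂ :=
    fun x z η₁ η₂ ν₂ => (pdF₂ν x z η₁ η₂ ν₂).2
  have df₁η : ∀ x y ν, Differentiable ℝ (fun η => f₁ x y η ν) :=
    fun x y ν η => ((pdf₁η x y ν).1 η).differentiableAt
  have bf₁η : ∀ x y ν η, ‖fderiv ℝ (fun η => f₁ x y η ν) η‖ ≤ C₁ := fun x y ν => (pdf₁η x y ν).2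
  have df₁ν : ∀ x y η, Differentiable ℝ (fun ν => f₁ x y η ν) :=
    fun x y η ν => ((pdf₁ν x y η).1 ν).differentiableAt
  have bf₁ν : ∀ x y η ν, ‖fderiv ℝ (fun ν => f₁ x y η ν) ν‖ ≤ C₁ := fun x y η => (pdf₁ν x y η).2
  have df₂η : ∀ x y z η₂ ν₁ ν₂, Differentiable ℝ (fun η => f₂ x y z η η₂ ν₁ ν₂) :=
    fun x y z η₂ ν₁ ν₂ η => ((pdf₂η x y z (η₂, ν₁, ν₂)).1 η).differentiableAt
  have bf₂η : ∀ x y z η₂ ν₁ ν₂ η, ‖fderiv ℝ (fun η => f₂ x y z η η₂ ν₁ ν₂) η‖ ≤ C₂ :=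
    fun x y z η₂ ν₁ ν₂ => (pdf₂η x y z (η₂, ν₁, ν₂)).2
  have df₂ν : ∀ x y z η₁ η₂ ν₂, Differentiable ℝ (fun ν => f₂ x y z η₁ η₂ ν ν₂) :=
    fun x y z η₁ η₂ ν₂ ν => ((pdf₂ν x y z η₁ η₂ ν₂).1 ν).differentiableAt
  have bf₂ν : ∀ x y z η₁ η₂ ν₂ ν, ‖fderiv ℝ (fun ν => f₂ x y z η₁ η₂ ν ν₂) ν‖ ≤ C₂ :=
    fun x y z η₁ η₂ ν₂ => (pdf₂ν x y z η₁ η₂ ν₂).2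
  -- strongly measurable families of partial derivatives
  have smDF1φ : StronglyMeasurable fun x => fderiv ℝ (fun η => F₁ x η (u x)) (φ x) :=
    sm_fderiv_param (g := fun x η => F₁ x η (u x)) (by fun_prop) (fun x => dF₁η x (u x)) hφ
  have smDF1u : StronglyMeasurable fun x => fderiv ℝ (fun ν => F₁ x (φ x) ν) (u x) :=
    sm_fderiv_param (g := fun x ν => F₁ x (φ x) ν) (by fun_prop) (fun x => dF₁ν x (φ x)) hu
  have smDF2φ : StronglyMeasurable fun w : (Fin d → ℝ) × (Fin d → ℝ) =>
      fderiv ℝ (fun η => F₂ w.1 w.2 η (φ w.2) (u w.1) (u w.2)) (φ w.1) :=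
    sm_fderiv_param (g := fun w η => F₂ w.1 w.2 η (φ w.2) (u w.1) (u w.2)) (by fun_prop)
      (fun w => dF₂η w.1 w.2 (φ w.2) (u w.1) (u w.2)) (hφ.comp measurable_fst)
  have smDF2u : StronglyMeasurable fun w : (Fin d → ℝ) × (Fin d → ℝ) =>
      fderiv ℝ (fun ν => F₂ w.1 w.2 (φ w.1) (φ w.2) ν (u w.2)) (u w.1) :=
    sm_fderiv_param (g := fun w ν => F₂ w.1 w.2 (φ w.1) (φ w.2) ν (u w.2)) (by fun_prop)
      (fun w => dF₂ν w.1 w.2 (φ w.1) (φ w.2) (u w.2)) (hu.comp measurable_fst)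
  have smD1φ : StronglyMeasurable fun w : (Fin d → ℝ) × (Fin d → ℝ) =>
      fderiv ℝ (fun η => f₁ w.1 w.2 η (u w.2)) (φ w.2) :=
    sm_fderiv_param (g := fun w η => f₁ w.1 w.2 η (u w.2)) (by fun_prop)
      (fun w => df₁η w.1 w.2 (u w.2)) (hφ.comp measurable_snd)
  have smD1u : StronglyMeasurable fun w : (Fin d → ℝ) × (Fin d → ℝ) =>
      fderiv ℝ (fun ν => f₁ w.1 w.2 (φ w.2) ν) (u w.2) :=
    sm_fderiv_param (g := fun w ν => f₁ w.1 w.2 (φ w.2) ν) (by fun_prop)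
      (fun w => df₁ν w.1 w.2 (φ w.2)) (hu.comp measurable_snd)
  have smD2φ : StronglyMeasurable fun w : (Fin d → ℝ) × (Fin d → ℝ) × (Fin d → ℝ) =>
      fderiv ℝ (fun η => f₂ w.1 w.2.1 w.2.2 η (φ w.2.2) (u w.2.1) (u w.2.2)) (φ w.2.1) :=
    sm_fderiv_param (g := fun (w : (Fin d → ℝ) × (Fin d → ℝ) × (Fin d → ℝ)) η => f₂ w.1 w.2.1 w.2.2 η (φ w.2.2) (u w.2.1) (u w.2.2))
      (by fun_prop) (fun w => df₂η w.1 w.2.1 w.2.2 (φ w.2.2) (u w.2.1) (u w.2.2)) (by fun_prop)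
  have smD2u : StronglyMeasurable fun w : (Fin d → ℝ) × (Fin d → ℝ) × (Fin d → ℝ) =>
      fderiv ℝ (fun ν => f₂ w.1 w.2.1 w.2.2 (φ w.2.1) (φ w.2.2) ν (u w.2.2)) (u w.2.1) :=
    sm_fderiv_param (g := fun (w : (Fin d → ℝ) × (Fin d → ℝ) × (Fin d → ℝ)) ν => f₂ w.1 w.2.1 w.2.2 (φ w.2.1) (φ w.2.2) ν (u w.2.2))
      (by fun_prop) (fun w => df₂ν w.1 w.2.1 w.2.2 (φ w.2.1) (φ w.2.2) (u w.2.2)) (by fun_prop)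
  -- strongly measurable families with a fixed evaluation point, for differentiating integrals
  have smF₂η' : ∀ (x : Fin d → ℝ) (w : Fin n → ℝ), StronglyMeasurable fun z =>
      fderiv ℝ (fun η => F₂ x z η (φ z) (u x) (u z)) w := fun x w =>
    sm_fderiv_param (g := fun z η => F₂ x z η (φ z) (u x) (u z)) (by fun_prop)
      (fun z => dF₂η x z (φ z) (u x) (u z)) measurable_const
  have smF₂ν' : ∀ (x : Fin d → ℝ) (w : Fin m → ℝ), StronglyMeasurable fun z =>
      fderiv ℝ (fun ν => F₂ x z (φ x) (φ z) ν (u z)) w := fun x w =>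
    sm_fderiv_param (g := fun z ν => F₂ x z (φ x) (φ z) ν (u z)) (by fun_prop)
      (fun z => dF₂ν x z (φ x) (φ z) (u z)) measurable_const
  have smf₁η' : ∀ (x : Fin d → ℝ) (w : Fin n → ℝ), StronglyMeasurable fun y =>
      fderiv ℝ (fun η => f₁ y x η (u x)) w := fun x w =>
    sm_fderiv_param (g := fun y η => f₁ y x η (u x)) (by fun_prop)
      (fun y => df₁η y x (u x)) measurable_const
  have smf₁ν' : ∀ (x : Fin d → ℝ) (w : Fin m → ℝ), StronglyMeasurable fun y =>
      fderiv ℝ (fun ν => f₁ y x (φ x) ν) w := fun x w =>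
    sm_fderiv_param (g := fun y ν => f₁ y x (φ x) ν) (by fun_prop)
      (fun y => df₁ν y x (φ x)) measurable_const
  have smf₂η' : ∀ (x : Fin d → ℝ) (w : Fin n → ℝ),
      StronglyMeasurable fun p : (Fin d → ℝ) × (Fin d → ℝ) =>
      fderiv ℝ (fun η => f₂ p.1 x p.2 η (φ p.2) (u x) (u p.2)) w := fun x w =>
    sm_fderiv_param (g := fun (p : (Fin d → ℝ) × (Fin d → ℝ)) η => f₂ p.1 x p.2 η (φ p.2) (u x) (u p.2)) (by fun_prop)
      (fun p => df₂η p.1 x p.2 (φ p.2) (u x) (u p.2)) measurable_const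
  have smf₂ν' : ∀ (x : Fin d → ℝ) (w : Fin m → ℝ),
      StronglyMeasurable fun p : (Fin d → ℝ) × (Fin d → ℝ) =>
      fderiv ℝ (fun ν => f₂ p.1 x p.2 (φ x) (φ p.2) ν (u p.2)) w := fun x w =>
    sm_fderiv_param (g := fun (p : (Fin d → ℝ) × (Fin d → ℝ)) ν => f₂ p.1 x p.2 (φ x) (φ p.2) ν (u p.2)) (by fun_prop)
      (fun p => df₂ν p.1 x p.2 (φ x) (φ p.2) (u p.2)) measurable_const
  -- expansion of the ν-derivative of the Hamiltonian
  have hHν : ∀ x : Fin d → ℝ,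
      HasFDerivAt (fun ν => fredholmHamiltonian G f₁ f₂ F₁ F₂ φ u ψ x (φ x) ν)
        (fderiv ℝ (fun ν => F₁ x (φ x) ν) (u x)
          + (∫ z in G, fderiv ℝ (fun ν => F₂ x z (φ x) (φ z) ν (u z)) (u x))
          + (∫ y in G, (ψ y).comp (fderiv ℝ (fun ν => f₁ y x (φ x) ν) (u x)))
          + ∫ y in G, ∫ z in G,
              (ψ y).comp (fderiv ℝ (fun ν => f₂ y x z (φ x) (φ z) ν (u z)) (u x)))
        (u x) := by
    intro x
    have P1 : HasFDerivAt (fun ν => F₁ x (φ x) ν)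
        (fderiv ℝ (fun ν => F₁ x (φ x) ν) (u x)) (u x) :=
      (dF₁ν x (φ x) (u x)).hasFDerivAt
    have P2 : HasFDerivAt (fun ν => ∫ z in G, F₂ x z (φ x) (φ z) ν (u z))
        (∫ z in G, fderiv ℝ (fun ν => F₂ x z (φ x) (φ z) ν (u z)) (u x)) (u x) := by
      refine hasFDerivAt_integral_param (C := K₂) (C' := K₂) ?_ ?_ ?_ ?_ ?_ (u x)
      · intro w
        exact ((by fun_prop : Measurable fun z => F₂ x z (φ x) (φ z) w (u z))).aestronglyMeasurable
      · intro z w; exact vF₂ x z (φ x) (φ z) w (u z)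
      · intro z w; exact (dF₂ν x z (φ x) (φ z) (u z) w).hasFDerivAt
      · intro w; exact (smF₂ν' x w).aestronglyMeasurable
      · intro z w; exact bF₂ν x z (φ x) (φ z) (u z) w
    have P3 : HasFDerivAt (fun ν => ∫ y in G, ψ y (f₁ y x (φ x) ν))
        (∫ y in G, (ψ y).comp (fderiv ℝ (fun ν => f₁ y x (φ x) ν) (u x))) (u x) := by
      refine hasFDerivAt_integral_param
        (g' := fun y w => (ψ y).comp (fderiv ℝ (fun ν => f₁ y x (φ x) ν) w))
        (C := Cψ * C₁) (C' := Cψ * C₁) ?_ ?_ ?_ ?_ ?_ (u x)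
      · intro w
        exact (sm_apply hψ
          ((by fun_prop : Measurable fun y => f₁ y x (φ x) w)).stronglyMeasurable).aestronglyMeasurable
      · intro y w
        calc ‖ψ y (f₁ y x (φ x) w)‖ ≤ ‖ψ y‖ * ‖f₁ y x (φ x) w‖ := (ψ y).le_opNorm _
          _ ≤ Cψ * C₁ := mul_le_mul (hCψ y) (vf₁ y x (φ x) w) (norm_nonneg _) hCψ0
      · intro y w; exact (ψ y).hasFDerivAt.comp w (df₁ν y x (φ x) w).hasFDerivAt
      · intro w; exact (sm_comp_clm hψ (smf₁ν' x w)).aestronglyMeasurable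
      · intro y w
        calc ‖(ψ y).comp (fderiv ℝ (fun ν => f₁ y x (φ x) ν) w)‖
            ≤ ‖ψ y‖ * ‖fderiv ℝ (fun ν => f₁ y x (φ x) ν) w‖ :=
              ContinuousLinearMap.opNorm_comp_le _ _
          _ ≤ Cψ * C₁ := mul_le_mul (hCψ y) (bf₁ν y x (φ x) w) (norm_nonneg _) hCψ0
    have P4 : HasFDerivAt (fun ν => ∫ y in G, ∫ z in G, ψ y (f₂ y x z (φ x) (φ z) ν (u z)))
        (∫ y in G, ∫ z in G,
          (ψ y).comp (fderiv ℝ (fun ν => f₂ y x z (φ x) (φ z) ν (u z)) (u x))) (u x) := by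
      have inner : ∀ (y : Fin d → ℝ) (w : Fin m → ℝ),
          HasFDerivAt (fun ν => ∫ z in G, ψ y (f₂ y x z (φ x) (φ z) ν (u z)))
            (∫ z in G, (ψ y).comp (fderiv ℝ (fun ν => f₂ y x z (φ x) (φ z) ν (u z)) w)) w := by
        intro y w
        refine hasFDerivAt_integral_param
          (g' := fun z w => (ψ y).comp (fderiv ℝ (fun ν => f₂ y x z (φ x) (φ z) ν (u z)) w))
          (C := Cψ * C₂) (C' := Cψ * C₂) ?_ ?_ ?_ ?_ ?_ w
        · intro w'
          exact ((ψ y).continuous.comp_stronglyMeasurable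
            ((by fun_prop : Measurable fun z =>
              f₂ y x z (φ x) (φ z) w' (u z))).stronglyMeasurable).aestronglyMeasurable
        · intro z w'
          calc ‖ψ y (f₂ y x z (φ x) (φ z) w' (u z))‖
              ≤ ‖ψ y‖ * ‖f₂ y x z (φ x) (φ z) w' (u z)‖ := (ψ y).le_opNorm _
            _ ≤ Cψ * C₂ := mul_le_mul (hCψ y) (vf₂ y x z (φ x) (φ z) w' (u z))
                (norm_nonneg _) hCψ0
        · intro z w'; exact (ψ y).hasFDerivAt.comp w' (df₂ν y x z (φ x) (φ z) (u z) w').hasFDerivAt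
        · intro w'
          exact ((sm_comp_clm (stronglyMeasurable_const (b := ψ y)) ((smf₂ν' x w').comp_measurable
            (measurable_const.prodMk measurable_id)))).aestronglyMeasurable
        · intro z w'
          calc ‖(ψ y).comp (fderiv ℝ (fun ν => f₂ y x z (φ x) (φ z) ν (u z)) w')‖
              ≤ ‖ψ y‖ * ‖fderiv ℝ (fun ν => f₂ y x z (φ x) (φ z) ν (u z)) w'‖ :=
                ContinuousLinearMap.opNorm_comp_le _ _
            _ ≤ Cψ * C₂ := mul_le_mul (hCψ y) (bf₂ν y x z (φ x) (φ z) (u z) w')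
                (norm_nonneg _) hCψ0
      refine hasFDerivAt_integral_param
        (g := fun y ν => ∫ z in G, ψ y (f₂ y x z (φ x) (φ z) ν (u z)))
        (g' := fun y w => ∫ z in G,
          (ψ y).comp (fderiv ℝ (fun ν => f₂ y x z (φ x) (φ z) ν (u z)) w))
        (C := Cψ * C₂ * (volume G).toReal) (C' := Cψ * C₂ * (volume G).toReal)
        ?_ ?_ inner ?_ ?_ (u x)
      · intro w
        refine (StronglyMeasurable.integral_prod_right'
          (f := fun p : (Fin d → ℝ) × (Fin d → ℝ) =>
            ψ p.1 (f₂ p.1 x p.2 (φ x) (φ p.2) w (u p.2))) ?_).aestronglyMeasurable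
        exact sm_apply (hψ.comp_measurable measurable_fst)
          ((by fun_prop : Measurable fun p : (Fin d → ℝ) × (Fin d → ℝ) =>
            f₂ p.1 x p.2 (φ x) (φ p.2) w (u p.2))).stronglyMeasurable
      · intro y w
        have := norm_integral_le_of_norm_le_const (μ := volume.restrict G)
          (f := fun z => ψ y (f₂ y x z (φ x) (φ z) w (u z))) (C := Cψ * C₂)
          (Filter.Eventually.of_forall fun z =>
            calc ‖ψ y (f₂ y x z (φ x) (φ z) w (u z))‖
                ≤ ‖ψ y‖ * ‖f₂ y x z (φ x) (φ z) w (u z)‖ := (ψ y).le_opNorm _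
              _ ≤ Cψ * C₂ := mul_le_mul (hCψ y) (vf₂ y x z (φ x) (φ z) w (u z))
                  (norm_nonneg _) hCψ0)
        simpa [Measure.restrict_apply_univ, mul_assoc, measureReal_def] using this
      · intro w
        refine (StronglyMeasurable.integral_prod_right'
          (f := fun p : (Fin d → ℝ) × (Fin d → ℝ) =>
            (ψ p.1).comp (fderiv ℝ (fun ν => f₂ p.1 x p.2 (φ x) (φ p.2) ν (u p.2)) w))
          ?_).aestronglyMeasurable
        exact sm_comp_clm (hψ.comp_measurable measurable_fst) (smf₂ν' x w)
      · intro y w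
        have := norm_integral_le_of_norm_le_const (μ := volume.restrict G)
          (f := fun z => (ψ y).comp (fderiv ℝ (fun ν => f₂ y x z (φ x) (φ z) ν (u z)) w))
          (C := Cψ * C₂)
          (Filter.Eventually.of_forall fun z =>
            calc ‖(ψ y).comp (fderiv ℝ (fun ν => f₂ y x z (φ x) (φ z) ν (u z)) w)‖
                ≤ ‖ψ y‖ * ‖fderiv ℝ (fun ν => f₂ y x z (φ x) (φ z) ν (u z)) w‖ :=
                  ContinuousLinearMap.opNorm_comp_le _ _
              _ ≤ Cψ * C₂ := mul_le_mul (hCψ y) (bf₂ν y x z (φ x) (φ z) (u z) w)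
                  (norm_nonneg _) hCψ0)
        simpa [Measure.restrict_apply_univ, mul_assoc, measureReal_def] using this
    exact ((P1.add P2).add P3).add P4
  -- expansion of the η-derivative of the Hamiltonian
  have hHη : ∀ x : Fin d → ℝ,
      HasFDerivAt (fun η => fredholmHamiltonian G f₁ f₂ F₁ F₂ φ u ψ x η (u x))
        (fderiv ℝ (fun η => F₁ x η (u x)) (φ x)
          + (∫ z in G, fderiv ℝ (fun η => F₂ x z η (φ z) (u x) (u z)) (φ x))
          + (∫ y in G, (ψ y).comp (fderiv ℝ (fun η => f₁ y x η (u x)) (φ x)))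
          + ∫ y in G, ∫ z in G,
              (ψ y).comp (fderiv ℝ (fun η => f₂ y x z η (φ z) (u x) (u z)) (φ x)))
        (φ x) := by
    intro x
    have P1 : HasFDerivAt (fun η => F₁ x η (u x))
        (fderiv ℝ (fun η => F₁ x η (u x)) (φ x)) (φ x) :=
      (dF₁η x (u x) (φ x)).hasFDerivAt
    have P2 : HasFDerivAt (fun η => ∫ z in G, F₂ x z η (φ z) (u x) (u z))
        (∫ z in G, fderiv ℝ (fun η => F₂ x z η (φ z) (u x) (u z)) (φ x)) (φ x) := by
      refine hasFDerivAt_integral_param (C := K₂) (C' := K₂) ?_ ?_ ?_ ?_ ?_ (φ x)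
      · intro w
        exact ((by fun_prop : Measurable fun z => F₂ x z w (φ z) (u x) (u z))).aestronglyMeasurable
      · intro z w; exact vF₂ x z w (φ z) (u x) (u z)
      · intro z w; exact (dF₂η x z (φ z) (u x) (u z) w).hasFDerivAt
      · intro w; exact (smF₂η' x w).aestronglyMeasurable
      · intro z w; exact bF₂η x z (φ z) (u x) (u z) w
    have P3 : HasFDerivAt (fun η => ∫ y in G, ψ y (f₁ y x η (u x)))
        (∫ y in G, (ψ y).comp (fderiv ℝ (fun η => f₁ y x η (u x)) (φ x))) (φ x) := by
      refine hasFDerivAt_integral_param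
        (g' := fun y w => (ψ y).comp (fderiv ℝ (fun η => f₁ y x η (u x)) w))
        (C := Cψ * C₁) (C' := Cψ * C₁) ?_ ?_ ?_ ?_ ?_ (φ x)
      · intro w
        exact (sm_apply hψ
          ((by fun_prop : Measurable fun y => f₁ y x w (u x))).stronglyMeasurable).aestronglyMeasurable
      · intro y w
        calc ‖ψ y (f₁ y x w (u x))‖ ≤ ‖ψ y‖ * ‖f₁ y x w (u x)‖ := (ψ y).le_opNorm _
          _ ≤ Cψ * C₁ := mul_le_mul (hCψ y) (vf₁ y x w (u x)) (norm_nonneg _) hCψ0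
      · intro y w; exact (ψ y).hasFDerivAt.comp w (df₁η y x (u x) w).hasFDerivAt
      · intro w; exact (sm_comp_clm hψ (smf₁η' x w)).aestronglyMeasurable
      · intro y w
        calc ‖(ψ y).comp (fderiv ℝ (fun η => f₁ y x η (u x)) w)‖
            ≤ ‖ψ y‖ * ‖fderiv ℝ (fun η => f₁ y x η (u x)) w‖ :=
              ContinuousLinearMap.opNorm_comp_le _ _
          _ ≤ Cψ * C₁ := mul_le_mul (hCψ y) (bf₁η y x (u x) w) (norm_nonneg _) hCψ0
    have P4 : HasFDerivAt (fun η => ∫ y in G, ∫ z in G, ψ y (f₂ y x z η (φ z) (u x) (u z)))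
        (∫ y in G, ∫ z in G,
          (ψ y).comp (fderiv ℝ (fun η => f₂ y x z η (φ z) (u x) (u z)) (φ x))) (φ x) := by
      have inner : ∀ (y : Fin d → ℝ) (w : Fin n → ℝ),
          HasFDerivAt (fun η => ∫ z in G, ψ y (f₂ y x z η (φ z) (u x) (u z)))
            (∫ z in G, (ψ y).comp (fderiv ℝ (fun η => f₂ y x z η (φ z) (u x) (u z)) w)) w := by
        intro y w
        refine hasFDerivAt_integral_param
          (g' := fun z w => (ψ y).comp (fderiv ℝ (fun η => f₂ y x z η (φ z) (u x) (u z)) w))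
          (C := Cψ * C₂) (C' := Cψ * C₂) ?_ ?_ ?_ ?_ ?_ w
        · intro w'
          exact ((ψ y).continuous.comp_stronglyMeasurable
            ((by fun_prop : Measurable fun z =>
              f₂ y x z w' (φ z) (u x) (u z))).stronglyMeasurable).aestronglyMeasurable
        · intro z w'
          calc ‖ψ y (f₂ y x z w' (φ z) (u x) (u z))‖
              ≤ ‖ψ y‖ * ‖f₂ y x z w' (φ z) (u x) (u z)‖ := (ψ y).le_opNorm _
            _ ≤ Cψ * C₂ := mul_le_mul (hCψ y) (vf₂ y x z w' (φ z) (u x) (u z))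
                (norm_nonneg _) hCψ0
        · intro z w'; exact (ψ y).hasFDerivAt.comp w' (df₂η y x z (φ z) (u x) (u z) w').hasFDerivAt
        · intro w'
          exact ((sm_comp_clm (stronglyMeasurable_const (b := ψ y)) ((smf₂η' x w').comp_measurable
            (measurable_const.prodMk measurable_id)))).aestronglyMeasurable
        · intro z w'
          calc ‖(ψ y).comp (fderiv ℝ (fun η => f₂ y x z η (φ z) (u x) (u z)) w')‖
              ≤ ‖ψ y‖ * ‖fderiv ℝ (fun η => f₂ y x z η (φ z) (u x) (u z)) w'‖ :=
                ContinuousLinearMap.opNorm_comp_le _ _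
            _ ≤ Cψ * C₂ := mul_le_mul (hCψ y) (bf₂η y x z (φ z) (u x) (u z) w')
                (norm_nonneg _) hCψ0
      refine hasFDerivAt_integral_param
        (g := fun y η => ∫ z in G, ψ y (f₂ y x z η (φ z) (u x) (u z)))
        (g' := fun y w => ∫ z in G,
          (ψ y).comp (fderiv ℝ (fun η => f₂ y x z η (φ z) (u x) (u z)) w))
        (C := Cψ * C₂ * (volume G).toReal) (C' := Cψ * C₂ * (volume G).toReal)
        ?_ ?_ inner ?_ ?_ (φ x)
      · intro w
        refine (StronglyMeasurable.integral_prod_right'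
          (f := fun p : (Fin d → ℝ) × (Fin d → ℝ) =>
            ψ p.1 (f₂ p.1 x p.2 w (φ p.2) (u x) (u p.2))) ?_).aestronglyMeasurable
        exact sm_apply (hψ.comp_measurable measurable_fst)
          ((by fun_prop : Measurable fun p : (Fin d → ℝ) × (Fin d → ℝ) =>
            f₂ p.1 x p.2 w (φ p.2) (u x) (u p.2))).stronglyMeasurable
      · intro y w
        have := norm_integral_le_of_norm_le_const (μ := volume.restrict G)
          (f := fun z => ψ y (f₂ y x z w (φ z) (u x) (u z))) (C := Cψ * C₂)
          (Filter.Eventually.of_forall fun z =>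
            calc ‖ψ y (f₂ y x z w (φ z) (u x) (u z))‖
                ≤ ‖ψ y‖ * ‖f₂ y x z w (φ z) (u x) (u z)‖ := (ψ y).le_opNorm _
              _ ≤ Cψ * C₂ := mul_le_mul (hCψ y) (vf₂ y x z w (φ z) (u x) (u z))
                  (norm_nonneg _) hCψ0)
        simpa [Measure.restrict_apply_univ, mul_assoc, measureReal_def] using this
      · intro w
        refine (StronglyMeasurable.integral_prod_right'
          (f := fun p : (Fin d → ℝ) × (Fin d → ℝ) =>
            (ψ p.1).comp (fderiv ℝ (fun η => f₂ p.1 x p.2 η (φ p.2) (u x) (u p.2)) w))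
          ?_).aestronglyMeasurable
        exact sm_comp_clm (hψ.comp_measurable measurable_fst) (smf₂η' x w)
      · intro y w
        have := norm_integral_le_of_norm_le_const (μ := volume.restrict G)
          (f := fun z => (ψ y).comp (fderiv ℝ (fun η => f₂ y x z η (φ z) (u x) (u z)) w))
          (C := Cψ * C₂)
          (Filter.Eventually.of_forall fun z =>
            calc ‖(ψ y).comp (fderiv ℝ (fun η => f₂ y x z η (φ z) (u x) (u z)) w)‖
                ≤ ‖ψ y‖ * ‖fderiv ℝ (fun η => f₂ y x z η (φ z) (u x) (u z)) w‖ :=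
                  ContinuousLinearMap.opNorm_comp_le _ _
              _ ≤ Cψ * C₂ := mul_le_mul (hCψ y) (bf₂η y x z (φ z) (u x) (u z) w)
                  (norm_nonneg _) hCψ0)
        simpa [Measure.restrict_apply_univ, mul_assoc, measureReal_def] using this
    exact ((P1.add P2).add P3).add P4
  -- notation-free shorthands for bounds
  have hGvol : (volume.restrict G) Set.univ = volume G := by
    simp [Measure.restrict_apply_univ]
  -- norm bounds of the scalar integrands
  have bnd_a₁ : ∀ x, ‖fderiv ℝ (fun η => F₁ x η (u x)) (φ x) (δφ x)‖ ≤ K₁ * Cp :=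
    fun x => clm_apply_bound _ _ (bF₁η x (u x) (φ x)) (hCp x) hK₁0
  have bnd_a₂ : ∀ x, ‖fderiv ℝ (fun ν => F₁ x (φ x) ν) (u x) (δu x)‖ ≤ K₁ * Cq :=
    fun x => clm_apply_bound _ _ (bF₁ν x (φ x) (u x)) (hCq x) hK₁0
  have bnd_b₁ : ∀ x z, ‖fderiv ℝ (fun η => F₂ x z η (φ z) (u x) (u z)) (φ x) (δφ x)‖ ≤ K₂ * Cp :=
    fun x z => clm_apply_bound _ _ (bF₂η x z (φ z) (u x) (u z) (φ x)) (hCp x) hK₂0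
  have bnd_b₂ : ∀ x z, ‖fderiv ℝ (fun ν => F₂ x z (φ x) (φ z) ν (u z)) (u x) (δu x)‖ ≤ K₂ * Cq :=
    fun x z => clm_apply_bound _ _ (bF₂ν x z (φ x) (φ z) (u z) (u x)) (hCq x) hK₂0
  have bnd_c₁ : ∀ x y, ‖ψ x (fderiv ℝ (fun η => f₁ x y η (u y)) (φ y) (δφ y))‖ ≤ Cψ * (C₁ * Cp) :=
    fun x y => clm_apply_bound _ _ (hCψ x)
      (clm_apply_bound _ _ (bf₁η x y (u y) (φ y)) (hCp y) hC₁0) hCψ0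
  have bnd_c₂ : ∀ x y, ‖ψ x (fderiv ℝ (fun ν => f₁ x y (φ y) ν) (u y) (δu y))‖ ≤ Cψ * (C₁ * Cq) :=
    fun x y => clm_apply_bound _ _ (hCψ x)
      (clm_apply_bound _ _ (bf₁ν x y (φ y) (u y)) (hCq y) hC₁0) hCψ0
  have bnd_e₁ : ∀ x y z,
      ‖ψ x (fderiv ℝ (fun η => f₂ x y z η (φ z) (u y) (u z)) (φ y) (δφ y))‖ ≤ Cψ * (C₂ * Cp) :=
    fun x y z => clm_apply_bound _ _ (hCψ x)
      (clm_apply_bound _ _ (bf₂η x y z (φ z) (u y) (u z) (φ y)) (hCp y) hC₂0) hCψ0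
  have bnd_e₂ : ∀ x y z,
      ‖ψ x (fderiv ℝ (fun ν => f₂ x y z (φ y) (φ z) ν (u z)) (u y) (δu y))‖ ≤ Cψ * (C₂ * Cq) :=
    fun x y z => clm_apply_bound _ _ (hCψ x)
      (clm_apply_bound _ _ (bf₂ν x y z (φ y) (φ z) (u z) (u y)) (hCq y) hC₂0) hCψ0
  -- strongly measurable scalar integrands (jointly)
  have smb₁ : StronglyMeasurable fun w : (Fin d → ℝ) × (Fin d → ℝ) =>
      fderiv ℝ (fun η => F₂ w.1 w.2 η (φ w.2) (u w.1) (u w.2)) (φ w.1) (δφ w.1) :=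
    sm_apply smDF2φ (hδφ.comp measurable_fst).stronglyMeasurable
  have smb₂ : StronglyMeasurable fun w : (Fin d → ℝ) × (Fin d → ℝ) =>
      fderiv ℝ (fun ν => F₂ w.1 w.2 (φ w.1) (φ w.2) ν (u w.2)) (u w.1) (δu w.1) :=
    sm_apply smDF2u (hδu.comp measurable_fst).stronglyMeasurable
  have smc₁ : StronglyMeasurable fun w : (Fin d → ℝ) × (Fin d → ℝ) =>
      ψ w.1 (fderiv ℝ (fun η => f₁ w.1 w.2 η (u w.2)) (φ w.2) (δφ w.2)) :=
    sm_apply (hψ.comp_measurable measurable_fst)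
      (sm_apply smD1φ (hδφ.comp measurable_snd).stronglyMeasurable)
  have smc₂ : StronglyMeasurable fun w : (Fin d → ℝ) × (Fin d → ℝ) =>
      ψ w.1 (fderiv ℝ (fun ν => f₁ w.1 w.2 (φ w.2) ν) (u w.2) (δu w.2)) :=
    sm_apply (hψ.comp_measurable measurable_fst)
      (sm_apply smD1u (hδu.comp measurable_snd).stronglyMeasurable)
  have sme₁ : StronglyMeasurable fun w : (Fin d → ℝ) × (Fin d → ℝ) × (Fin d → ℝ) =>
      ψ w.1 (fderiv ℝ (fun η => f₂ w.1 w.2.1 w.2.2 η (φ w.2.2) (u w.2.1) (u w.2.2))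
        (φ w.2.1) (δφ w.2.1)) :=
    sm_apply (hψ.comp_measurable measurable_fst)
      (sm_apply smD2φ (hδφ.comp (measurable_fst.comp measurable_snd)).stronglyMeasurable)
  have sme₂ : StronglyMeasurable fun w : (Fin d → ℝ) × (Fin d → ℝ) × (Fin d → ℝ) =>
      ψ w.1 (fderiv ℝ (fun ν => f₂ w.1 w.2.1 w.2.2 (φ w.2.1) (φ w.2.2) ν (u w.2.2))
        (u w.2.1) (δu w.2.1)) :=
    sm_apply (hψ.comp_measurable measurable_fst)
      (sm_apply smD2u (hδu.comp (measurable_fst.comp measurable_snd)).stronglyMeasurable)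
  -- integrability facts (scalar integrands)
  have I_a₁ : Integrable (fun x => fderiv ℝ (fun η => F₁ x η (u x)) (φ x) (δφ x))
      (volume.restrict G) :=
    integrable_bdd (sm_apply smDF1φ hδφ.stronglyMeasurable).aestronglyMeasurable bnd_a₁
  have I_a₂ : Integrable (fun x => fderiv ℝ (fun ν => F₁ x (φ x) ν) (u x) (δu x))
      (volume.restrict G) :=
    integrable_bdd (sm_apply smDF1u hδu.stronglyMeasurable).aestronglyMeasurable bnd_a₂
  have I_b₁z : ∀ x, Integrable
      (fun z => fderiv ℝ (fun η => F₂ x z η (φ z) (u x) (u z)) (φ x) (δφ x))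
      (volume.restrict G) := fun x =>
    integrable_bdd ((smb₁.comp_measurable
      (measurable_const.prodMk measurable_id :
        Measurable fun z : Fin d → ℝ => (x, z))).aestronglyMeasurable) (fun z => bnd_b₁ x z)
  have I_b₂z : ∀ x, Integrable
      (fun z => fderiv ℝ (fun ν => F₂ x z (φ x) (φ z) ν (u z)) (u x) (δu x))
      (volume.restrict G) := fun x =>
    integrable_bdd ((smb₂.comp_measurable
      (measurable_const.prodMk measurable_id :
        Measurable fun z : Fin d → ℝ => (x, z))).aestronglyMeasurable) (fun z => bnd_b₂ x z)
  have I_b₁int : Integrable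
      (fun x => ∫ z in G, fderiv ℝ (fun η => F₂ x z η (φ z) (u x) (u z)) (φ x) (δφ x))
      (volume.restrict G) := by
    refine integrable_bdd (smb₁.integral_prod_right').aestronglyMeasurable
      (C := K₂ * Cp * (volume G).toReal) (fun x => ?_)
    simpa [hGvol] using norm_integral_le_vol (μ := volume.restrict G) (fun z => bnd_b₁ x z)
  have I_b₂int : Integrable
      (fun x => ∫ z in G, fderiv ℝ (fun ν => F₂ x z (φ x) (φ z) ν (u z)) (u x) (δu x))
      (volume.restrict G) := by
    refine integrable_bdd (smb₂.integral_prod_right').aestronglyMeasurable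
      (C := K₂ * Cq * (volume G).toReal) (fun x => ?_)
    simpa [hGvol] using norm_integral_le_vol (μ := volume.restrict G) (fun z => bnd_b₂ x z)
  -- integrability for the c-families
  have I_c₁y : ∀ x, Integrable
      (fun y => ψ x (fderiv ℝ (fun η => f₁ x y η (u y)) (φ y) (δφ y))) (volume.restrict G) :=
    fun x => integrable_bdd ((smc₁.comp_measurable
      (measurable_const.prodMk measurable_id :
        Measurable fun y : Fin d → ℝ => (x, y))).aestronglyMeasurable) (fun y => bnd_c₁ x y)
  have I_c₂y : ∀ x, Integrable
      (fun y => ψ x (fderiv ℝ (fun ν => f₁ x y (φ y) ν) (u y) (δu y))) (volume.restrict G) :=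
    fun x => integrable_bdd ((smc₂.comp_measurable
      (measurable_const.prodMk measurable_id :
        Measurable fun y : Fin d → ℝ => (x, y))).aestronglyMeasurable) (fun y => bnd_c₂ x y)
  have I_c₁int : Integrable
      (fun x => ∫ y in G, ψ x (fderiv ℝ (fun η => f₁ x y η (u y)) (φ y) (δφ y)))
      (volume.restrict G) := by
    refine integrable_bdd (smc₁.integral_prod_right').aestronglyMeasurable
      (C := Cψ * (C₁ * Cp) * (volume G).toReal) (fun x => ?_)
    simpa [hGvol] using norm_integral_le_vol (μ := volume.restrict G) (fun y => bnd_c₁ x y)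
  have I_c₂int : Integrable
      (fun x => ∫ y in G, ψ x (fderiv ℝ (fun ν => f₁ x y (φ y) ν) (u y) (δu y)))
      (volume.restrict G) := by
    refine integrable_bdd (smc₂.integral_prod_right').aestronglyMeasurable
      (C := Cψ * (C₁ * Cq) * (volume G).toReal) (fun x => ?_)
    simpa [hGvol] using norm_integral_le_vol (μ := volume.restrict G) (fun y => bnd_c₂ x y)
  have I_c₁int' : Integrable
      (fun x => ∫ y in G, ψ y (fderiv ℝ (fun η => f₁ y x η (u x)) (φ x) (δφ x)))
      (volume.restrict G) := by
    refine integrable_bdd ((smc₁.comp_measurable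
      (measurable_swap :
        Measurable fun w : (Fin d → ℝ) × (Fin d → ℝ) =>
          w.swap)).integral_prod_right').aestronglyMeasurable
      (C := Cψ * (C₁ * Cp) * (volume G).toReal) (fun x => ?_)
    simpa [hGvol] using norm_integral_le_vol (μ := volume.restrict G) (fun y => bnd_c₁ y x)
  have I_c₂int' : Integrable
      (fun x => ∫ y in G, ψ y (fderiv ℝ (fun ν => f₁ y x (φ x) ν) (u x) (δu x)))
      (volume.restrict G) := by
    refine integrable_bdd ((smc₂.comp_measurable
      (measurable_swap :
        Measurable fun w : (Fin d → ℝ) × (Fin d → ℝ) =>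
          w.swap)).integral_prod_right').aestronglyMeasurable
      (C := Cψ * (C₁ * Cq) * (volume G).toReal) (fun x => ?_)
    simpa [hGvol] using norm_integral_le_vol (μ := volume.restrict G) (fun y => bnd_c₂ y x)
  have I_c₁prod : Integrable (fun w : (Fin d → ℝ) × (Fin d → ℝ) =>
      ψ w.2 (fderiv ℝ (fun η => f₁ w.2 w.1 η (u w.1)) (φ w.1) (δφ w.1)))
      ((volume.restrict G).prod (volume.restrict G)) :=
    integrable_bdd ((smc₁.comp_measurable measurable_swap).aestronglyMeasurable)
      (fun w => bnd_c₁ w.2 w.1)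
  have I_c₂prod : Integrable (fun w : (Fin d → ℝ) × (Fin d → ℝ) =>
      ψ w.2 (fderiv ℝ (fun ν => f₁ w.2 w.1 (φ w.1) ν) (u w.1) (δu w.1)))
      ((volume.restrict G).prod (volume.restrict G)) :=
    integrable_bdd ((smc₂.comp_measurable measurable_swap).aestronglyMeasurable)
      (fun w => bnd_c₂ w.2 w.1)
  -- integrability for the e-families
  have I_e₁z : ∀ x y, Integrable
      (fun z => ψ x (fderiv ℝ (fun η => f₂ x y z η (φ z) (u y) (u z)) (φ y) (δφ y)))
      (volume.restrict G) := fun x y =>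
    integrable_bdd ((sme₁.comp_measurable
      (measurable_const.prodMk (measurable_const.prodMk measurable_id) :
        Measurable fun z : Fin d → ℝ => (x, y, z))).aestronglyMeasurable)
      (fun z => bnd_e₁ x y z)
  have I_e₂z : ∀ x y, Integrable
      (fun z => ψ x (fderiv ℝ (fun ν => f₂ x y z (φ y) (φ z) ν (u z)) (u y) (δu y)))
      (volume.restrict G) := fun x y =>
    integrable_bdd ((sme₂.comp_measurable
      (measurable_const.prodMk (measurable_const.prodMk measurable_id) :
        Measurable fun z : Fin d → ℝ => (x, y, z))).aestronglyMeasurable)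
      (fun z => bnd_e₂ x y z)
  have sme₁G : StronglyMeasurable fun q : ((Fin d → ℝ) × (Fin d → ℝ)) × (Fin d → ℝ) =>
      ψ q.1.1 (fderiv ℝ (fun η => f₂ q.1.1 q.1.2 q.2 η (φ q.2) (u q.1.2) (u q.2))
        (φ q.1.2) (δφ q.1.2)) :=
    sme₁.comp_measurable ((measurable_fst.comp measurable_fst).prodMk
      ((measurable_snd.comp measurable_fst).prodMk measurable_snd))
  have sme₂G : StronglyMeasurable fun q : ((Fin d → ℝ) × (Fin d → ℝ)) × (Fin d → ℝ) =>
      ψ q.1.1 (fderiv ℝ (fun ν => f₂ q.1.1 q.1.2 q.2 (φ q.1.2) (φ q.2) ν (u q.2))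
        (u q.1.2) (δu q.1.2)) :=
    sme₂.comp_measurable ((measurable_fst.comp measurable_fst).prodMk
      ((measurable_snd.comp measurable_fst).prodMk measurable_snd))
  have sme₁G' : StronglyMeasurable fun q : ((Fin d → ℝ) × (Fin d → ℝ)) × (Fin d → ℝ) =>
      ψ q.1.2 (fderiv ℝ (fun η => f₂ q.1.2 q.1.1 q.2 η (φ q.2) (u q.1.1) (u q.2))
        (φ q.1.1) (δφ q.1.1)) :=
    sme₁.comp_measurable ((measurable_snd.comp measurable_fst).prodMk
      ((measurable_fst.comp measurable_fst).prodMk measurable_snd))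
  have sme₂G' : StronglyMeasurable fun q : ((Fin d → ℝ) × (Fin d → ℝ)) × (Fin d → ℝ) =>
      ψ q.1.2 (fderiv ℝ (fun ν => f₂ q.1.2 q.1.1 q.2 (φ q.1.1) (φ q.2) ν (u q.2))
        (u q.1.1) (δu q.1.1)) :=
    sme₂.comp_measurable ((measurable_snd.comp measurable_fst).prodMk
      ((measurable_fst.comp measurable_fst).prodMk measurable_snd))
  have I_e₁yint : ∀ x, Integrable
      (fun y => ∫ z in G, ψ x (fderiv ℝ (fun η => f₂ x y z η (φ z) (u y) (u z)) (φ y) (δφ y)))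
      (volume.restrict G) := by
    intro x
    refine integrable_bdd (StronglyMeasurable.integral_prod_right'
      (f := fun q : (Fin d → ℝ) × (Fin d → ℝ) =>
        ψ x (fderiv ℝ (fun η => f₂ x q.1 q.2 η (φ q.2) (u q.1) (u q.2)) (φ q.1) (δφ q.1)))
      (sme₁.comp_measurable (measurable_const.prodMk measurable_id :
        Measurable fun q : (Fin d → ℝ) × (Fin d → ℝ) => (x, q)))).aestronglyMeasurable
      (C := Cψ * (C₂ * Cp) * (volume G).toReal) (fun y => ?_)
    simpa [hGvol] using norm_integral_le_vol (μ := volume.restrict G) (fun z => bnd_e₁ x y z)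
  have I_e₂yint : ∀ x, Integrable
      (fun y => ∫ z in G, ψ x (fderiv ℝ (fun ν => f₂ x y z (φ y) (φ z) ν (u z)) (u y) (δu y)))
      (volume.restrict G) := by
    intro x
    refine integrable_bdd (StronglyMeasurable.integral_prod_right'
      (f := fun q : (Fin d → ℝ) × (Fin d → ℝ) =>
        ψ x (fderiv ℝ (fun ν => f₂ x q.1 q.2 (φ q.1) (φ q.2) ν (u q.2)) (u q.1) (δu q.1)))
      (sme₂.comp_measurable (measurable_const.prodMk measurable_id :
        Measurable fun q : (Fin d → ℝ) × (Fin d → ℝ) => (x, q)))).aestronglyMeasurable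
      (C := Cψ * (C₂ * Cq) * (volume G).toReal) (fun y => ?_)
    simpa [hGvol] using norm_integral_le_vol (μ := volume.restrict G) (fun z => bnd_e₂ x y z)
  have I_e₁int : Integrable (fun x => ∫ y in G, ∫ z in G,
      ψ x (fderiv ℝ (fun η => f₂ x y z η (φ z) (u y) (u z)) (φ y) (δφ y)))
      (volume.restrict G) := by
    refine integrable_bdd
      (sme₁G.integral_prod_right'.integral_prod_right').aestronglyMeasurable
      (C := Cψ * (C₂ * Cp) * (volume G).toReal * (volume G).toReal) (fun x => ?_)
    have inner : ∀ y, ‖∫ z in G,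
        ψ x (fderiv ℝ (fun η => f₂ x y z η (φ z) (u y) (u z)) (φ y) (δφ y))‖
        ≤ Cψ * (C₂ * Cp) * (volume G).toReal := fun y => by
      simpa [hGvol] using norm_integral_le_vol (μ := volume.restrict G) (fun z => bnd_e₁ x y z)
    simpa [hGvol] using norm_integral_le_vol (μ := volume.restrict G) inner
  have I_e₂int : Integrable (fun x => ∫ y in G, ∫ z in G,
      ψ x (fderiv ℝ (fun ν => f₂ x y z (φ y) (φ z) ν (u z)) (u y) (δu y)))
      (volume.restrict G) := by
    refine integrable_bdd
      (sme₂G.integral_prod_right'.integral_prod_right').aestronglyMeasurable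
      (C := Cψ * (C₂ * Cq) * (volume G).toReal * (volume G).toReal) (fun x => ?_)
    have inner : ∀ y, ‖∫ z in G,
        ψ x (fderiv ℝ (fun ν => f₂ x y z (φ y) (φ z) ν (u z)) (u y) (δu y))‖
        ≤ Cψ * (C₂ * Cq) * (volume G).toReal := fun y => by
      simpa [hGvol] using norm_integral_le_vol (μ := volume.restrict G) (fun z => bnd_e₂ x y z)
    simpa [hGvol] using norm_integral_le_vol (μ := volume.restrict G) inner
  have I_e₁int' : Integrable (fun x => ∫ y in G, ∫ z in G,
      ψ y (fderiv ℝ (fun η => f₂ y x z η (φ z) (u x) (u z)) (φ x) (δφ x)))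
      (volume.restrict G) := by
    refine integrable_bdd
      ((sme₁G'.integral_prod_right').integral_prod_right').aestronglyMeasurable
      (C := Cψ * (C₂ * Cp) * (volume G).toReal * (volume G).toReal) (fun x => ?_)
    have inner : ∀ y, ‖∫ z in G,
        ψ y (fderiv ℝ (fun η => f₂ y x z η (φ z) (u x) (u z)) (φ x) (δφ x))‖
        ≤ Cψ * (C₂ * Cp) * (volume G).toReal := fun y => by
      simpa [hGvol] using norm_integral_le_vol (μ := volume.restrict G) (fun z => bnd_e₁ y x z)
    simpa [hGvol] using norm_integral_le_vol (μ := volume.restrict G) inner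
  have I_e₂int' : Integrable (fun x => ∫ y in G, ∫ z in G,
      ψ y (fderiv ℝ (fun ν => f₂ y x z (φ x) (φ z) ν (u z)) (u x) (δu x)))
      (volume.restrict G) := by
    refine integrable_bdd
      ((sme₂G'.integral_prod_right').integral_prod_right').aestronglyMeasurable
      (C := Cψ * (C₂ * Cq) * (volume G).toReal * (volume G).toReal) (fun x => ?_)
    have inner : ∀ y, ‖∫ z in G,
        ψ y (fderiv ℝ (fun ν => f₂ y x z (φ x) (φ z) ν (u z)) (u x) (δu x))‖
        ≤ Cψ * (C₂ * Cq) * (volume G).toReal := fun y => by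
      simpa [hGvol] using norm_integral_le_vol (μ := volume.restrict G) (fun z => bnd_e₂ y x z)
    simpa [hGvol] using norm_integral_le_vol (μ := volume.restrict G) inner
  have I_e₁prod : Integrable (fun w : (Fin d → ℝ) × (Fin d → ℝ) => ∫ z in G,
      ψ w.2 (fderiv ℝ (fun η => f₂ w.2 w.1 z η (φ z) (u w.1) (u z)) (φ w.1) (δφ w.1)))
      ((volume.restrict G).prod (volume.restrict G)) := by
    refine integrable_bdd (sme₁G'.integral_prod_right').aestronglyMeasurable
      (C := Cψ * (C₂ * Cp) * (volume G).toReal) (fun w => ?_)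
    simpa [hGvol] using
      norm_integral_le_vol (μ := volume.restrict G) (fun z => bnd_e₁ w.2 w.1 z)
  have I_e₂prod : Integrable (fun w : (Fin d → ℝ) × (Fin d → ℝ) => ∫ z in G,
      ψ w.2 (fderiv ℝ (fun ν => f₂ w.2 w.1 z (φ w.1) (φ z) ν (u z)) (u w.1) (δu w.1)))
      ((volume.restrict G).prod (volume.restrict G)) := by
    refine integrable_bdd (sme₂G'.integral_prod_right').aestronglyMeasurable
      (C := Cψ * (C₂ * Cq) * (volume G).toReal) (fun w => ?_)
    simpa [hGvol] using
      norm_integral_le_vol (μ := volume.restrict G) (fun z => bnd_e₂ w.2 w.1 z)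
  -- Fubini swaps
  have S_c₁ : (∫ x in G, ∫ y in G, ψ y (fderiv ℝ (fun η => f₁ y x η (u x)) (φ x) (δφ x)))
      = ∫ x in G, ∫ y in G, ψ x (fderiv ℝ (fun η => f₁ x y η (u y)) (φ y) (δφ y)) :=
    integral_integral_swap
      (f := fun x y => ψ y (fderiv ℝ (fun η => f₁ y x η (u x)) (φ x) (δφ x))) I_c₁prod
  have S_c₂ : (∫ x in G, ∫ y in G, ψ y (fderiv ℝ (fun ν => f₁ y x (φ x) ν) (u x) (δu x)))
      = ∫ x in G, ∫ y in G, ψ x (fderiv ℝ (fun ν => f₁ x y (φ y) ν) (u y) (δu y)) :=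
    integral_integral_swap
      (f := fun x y => ψ y (fderiv ℝ (fun ν => f₁ y x (φ x) ν) (u x) (δu x))) I_c₂prod
  have S_e₁ : (∫ x in G, ∫ y in G, ∫ z in G,
        ψ y (fderiv ℝ (fun η => f₂ y x z η (φ z) (u x) (u z)) (φ x) (δφ x)))
      = ∫ x in G, ∫ y in G, ∫ z in G,
        ψ x (fderiv ℝ (fun η => f₂ x y z η (φ z) (u y) (u z)) (φ y) (δφ y)) :=
    integral_integral_swap (f := fun x y => ∫ z in G,
      ψ y (fderiv ℝ (fun η => f₂ y x z η (φ z) (u x) (u z)) (φ x) (δφ x))) I_e₁prod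
  have S_e₂ : (∫ x in G, ∫ y in G, ∫ z in G,
        ψ y (fderiv ℝ (fun ν => f₂ y x z (φ x) (φ z) ν (u z)) (u x) (δu x)))
      = ∫ x in G, ∫ y in G, ∫ z in G,
        ψ x (fderiv ℝ (fun ν => f₂ x y z (φ y) (φ z) ν (u z)) (u y) (δu y)) :=
    integral_integral_swap (f := fun x y => ∫ z in G,
      ψ y (fderiv ℝ (fun ν => f₂ y x z (φ x) (φ z) ν (u z)) (u x) (δu x))) I_e₂prod
  -- integrability of operator-valued integrands
  have IL1 : ∀ x, Integrable (fun z => fderiv ℝ (fun η => F₂ x z η (φ z) (u x) (u z)) (φ x))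
      (volume.restrict G) := fun x =>
    integrable_bdd ((smF₂η' x (φ x)).aestronglyMeasurable)
      (fun z => bF₂η x z (φ z) (u x) (u z) (φ x))
  have IL2 : ∀ x, Integrable (fun z => fderiv ℝ (fun ν => F₂ x z (φ x) (φ z) ν (u z)) (u x))
      (volume.restrict G) := fun x =>
    integrable_bdd ((smF₂ν' x (u x)).aestronglyMeasurable)
      (fun z => bF₂ν x z (φ x) (φ z) (u z) (u x))
  have IL3 : ∀ x, Integrable (fun y => (ψ y).comp (fderiv ℝ (fun η => f₁ y x η (u x)) (φ x)))
      (volume.restrict G) := fun x => by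
    refine integrable_bdd ((sm_comp_clm hψ (smf₁η' x (φ x))).aestronglyMeasurable)
      (C := Cψ * C₁) (fun y => ?_)
    calc ‖(ψ y).comp (fderiv ℝ (fun η => f₁ y x η (u x)) (φ x))‖
        ≤ ‖ψ y‖ * ‖fderiv ℝ (fun η => f₁ y x η (u x)) (φ x)‖ :=
          ContinuousLinearMap.opNorm_comp_le _ _
      _ ≤ Cψ * C₁ := mul_le_mul (hCψ y) (bf₁η y x (u x) (φ x)) (norm_nonneg _) hCψ0
  have IL4 : ∀ x, Integrable (fun y => (ψ y).comp (fderiv ℝ (fun ν => f₁ y x (φ x) ν) (u x)))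
      (volume.restrict G) := fun x => by
    refine integrable_bdd ((sm_comp_clm hψ (smf₁ν' x (u x))).aestronglyMeasurable)
      (C := Cψ * C₁) (fun y => ?_)
    calc ‖(ψ y).comp (fderiv ℝ (fun ν => f₁ y x (φ x) ν) (u x))‖
        ≤ ‖ψ y‖ * ‖fderiv ℝ (fun ν => f₁ y x (φ x) ν) (u x)‖ :=
          ContinuousLinearMap.opNorm_comp_le _ _
      _ ≤ Cψ * C₁ := mul_le_mul (hCψ y) (bf₁ν y x (φ x) (u x)) (norm_nonneg _) hCψ0
  have IL5z : ∀ x y, Integrable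
      (fun z => (ψ y).comp (fderiv ℝ (fun η => f₂ y x z η (φ z) (u x) (u z)) (φ x)))
      (volume.restrict G) := fun x y => by
    refine integrable_bdd ((sm_comp_clm (stronglyMeasurable_const (b := ψ y))
      ((smf₂η' x (φ x)).comp_measurable (measurable_const.prodMk measurable_id :
        Measurable fun z : Fin d → ℝ => (y, z)))).aestronglyMeasurable)
      (C := Cψ * C₂) (fun z => ?_)
    calc ‖(ψ y).comp (fderiv ℝ (fun η => f₂ y x z η (φ z) (u x) (u z)) (φ x))‖
        ≤ ‖ψ y‖ * ‖fderiv ℝ (fun η => f₂ y x z η (φ z) (u x) (u z)) (φ x)‖ :=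
          ContinuousLinearMap.opNorm_comp_le _ _
      _ ≤ Cψ * C₂ := mul_le_mul (hCψ y) (bf₂η y x z (φ z) (u x) (u z) (φ x)) (norm_nonneg _) hCψ0
  have IL6z : ∀ x y, Integrable
      (fun z => (ψ y).comp (fderiv ℝ (fun ν => f₂ y x z (φ x) (φ z) ν (u z)) (u x)))
      (volume.restrict G) := fun x y => by
    refine integrable_bdd ((sm_comp_clm (stronglyMeasurable_const (b := ψ y))
      ((smf₂ν' x (u x)).comp_measurable (measurable_const.prodMk measurable_id :
        Measurable fun z : Fin d → ℝ => (y, z)))).aestronglyMeasurable)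
      (C := Cψ * C₂) (fun z => ?_)
    calc ‖(ψ y).comp (fderiv ℝ (fun ν => f₂ y x z (φ x) (φ z) ν (u z)) (u x))‖
        ≤ ‖ψ y‖ * ‖fderiv ℝ (fun ν => f₂ y x z (φ x) (φ z) ν (u z)) (u x)‖ :=
          ContinuousLinearMap.opNorm_comp_le _ _
      _ ≤ Cψ * C₂ := mul_le_mul (hCψ y) (bf₂ν y x z (φ x) (φ z) (u z) (u x)) (norm_nonneg _) hCψ0
  have IL5 : ∀ x, Integrable (fun y => ∫ z in G,
      (ψ y).comp (fderiv ℝ (fun η => f₂ y x z η (φ z) (u x) (u z)) (φ x)))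
      (volume.restrict G) := fun x => by
    refine integrable_bdd ((sm_comp_clm (hψ.comp_measurable measurable_fst)
        (smf₂η' x (φ x))).integral_prod_right'.aestronglyMeasurable)
      (C := Cψ * C₂ * (volume G).toReal) (fun y => ?_)
    have : ∀ z, ‖(ψ y).comp (fderiv ℝ (fun η => f₂ y x z η (φ z) (u x) (u z)) (φ x))‖
        ≤ Cψ * C₂ := fun z =>
      calc ‖(ψ y).comp (fderiv ℝ (fun η => f₂ y x z η (φ z) (u x) (u z)) (φ x))‖
          ≤ ‖ψ y‖ * ‖fderiv ℝ (fun η => f₂ y x z η (φ z) (u x) (u z)) (φ x)‖ :=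
            ContinuousLinearMap.opNorm_comp_le _ _
        _ ≤ Cψ * C₂ := mul_le_mul (hCψ y) (bf₂η y x z (φ z) (u x) (u z) (φ x))
            (norm_nonneg _) hCψ0
    simpa [hGvol] using norm_integral_le_vol (μ := volume.restrict G) this
  have IL6 : ∀ x, Integrable (fun y => ∫ z in G,
      (ψ y).comp (fderiv ℝ (fun ν => f₂ y x z (φ x) (φ z) ν (u z)) (u x)))
      (volume.restrict G) := fun x => by
    refine integrable_bdd ((sm_comp_clm (hψ.comp_measurable measurable_fst)
        (smf₂ν' x (u x))).integral_prod_right'.aestronglyMeasurable)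
      (C := Cψ * C₂ * (volume G).toReal) (fun y => ?_)
    have : ∀ z, ‖(ψ y).comp (fderiv ℝ (fun ν => f₂ y x z (φ x) (φ z) ν (u z)) (u x))‖
        ≤ Cψ * C₂ := fun z =>
      calc ‖(ψ y).comp (fderiv ℝ (fun ν => f₂ y x z (φ x) (φ z) ν (u z)) (u x))‖
          ≤ ‖ψ y‖ * ‖fderiv ℝ (fun ν => f₂ y x z (φ x) (φ z) ν (u z)) (u x)‖ :=
            ContinuousLinearMap.opNorm_comp_le _ _
        _ ≤ Cψ * C₂ := mul_le_mul (hCψ y) (bf₂ν y x z (φ x) (φ z) (u z) (u x))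
            (norm_nonneg _) hCψ0
    simpa [hGvol] using norm_integral_le_vol (μ := volume.restrict G) this
  -- vector-valued integrability for the linearized state equation
  have IV1a : ∀ x, Integrable (fun y => fderiv ℝ (fun η => f₁ x y η (u y)) (φ y) (δφ y))
      (volume.restrict G) := fun x =>
    integrable_bdd (sm_apply (smD1φ.comp_measurable
        (measurable_const.prodMk measurable_id : Measurable fun y : Fin d → ℝ => (x, y)))
        hδφ.stronglyMeasurable).aestronglyMeasurable
      (fun y => clm_apply_bound _ _ (bf₁η x y (u y) (φ y)) (hCp y) hC₁0)
  have IV1b : ∀ x, Integrable (fun y => fderiv ℝ (fun ν => f₁ x y (φ y) ν) (u y) (δu y))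
      (volume.restrict G) := fun x =>
    integrable_bdd (sm_apply (smD1u.comp_measurable
        (measurable_const.prodMk measurable_id : Measurable fun y : Fin d → ℝ => (x, y)))
        hδu.stronglyMeasurable).aestronglyMeasurable
      (fun y => clm_apply_bound _ _ (bf₁ν x y (φ y) (u y)) (hCq y) hC₁0)
  have IV1 : ∀ x, Integrable (fun y => fderiv ℝ (fun η => f₁ x y η (u y)) (φ y) (δφ y)
      + fderiv ℝ (fun ν => f₁ x y (φ y) ν) (u y) (δu y)) (volume.restrict G) :=
    fun x => (IV1a x).add (IV1b x)
  have IV2za : ∀ x y, Integrable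
      (fun z => fderiv ℝ (fun η => f₂ x y z η (φ z) (u y) (u z)) (φ y) (δφ y))
      (volume.restrict G) := fun x y =>
    integrable_bdd (sm_apply (smD2φ.comp_measurable
        (measurable_const.prodMk (measurable_const.prodMk measurable_id) :
          Measurable fun z : Fin d → ℝ => (x, y, z)))
        stronglyMeasurable_const).aestronglyMeasurable
      (fun z => clm_apply_bound _ _ (bf₂η x y z (φ z) (u y) (u z) (φ y)) (hCp y) hC₂0)
  have IV2zb : ∀ x y, Integrable
      (fun z => fderiv ℝ (fun ν => f₂ x y z (φ y) (φ z) ν (u z)) (u y) (δu y))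
      (volume.restrict G) := fun x y =>
    integrable_bdd (sm_apply (smD2u.comp_measurable
        (measurable_const.prodMk (measurable_const.prodMk measurable_id) :
          Measurable fun z : Fin d → ℝ => (x, y, z)))
        stronglyMeasurable_const).aestronglyMeasurable
      (fun z => clm_apply_bound _ _ (bf₂ν x y z (φ y) (φ z) (u z) (u y)) (hCq y) hC₂0)
  have IV2z : ∀ x y, Integrable (fun z => fderiv ℝ (fun η => f₂ x y z η (φ z) (u y) (u z))
        (φ y) (δφ y) + fderiv ℝ (fun ν => f₂ x y z (φ y) (φ z) ν (u z)) (u y) (δu y))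
      (volume.restrict G) := fun x y => (IV2za x y).add (IV2zb x y)
  have IV2 : ∀ x, Integrable (fun y => ∫ z in G,
      (fderiv ℝ (fun η => f₂ x y z η (φ z) (u y) (u z)) (φ y) (δφ y)
        + fderiv ℝ (fun ν => f₂ x y z (φ y) (φ z) ν (u z)) (u y) (δu y)))
      (volume.restrict G) := by
    intro x
    have smj : StronglyMeasurable fun q : (Fin d → ℝ) × (Fin d → ℝ) =>
        fderiv ℝ (fun η => f₂ x q.1 q.2 η (φ q.2) (u q.1) (u q.2)) (φ q.1) (δφ q.1)
          + fderiv ℝ (fun ν => f₂ x q.1 q.2 (φ q.1) (φ q.2) ν (u q.2)) (u q.1) (δu q.1) := by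
      refine StronglyMeasurable.add ?_ ?_
      · exact sm_apply (smD2φ.comp_measurable
          (measurable_const.prodMk (measurable_fst.prodMk measurable_snd) :
            Measurable fun q : (Fin d → ℝ) × (Fin d → ℝ) => (x, q.1, q.2)))
          (hδφ.comp measurable_fst).stronglyMeasurable
      · exact sm_apply (smD2u.comp_measurable
          (measurable_const.prodMk (measurable_fst.prodMk measurable_snd) :
            Measurable fun q : (Fin d → ℝ) × (Fin d → ℝ) => (x, q.1, q.2)))
          (hδu.comp measurable_fst).stronglyMeasurable
    refine integrable_bdd (smj.integral_prod_right').aestronglyMeasurable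
      (C := (C₂ * Cp + C₂ * Cq) * (volume G).toReal) (fun y => ?_)
    have hb : ∀ z, ‖fderiv ℝ (fun η => f₂ x y z η (φ z) (u y) (u z)) (φ y) (δφ y)
        + fderiv ℝ (fun ν => f₂ x y z (φ y) (φ z) ν (u z)) (u y) (δu y)‖
        ≤ C₂ * Cp + C₂ * Cq := fun z =>
      (norm_add_le _ _).trans (add_le_add
        (clm_apply_bound _ _ (bf₂η x y z (φ z) (u y) (u z) (φ y)) (hCp y) hC₂0)
        (clm_apply_bound _ _ (bf₂ν x y z (φ y) (φ z) (u z) (u y)) (hCq y) hC₂0))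
    simpa [hGvol] using norm_integral_le_vol (μ := volume.restrict G) hb
  -- pointwise expansion of the applied derivatives
  have expandη : ∀ x,
      (fderiv ℝ (fun η => fredholmHamiltonian G f₁ f₂ F₁ F₂ φ u ψ x η (u x)) (φ x)) (δφ x)
        = fderiv ℝ (fun η => F₁ x η (u x)) (φ x) (δφ x)
          + (∫ z in G, fderiv ℝ (fun η => F₂ x z η (φ z) (u x) (u z)) (φ x) (δφ x))
          + (∫ y in G, ψ y (fderiv ℝ (fun η => f₁ y x η (u x)) (φ x) (δφ x)))
          + ∫ y in G, ∫ z in G,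
              ψ y (fderiv ℝ (fun η => f₂ y x z η (φ z) (u x) (u z)) (φ x) (δφ x)) := by
    intro x
    rw [(hHη x).fderiv]
    simp only [ContinuousLinearMap.add_apply]
    rw [ContinuousLinearMap.integral_apply (IL1 x), ContinuousLinearMap.integral_apply (IL3 x),
      ContinuousLinearMap.integral_apply (IL5 x)]
    simp only [ContinuousLinearMap.comp_apply]
    congr 1
    refine integral_congr_ae (Filter.Eventually.of_forall fun y => ?_)
    simp only [ContinuousLinearMap.integral_apply (IL5z x y), ContinuousLinearMap.comp_apply]
  have expandν : ∀ x,
      (fderiv ℝ (fun ν => fredholmHamiltonian G f₁ f₂ F₁ F₂ φ u ψ x (φ x) ν) (u x)) (δu x)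
        = fderiv ℝ (fun ν => F₁ x (φ x) ν) (u x) (δu x)
          + (∫ z in G, fderiv ℝ (fun ν => F₂ x z (φ x) (φ z) ν (u z)) (u x) (δu x))
          + (∫ y in G, ψ y (fderiv ℝ (fun ν => f₁ y x (φ x) ν) (u x) (δu x)))
          + ∫ y in G, ∫ z in G,
              ψ y (fderiv ℝ (fun ν => f₂ y x z (φ x) (φ z) ν (u z)) (u x) (δu x)) := by
    intro x
    rw [(hHν x).fderiv]
    simp only [ContinuousLinearMap.add_apply]
    rw [ContinuousLinearMap.integral_apply (IL2 x), ContinuousLinearMap.integral_apply (IL4 x),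
      ContinuousLinearMap.integral_apply (IL6 x)]
    simp only [ContinuousLinearMap.comp_apply]
    congr 1
    refine integral_congr_ae (Filter.Eventually.of_forall fun y => ?_)
    simp only [ContinuousLinearMap.integral_apply (IL6z x y), ContinuousLinearMap.comp_apply]
  -- the costate identity
  have hβ : ∫ x in G, ψ x (δφ x)
      = (∫ x in G, fderiv ℝ (fun η => F₁ x η (u x)) (φ x) (δφ x))
        + (∫ x in G, ∫ z in G, fderiv ℝ (fun η => F₂ x z η (φ z) (u x) (u z)) (φ x) (δφ x))
        + (∫ x in G, ∫ y in G, ψ y (fderiv ℝ (fun η => f₁ y x η (u x)) (φ x) (δφ x)))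
        + ∫ x in G, ∫ y in G, ∫ z in G,
            ψ y (fderiv ℝ (fun η => f₂ y x z η (φ z) (u x) (u z)) (φ x) (δφ x)) := by
    have hpt : ∀ᵐ x ∂volume.restrict G, ψ x (δφ x)
        = fderiv ℝ (fun η => F₁ x η (u x)) (φ x) (δφ x)
          + (∫ z in G, fderiv ℝ (fun η => F₂ x z η (φ z) (u x) (u z)) (φ x) (δφ x))
          + (∫ y in G, ψ y (fderiv ℝ (fun η => f₁ y x η (u x)) (φ x) (δφ x)))
          + ∫ y in G, ∫ z in G,
              ψ y (fderiv ℝ (fun η => f₂ y x z η (φ z) (u x) (u z)) (φ x) (δφ x)) := by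
      refine hcostate.mono fun x hx => ?_
      rw [hx]
      exact expandη x
    rw [integral_congr_ae hpt]
    exact integral_add4 I_a₁ I_b₁int I_c₁int' I_e₁int'
  -- the linearized-state identity
  have hγ : ∫ x in G, ψ x (δφ x)
      = (∫ x in G, ∫ y in G, ψ x (fderiv ℝ (fun η => f₁ x y η (u y)) (φ y) (δφ y)))
        + (∫ x in G, ∫ y in G, ψ x (fderiv ℝ (fun ν => f₁ x y (φ y) ν) (u y) (δu y)))
        + (∫ x in G, ∫ y in G, ∫ z in G,
            ψ x (fderiv ℝ (fun η => f₂ x y z η (φ z) (u y) (u z)) (φ y) (δφ y)))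
        + ∫ x in G, ∫ y in G, ∫ z in G,
            ψ x (fderiv ℝ (fun ν => f₂ x y z (φ y) (φ z) ν (u z)) (u y) (δu y)) := by
    have hpt : ∀ᵐ x ∂volume.restrict G, ψ x (δφ x)
        = (∫ y in G, ψ x (fderiv ℝ (fun η => f₁ x y η (u y)) (φ y) (δφ y)))
          + (∫ y in G, ψ x (fderiv ℝ (fun ν => f₁ x y (φ y) ν) (u y) (δu y)))
          + (∫ y in G, ∫ z in G,
              ψ x (fderiv ℝ (fun η => f₂ x y z η (φ z) (u y) (u z)) (φ y) (δφ y)))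
          + ∫ y in G, ∫ z in G,
              ψ x (fderiv ℝ (fun ν => f₂ x y z (φ y) (φ z) ν (u z)) (u y) (δu y)) := by
      refine hlin.mono fun x hx => ?_
      rw [hx, map_add]
      have h1 : ψ x (∫ y in G,
          (fderiv ℝ (fun η => f₁ x y η (u y)) (φ y) (δφ y)
            + fderiv ℝ (fun ν => f₁ x y (φ y) ν) (u y) (δu y)))
          = (∫ y in G, ψ x (fderiv ℝ (fun η => f₁ x y η (u y)) (φ y) (δφ y)))
            + ∫ y in G, ψ x (fderiv ℝ (fun ν => f₁ x y (φ y) ν) (u y) (δu y)) := by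
        rw [← ContinuousLinearMap.integral_comp_comm _ (IV1 x)]
        simp only [map_add]
        exact integral_add (I_c₁y x) (I_c₂y x)
      have h2 : ψ x (∫ y in G, ∫ z in G,
          (fderiv ℝ (fun η => f₂ x y z η (φ z) (u y) (u z)) (φ y) (δφ y)
            + fderiv ℝ (fun ν => f₂ x y z (φ y) (φ z) ν (u z)) (u y) (δu y)))
          = (∫ y in G, ∫ z in G,
              ψ x (fderiv ℝ (fun η => f₂ x y z η (φ z) (u y) (u z)) (φ y) (δφ y)))
            + ∫ y in G, ∫ z in G,
              ψ x (fderiv ℝ (fun ν => f₂ x y z (φ y) (φ z) ν (u z)) (u y) (δu y)) := by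
        rw [← ContinuousLinearMap.integral_comp_comm _ (IV2 x)]
        have inner : ∀ y, ψ x (∫ z in G,
            (fderiv ℝ (fun η => f₂ x y z η (φ z) (u y) (u z)) (φ y) (δφ y)
              + fderiv ℝ (fun ν => f₂ x y z (φ y) (φ z) ν (u z)) (u y) (δu y)))
            = (∫ z in G, ψ x (fderiv ℝ (fun η => f₂ x y z η (φ z) (u y) (u z)) (φ y) (δφ y)))
              + ∫ z in G,
                ψ x (fderiv ℝ (fun ν => f₂ x y z (φ y) (φ z) ν (u z)) (u y) (δu y)) := by
          intro y
          rw [← ContinuousLinearMap.integral_comp_comm _ (IV2z x y)]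
          simp only [map_add]
          exact integral_add (I_e₁z x y) (I_e₂z x y)
        rw [integral_congr_ae (Filter.Eventually.of_forall inner)]
        exact integral_add (I_e₁yint x) (I_e₂yint x)
      rw [h1, h2]
      ring
    rw [integral_congr_ae hpt]
    exact integral_add4 I_c₁int I_c₂int I_e₁int I_e₂int
  -- the right-hand side identity
  have hR : (∫ x in G,
        fderiv ℝ (fun ν => fredholmHamiltonian G f₁ f₂ F₁ F₂ φ u ψ x (φ x) ν) (u x) (δu x))
      = (∫ x in G, fderiv ℝ (fun ν => F₁ x (φ x) ν) (u x) (δu x))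
        + (∫ x in G, ∫ z in G, fderiv ℝ (fun ν => F₂ x z (φ x) (φ z) ν (u z)) (u x) (δu x))
        + (∫ x in G, ∫ y in G, ψ y (fderiv ℝ (fun ν => f₁ y x (φ x) ν) (u x) (δu x)))
        + ∫ x in G, ∫ y in G, ∫ z in G,
            ψ y (fderiv ℝ (fun ν => f₂ y x z (φ x) (φ z) ν (u z)) (u x) (δu x)) := by
    rw [integral_congr_ae (Filter.Eventually.of_forall expandν)]
    exact integral_add4 I_a₂ I_b₂int I_c₂int' I_e₂int'
  -- conclusion
  have split1 : (∫ x in G, (fderiv ℝ (fun η => F₁ x η (u x)) (φ x) (δφ x)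
      + fderiv ℝ (fun ν => F₁ x (φ x) ν) (u x) (δu x)))
      = (∫ x in G, fderiv ℝ (fun η => F₁ x η (u x)) (φ x) (δφ x))
        + ∫ x in G, fderiv ℝ (fun ν => F₁ x (φ x) ν) (u x) (δu x) :=
    integral_add I_a₁ I_a₂
  have split2 : (∫ x in G, ∫ z in G, (fderiv ℝ (fun η => F₂ x z η (φ z) (u x) (u z)) (φ x) (δφ x)
      + fderiv ℝ (fun ν => F₂ x z (φ x) (φ z) ν (u z)) (u x) (δu x)))
      = (∫ x in G, ∫ z in G, fderiv ℝ (fun η => F₂ x z η (φ z) (u x) (u z)) (φ x) (δφ x))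
        + ∫ x in G, ∫ z in G, fderiv ℝ (fun ν => F₂ x z (φ x) (φ z) ν (u z)) (u x) (δu x) := by
    have inner : ∀ x, (∫ z in G, (fderiv ℝ (fun η => F₂ x z η (φ z) (u x) (u z)) (φ x) (δφ x)
        + fderiv ℝ (fun ν => F₂ x z (φ x) (φ z) ν (u z)) (u x) (δu x)))
        = (∫ z in G, fderiv ℝ (fun η => F₂ x z η (φ z) (u x) (u z)) (φ x) (δφ x))
          + ∫ z in G, fderiv ℝ (fun ν => F₂ x z (φ x) (φ z) ν (u z)) (u x) (δu x) :=
      fun x => integral_add (I_b₁z x) (I_b₂z x)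
    rw [integral_congr_ae (Filter.Eventually.of_forall inner)]
    exact integral_add I_b₁int I_b₂int
  rw [split1, split2, hR]
  linarith [hβ, hγ, S_c₁, S_c₂, S_e₁, S_e₂]
end Helpers
end

section
/- Let G ⊆ ℝ^d be a bounded open set with Lebesgue measure |G| > 0, with closure Ḡ, let R₁ : Ḡ → ℝ^{m×m} and K : Ḡ×Ḡ → ℝ^{m×m} be continuous, and define the 2m×2m block matrix M(x₁,x₂) := [[R₁(x₁)/|G|, K(x₁,x₂)], [K(x₂,x₁), R₁(x₂)/|G|]]. If M(x₁,x₂) is positive definite for every (x₁,x₂) ∈ Ḡ×Ḡ (i.e. wᵀM(x₁,x₂)w > 0 for every nonzero w ∈ ℝ^{2m}), then the quadratic functional J_a(U) := ∫_G U(x)ᵀR₁(x)U(x) dx + ∫_G ∫_G U(x₁)ᵀK(x₁,x₂)U(x₂) dx₁ dx₂ is positive definite on L²(G,ℝ^m), i.e. J_a(U) > 0 for every U ∈ L²(G,ℝ^m) with U ≠ 0 in L². -/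
open MeasureTheory Set Matrix

lemma aux_dot_abs_le {m : ℕ} (A : Matrix (Fin m) (Fin m) ℝ) (u v : Fin m → ℝ) :
    |u ⬝ᵥ (A *ᵥ v)| ≤ (∑ i, ∑ j, |A i j|) * ‖u‖ * ‖v‖ := by
  have hdef : u ⬝ᵥ (A *ᵥ v) = ∑ i, ∑ j, u i * (A i j * v j) := by
    simp [dotProduct, mulVec, Finset.mul_sum]
  rw [hdef]
  calc |∑ i, ∑ j, u i * (A i j * v j)|
      ≤ ∑ i, ∑ j, |u i * (A i j * v j)| := by
        refine (Finset.abs_sum_le_sum_abs _ _).trans ?_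
        exact Finset.sum_le_sum fun i _ => Finset.abs_sum_le_sum_abs _ _
    _ ≤ ∑ i, ∑ j, |A i j| * (‖u‖ * ‖v‖) := by
        refine Finset.sum_le_sum fun i _ => Finset.sum_le_sum fun j _ => ?_
        have hu : |u i| ≤ ‖u‖ := by
          rw [← Real.norm_eq_abs]; exact norm_le_pi_norm u i
        have hv : |v j| ≤ ‖v‖ := by
          rw [← Real.norm_eq_abs]; exact norm_le_pi_norm v j
        have h0u : (0:ℝ) ≤ |u i| := abs_nonneg _
        have h0v : (0:ℝ) ≤ |v j| := abs_nonneg _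
        have heq : |u i * (A i j * v j)| = |A i j| * (|u i| * |v j|) := by
          rw [abs_mul, abs_mul]; ring
        rw [heq]
        have : |u i| * |v j| ≤ ‖u‖ * ‖v‖ :=
          mul_le_mul hu hv h0v (le_trans h0u hu)
        exact mul_le_mul_of_nonneg_left this (abs_nonneg _)
    _ = (∑ i, ∑ j, |A i j|) * ‖u‖ * ‖v‖ := by
        rw [mul_assoc, Finset.sum_mul]
        exact Finset.sum_congr rfl fun i _ => (Finset.sum_mul _ _ _).symm

lemma aux_quad_expand {m : ℕ} (A B C D : Matrix (Fin m) (Fin m) ℝ) (u v : Fin m → ℝ) :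
    Sum.elim u v ⬝ᵥ (fromBlocks A B C D *ᵥ Sum.elim u v)
      = u ⬝ᵥ (A *ᵥ u) + u ⬝ᵥ (B *ᵥ v) + (v ⬝ᵥ (C *ᵥ u) + v ⬝ᵥ (D *ᵥ v)) := by
  rw [fromBlocks_mulVec]
  simp [sumElim_dotProduct_sumElim, dotProduct_add]

/-- Sufficient condition at the end of Section 5: pointwise positive definiteness of the
block kernel `M` on `closure G × closure G` implies positive definiteness of the quadratic
functional `J_a` on `L²(G, ℝ^m)`. -/
theorem block_kernel_posdef_implies_quadratic_posdef
    (d m : ℕ) (G : Set (Fin d → ℝ)) (hGopen : IsOpen G)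
    (hGbd : Bornology.IsBounded G) (hGpos : 0 < volume G)
    (R₁ : (Fin d → ℝ) → Matrix (Fin m) (Fin m) ℝ)
    (K : (Fin d → ℝ) → (Fin d → ℝ) → Matrix (Fin m) (Fin m) ℝ)
    (hR₁cont : ∀ i j, ContinuousOn (fun x => R₁ x i j) (closure G))
    (hKcont : ∀ i j, ContinuousOn (fun p : (Fin d → ℝ) × (Fin d → ℝ) => K p.1 p.2 i j)
      (closure G ×ˢ closure G))
    (M : (Fin d → ℝ) → (Fin d → ℝ) → Matrix (Fin m ⊕ Fin m) (Fin m ⊕ Fin m) ℝ)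
    (hM : ∀ x₁ x₂, M x₁ x₂ =
      Matrix.fromBlocks (((volume G).toReal)⁻¹ • R₁ x₁) (K x₁ x₂)
        (K x₂ x₁) (((volume G).toReal)⁻¹ • R₁ x₂))
    (hMposdef : ∀ x₁ ∈ closure G, ∀ x₂ ∈ closure G,
      ∀ w : Fin m ⊕ Fin m → ℝ, w ≠ 0 → 0 < w ⬝ᵥ (M x₁ x₂ *ᵥ w))
    (U : (Fin d → ℝ) → Fin m → ℝ) (hU : MemLp U 2 (volume.restrict G))
    (hUne : ¬ (U =ᵐ[volume.restrict G] 0)) :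
    0 < (∫ x in G, U x ⬝ᵥ (R₁ x *ᵥ U x)) +
      ∫ x₁ in G, ∫ x₂ in G, U x₁ ⬝ᵥ (K x₁ x₂ *ᵥ U x₂) := by
  classical
  have hGm : MeasurableSet G := hGopen.measurableSet
  have hvolfin : volume G ≠ ⊤ := hGbd.measure_lt_top.ne
  set c : ℝ := (volume G).toReal with hcdef
  have hc : 0 < c := ENNReal.toReal_pos hGpos.ne' hvolfin
  set μG : Measure (Fin d → ℝ) := volume.restrict G with hμG
  haveI : IsFiniteMeasure μG := ⟨by
    rw [hμG, Measure.restrict_apply_univ]; exact hGbd.measure_lt_top⟩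
  -- compactness and bounds
  have hcl : IsCompact (closure G) := hGbd.isCompact_closure
  have hRS : ContinuousOn (fun x => ∑ i, ∑ j, |R₁ x i j|) (closure G) :=
    continuousOn_finset_sum _ fun i _ =>
      continuousOn_finset_sum _ fun j _ => (hR₁cont i j).abs
  obtain ⟨CR, hCR⟩ := hcl.exists_bound_of_continuousOn hRS
  have hCR' : ∀ x ∈ G, (∑ i, ∑ j, |R₁ x i j|) ≤ CR := fun x hx =>
    (le_abs_self _).trans (by
      simpa [Real.norm_eq_abs] using hCR x (subset_closure hx))
  have hKS : ContinuousOn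
      (fun p : (Fin d → ℝ) × (Fin d → ℝ) => ∑ i, ∑ j, |K p.1 p.2 i j|)
      (closure G ×ˢ closure G) :=
    continuousOn_finset_sum _ fun i _ =>
      continuousOn_finset_sum _ fun j _ => (hKcont i j).abs
  obtain ⟨CK, hCK⟩ := (hcl.prod hcl).exists_bound_of_continuousOn hKS
  have hCK' : ∀ x₁ ∈ G, ∀ x₂ ∈ G, (∑ i, ∑ j, |K x₁ x₂ i j|) ≤ CK := fun x₁ h₁ x₂ h₂ =>
    (le_abs_self _).trans (by
      simpa [Real.norm_eq_abs] using
        hCK (x₁, x₂) (mk_mem_prod (subset_closure h₁) (subset_closure h₂)))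
  -- measurability of pieces
  have hUm : AEStronglyMeasurable U μG := hU.aestronglyMeasurable
  have hUmi : ∀ i, AEStronglyMeasurable (fun x => U x i) μG := fun i =>
    (continuous_apply i).comp_aestronglyMeasurable hUm
  have hRm : ∀ i j, AEStronglyMeasurable (fun x => R₁ x i j) μG := fun i j =>
    ((hR₁cont i j).mono subset_closure).aestronglyMeasurable hGm
  -- the diagonal integrand
  set g : (Fin d → ℝ) → ℝ := fun x => U x ⬝ᵥ (R₁ x *ᵥ U x) with hgdef
  have hgm : AEStronglyMeasurable g μG := by
    have hgs : g = fun x => ∑ i, ∑ j, U x i * (R₁ x i j * U x j) := by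
      funext x; simp [hgdef, dotProduct, mulVec, Finset.mul_sum]
    rw [hgs]
    exact Finset.aestronglyMeasurable_fun_sum _ fun i _ =>
      Finset.aestronglyMeasurable_fun_sum _ fun j _ =>
        (hUmi i).mul ((hRm i j).mul (hUmi j))
  have hU2 : Integrable (fun x => ‖U x‖ * ‖U x‖) μG := by
    have h := hU.integrable_norm_rpow (by norm_num) (by norm_num)
    refine h.congr (Filter.Eventually.of_forall fun x => ?_)
    simp only [ENNReal.toReal_ofNat, Real.rpow_two]
    ring
  have hU1 : Integrable (fun x => ‖U x‖) μG := hU.norm.integrable one_le_two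
  have hgint : Integrable g μG := by
    refine Integrable.mono' (hU2.const_mul CR) hgm ?_
    filter_upwards [ae_restrict_mem hGm] with x hx
    rw [Real.norm_eq_abs]
    calc |g x| ≤ (∑ i, ∑ j, |R₁ x i j|) * ‖U x‖ * ‖U x‖ := aux_dot_abs_le _ _ _
      _ = (∑ i, ∑ j, |R₁ x i j|) * (‖U x‖ * ‖U x‖) := by ring
      _ ≤ CR * (‖U x‖ * ‖U x‖) :=
        mul_le_mul_of_nonneg_right (hCR' x hx) (by positivity)
  -- product measure
  set P : Measure ((Fin d → ℝ) × (Fin d → ℝ)) := μG.prod μG with hPdef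
  have hmemP : ∀ᵐ p ∂P, p ∈ G ×ˢ G := by
    rw [hPdef, hμG, Measure.prod_restrict]
    exact ae_restrict_mem (hGm.prod hGm)
  have hKm : ∀ i j, AEStronglyMeasurable
      (fun p : (Fin d → ℝ) × (Fin d → ℝ) => K p.1 p.2 i j) P := by
    intro i j
    have h := ContinuousOn.aestronglyMeasurable
        (μ := (volume : Measure (Fin d → ℝ)).prod (volume : Measure (Fin d → ℝ)))
        ((hKcont i j).mono (prod_mono subset_closure subset_closure)) (hGm.prod hGm)
    rwa [hPdef, hμG, Measure.prod_restrict]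
  -- the off-diagonal integrand
  set F : (Fin d → ℝ) × (Fin d → ℝ) → ℝ :=
    fun p => U p.1 ⬝ᵥ (K p.1 p.2 *ᵥ U p.2) with hFdef
  have hFm : AEStronglyMeasurable F P := by
    have hFs : F = fun p => ∑ i, ∑ j, U p.1 i * (K p.1 p.2 i j * U p.2 j) := by
      funext p; simp [hFdef, dotProduct, mulVec, Finset.mul_sum]
    rw [hFs]
    exact Finset.aestronglyMeasurable_fun_sum _ fun i _ =>
      Finset.aestronglyMeasurable_fun_sum _ fun j _ =>
        ((hUmi i).comp_fst).mul ((hKm i j).mul ((hUmi j).comp_snd))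
  have hFint : Integrable F P := by
    refine Integrable.mono' ((hU1.mul_prod hU1).const_mul CK) hFm ?_
    filter_upwards [hmemP] with p hp
    rw [Real.norm_eq_abs]
    calc |F p| ≤ (∑ i, ∑ j, |K p.1 p.2 i j|) * ‖U p.1‖ * ‖U p.2‖ := aux_dot_abs_le _ _ _
      _ = (∑ i, ∑ j, |K p.1 p.2 i j|) * (‖U p.1‖ * ‖U p.2‖) := by ring
      _ ≤ CK * (‖U p.1‖ * ‖U p.2‖) :=
        mul_le_mul_of_nonneg_right (hCK' p.1 hp.1 p.2 hp.2) (by positivity)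
  have hFswapint : Integrable (fun p => F p.swap) P := by
    have h := hFint.swap
    exact h
  have hf₁int : Integrable (fun p : (Fin d → ℝ) × (Fin d → ℝ) => c⁻¹ * g p.1) P := by
    have h := (hgint.const_mul c⁻¹).mul_prod (integrable_const (μ := μG) (1:ℝ))
    simpa using h
  have hf₄int : Integrable (fun p : (Fin d → ℝ) × (Fin d → ℝ) => c⁻¹ * g p.2) P := by
    have h := (integrable_const (μ := μG) (1:ℝ)).mul_prod (hgint.const_mul c⁻¹)
    simpa using h
  -- the full quadratic form on the product
  set f : (Fin d → ℝ) × (Fin d → ℝ) → ℝ :=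
    fun p => Sum.elim (U p.1) (U p.2) ⬝ᵥ (M p.1 p.2 *ᵥ Sum.elim (U p.1) (U p.2)) with hfdef
  have hfeq : ∀ p, f p = c⁻¹ * g p.1 + F p + (F p.swap + c⁻¹ * g p.2) := by
    intro p
    rw [hfdef]
    simp only [hM]
    rw [aux_quad_expand]
    simp [hgdef, hFdef, smul_mulVec, dotProduct_smul, smul_eq_mul]
  have hfint : Integrable f P := by
    rw [show f = fun p => c⁻¹ * g p.1 + F p + (F p.swap + c⁻¹ * g p.2) from funext hfeq]
    exact (hf₁int.add hFint).add (hFswapint.add hf₄int)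
  -- integral identities
  have hμGuniv : (μG univ).toReal = c := by
    rw [hμG, Measure.restrict_apply_univ]
  have hint_f₁ : ∫ p, c⁻¹ * g p.1 ∂P = ∫ x, g x ∂μG := by
    rw [hPdef, integral_prod _ hf₁int]
    have hin : ∀ x, (∫ (_ : Fin d → ℝ), c⁻¹ * g x ∂μG) = g x := by
      intro x
      rw [integral_const, measureReal_def, hμGuniv, smul_eq_mul, ← mul_assoc,
        mul_inv_cancel₀ hc.ne', one_mul]
    simp only [hin]
  have hint_f₄ : ∫ p, c⁻¹ * g p.2 ∂P = ∫ x, g x ∂μG := by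
    rw [hPdef, integral_prod _ hf₄int]
    have hin : (∫ y, c⁻¹ * g y ∂μG) = c⁻¹ * ∫ x, g x ∂μG := integral_const_mul _ _
    simp only [hin]
    rw [integral_const, measureReal_def, hμGuniv, smul_eq_mul, ← mul_assoc,
      mul_inv_cancel₀ hc.ne', one_mul]
  have hint_F : ∫ p, F p ∂P
      = ∫ x₁ in G, ∫ x₂ in G, U x₁ ⬝ᵥ (K x₁ x₂ *ᵥ U x₂) := by
    rw [hPdef, integral_prod _ hFint]
  have hint_Fswap : ∫ p, F p.swap ∂P = ∫ p, F p ∂P := by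
    rw [hPdef]
    exact integral_prod_swap F
  have hI12 : Integrable (fun p : (Fin d → ℝ) × (Fin d → ℝ) => c⁻¹ * g p.1 + F p) P :=
    hf₁int.add hFint
  have hI34 : Integrable (fun p : (Fin d → ℝ) × (Fin d → ℝ) => F p.swap + c⁻¹ * g p.2) P :=
    hFswapint.add hf₄int
  have hsum : ∫ p, f p ∂P
      = (∫ x, g x ∂μG) + (∫ p, F p ∂P) + ((∫ p, F p ∂P) + ∫ x, g x ∂μG) := by
    have e1 : ∫ p, f p ∂P
        = ∫ p, (c⁻¹ * g p.1 + F p) + (F p.swap + c⁻¹ * g p.2) ∂P :=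
      integral_congr_ae (Filter.Eventually.of_forall hfeq)
    rw [e1, integral_add hI12 hI34, integral_add hf₁int hFint,
      integral_add hFswapint hf₄int, hint_f₁, hint_f₄, hint_Fswap]
  -- positivity
  have hnn : 0 ≤ᵐ[P] f := by
    filter_upwards [hmemP] with p hp
    by_cases hw : Sum.elim (U p.1) (U p.2) = (0 : Fin m ⊕ Fin m → ℝ)
    · simp [hfdef, hw]
    · exact le_of_lt
        (hMposdef p.1 (subset_closure hp.1) p.2 (subset_closure hp.2) _ hw)
  have hpos : 0 < ∫ p, f p ∂P := by
    rw [integral_pos_iff_support_of_nonneg_ae hnn hfint]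
    have hsubset : ({x | U x ≠ 0} ∩ G) ×ˢ G ⊆ Function.support f := by
      rintro ⟨x₁, x₂⟩ ⟨⟨hx₁ne, hx₁G⟩, hx₂G⟩
      have hw : Sum.elim (U x₁) (U x₂) ≠ (0 : Fin m ⊕ Fin m → ℝ) := by
        intro h
        apply hx₁ne
        funext i
        exact congrFun h (Sum.inl i)
      exact ne_of_gt
        (hMposdef x₁ (subset_closure hx₁G) x₂ (subset_closure hx₂G) _ hw)
    refine lt_of_lt_of_le ?_ (measure_mono hsubset)
    rw [hPdef, Measure.prod_prod]
    have h2 : μG {x | U x ≠ 0} ≠ 0 := by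
      intro h
      apply hUne
      rw [Filter.EventuallyEq, ae_iff]
      simpa using h
    have h1 : μG ({x | U x ≠ 0} ∩ G) ≠ 0 := by
      rw [hμG, Measure.restrict_apply' hGm] at h2 ⊢
      rwa [inter_assoc, inter_self]
    have h3 : μG G ≠ 0 := by
      rw [hμG, Measure.restrict_apply' hGm, inter_self]
      exact hGpos.ne'
    exact ENNReal.mul_pos h1 h3
  rw [hsum] at hpos
  rw [hint_F] at hpos
  linarith
end

section
/- (Volterra first-order variation formula (7.7).) Suppose ψ satisfies the costate Hamiltonian equation ψ(t) = ∇_yH(t) for a.e. t ∈ [0,T], i.e. ψ(t) = ω[∇_yf₁(T,t,y(t),u(t)) + ∫₀ᵀ ∇_{y(t)}f₂(T,t,σ,y(t),y(σ),u(t),u(σ)) dσ] + ∇_yF₁(t,y(t),u(t)) + ∫₀ᵀ ∇_{y(t)}F₂(t,σ,y(t),y(σ),u(t),u(σ)) dσ + ∫ₜᵀ ψ(s)∇_yf₁(s,t,y(t),u(t)) ds + ∫ₜᵀ ∫₀ˢ ψ(s)∇_{y(t)}f₂(s,t,σ,y(t),y(σ),u(t),u(σ)) dσ ds, and suppose bounded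 measurable variations δy : [0,T] → ℝ^n, δu : [0,T] → ℝ^m satisfy the linearized state equation δy(t) = ∫₀ᵗ [∇_yf₁(t,s,y(s),u(s))δy(s) + ∇_uf₁(t,s,y(s),u(s))δu(s)] ds + ∫₀ᵗ ∫₀ᵗ [∇_{y(s)}f₂(t,s,σ,y(s),y(σ),u(s),u(σ))δy(s) + ∇_{u(s)}f₂(t,s,σ,y(s),y(σ),u(s),u(σ))δu(s)] dσ ds for every t ∈ [0,T], including t = T. Then δJ := ∇_YF₀(T,y(T))δy(T) + ∫₀ᵀ [∇_yF₁(t,y(t),u(t))δy(t) + ∇_uF₁(t,y(t),u(t))δu(t)] dt + ∫₀ᵀ ∫₀ᵀ [∇_{y(t)}F₂(t,σ,y(t),y(σ),u(t),u(σ))δy(t) + ∇_{u(t)}F₂(t,σ,y(t),y(σ),u(t),u(σ))δu(t)] dσ dt equals ∫₀ᵀ (∇_uH(t)) δu(t) dt. -/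
open MeasureTheory Set Filter Topology

section Aux

variable {α : Type*} [MeasurableSpace α]
variable {V : Type*} [NormedAddCommGroup V] [NormedSpace ℝ V]
variable {W : Type*} [NormedAddCommGroup W] [NormedSpace ℝ W]

theorem measurable_clm_of_apply' [FiniteDimensional ℝ V] [FiniteDimensional ℝ W]
    [MeasurableSpace W] [BorelSpace W]
    {f : α → V →L[ℝ] W} (h : ∀ v, Measurable fun a => f a v) : Measurable f := by
  classical
  set b := Module.finBasis ℝ V with hb
  set g : (V →L[ℝ] W) →ₗ[ℝ] (Fin (Module.finrank ℝ V) → W) :=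
    { toFun := fun L i => L (b i)
      map_add' := by intro L L'; ext i; simp
      map_smul' := by intro c L; ext i; simp } with hg
  have hg_inj : LinearMap.ker g = ⊥ := by
    rw [LinearMap.ker_eq_bot]
    intro L L' hLL'
    apply ContinuousLinearMap.coe_injective
    apply Module.Basis.ext b
    intro i
    exact congrFun hLL' i
  have hce := g.isClosedEmbedding_of_injective hg_inj
  rw [← hce.measurableEmbedding.measurable_comp_iff]
  have : (⇑g ∘ f) = fun a i => f a (b i) := rfl
  rw [this]
  exact measurable_pi_lambda _ fun i => h (b i)

theorem measurable_fderiv_apply_param [MeasurableSpace V] [BorelSpace V]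
    [MeasurableSpace W] [BorelSpace W] [SecondCountableTopology W]
    {g : α → V → W} {x : α → V} (hg : Measurable fun q : α × V => g q.1 q.2)
    (hx : Measurable x) (hdiff : ∀ a, Differentiable ℝ (g a)) (v : V) :
    Measurable fun a => fderiv ℝ (g a) (x a) v := by
  have hnorm : Tendsto (fun k : ℕ => ‖(k : ℝ)‖) atTop atTop := by
    have : (fun k : ℕ => ‖(k : ℝ)‖) = fun k : ℕ => (k : ℝ) := by
      funext k; exact Real.norm_natCast k
    rw [this]
    exact tendsto_natCast_atTop_atTop
  have key : ∀ a, Tendsto (fun k : ℕ => (k : ℝ) • (g a (x a + ((k : ℝ))⁻¹ • v) - g a (x a)))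
      atTop (𝓝 (fderiv ℝ (g a) (x a) v)) := fun a =>
    ((hdiff a (x a)).hasFDerivAt).lim v hnorm
  refine measurable_of_tendsto_metrizable (fun k => ?_) (tendsto_pi_nhds.2 key)
  have h1 : Measurable fun a => g a (x a + ((k : ℝ))⁻¹ • v) :=
    hg.comp (measurable_id.prodMk (hx.add_const _))
  have h2 : Measurable fun a => g a (x a) := hg.comp (measurable_id.prodMk hx)
  exact (h1.sub h2).const_smul _

theorem measurable_fderiv_param [MeasurableSpace V] [BorelSpace V] [FiniteDimensional ℝ V]
    [MeasurableSpace W] [BorelSpace W] [SecondCountableTopology W] [FiniteDimensional ℝ W]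
    {g : α → V → W} {x : α → V} (hg : Measurable fun q : α × V => g q.1 q.2)
    (hx : Measurable x) (hdiff : ∀ a, Differentiable ℝ (g a)) :
    Measurable fun a => fderiv ℝ (g a) (x a) :=
  measurable_clm_of_apply' fun v => measurable_fderiv_apply_param hg hx hdiff v

end Aux

section Aux2

variable {α : Type*} [MeasurableSpace α]
variable {V : Type*} [NormedAddCommGroup V] [NormedSpace ℝ V]
variable {W : Type*} [NormedAddCommGroup W] [NormedSpace ℝ W] [CompleteSpace W]

theorem hasFDerivAt_integral_param_s8 {μ : Measure α} [IsFiniteMeasure μ]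
    {g : α → V → W} {x₀ : V} {C : ℝ}
    (hmeas : ∀ x, AEStronglyMeasurable (fun a => g a x) μ)
    (hmeas' : AEStronglyMeasurable (fun a => fderiv ℝ (g a) x₀) μ)
    (hdiff : ∀ a, Differentiable ℝ (g a))
    (hbd0 : ∀ a x, ‖g a x‖ ≤ C)
    (hbd1 : ∀ a x, ‖fderiv ℝ (g a) x‖ ≤ C) :
    HasFDerivAt (fun x => ∫ a, g a x ∂μ) (∫ a, fderiv ℝ (g a) x₀ ∂μ) x₀ := by
  apply hasFDerivAt_integral_of_dominated_of_fderiv_le (F := fun x a => g a x)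
    (F' := fun x a => fderiv ℝ (g a) x) (bound := fun _ => C) (s := Set.univ) Filter.univ_mem
  · exact Eventually.of_forall hmeas
  · exact (integrable_const C).mono' (hmeas x₀) (Eventually.of_forall fun a => hbd0 a x₀)
  · exact hmeas'
  · exact Eventually.of_forall fun a x _ => hbd1 a x
  · exact integrable_const C
  · exact Eventually.of_forall fun a x _ => ((hdiff a) x).hasFDerivAt

theorem integrable_of_bdd_meas {μ : Measure α} [IsFiniteMeasure μ] {f : α → W} {C : ℝ}
    (hm : AEStronglyMeasurable f μ) (hbd : ∀ a, ‖f a‖ ≤ C) : Integrable f μ :=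
  (integrable_const C).mono' hm (Eventually.of_forall hbd)

theorem norm_fderiv_le_of_iteratedFDeriv_one {g : V → W} {x : V} {C : ℝ}
    (h : ‖iteratedFDeriv ℝ 1 g x‖ ≤ C) : ‖fderiv ℝ g x‖ ≤ C := by
  have hC : 0 ≤ C := le_trans (norm_nonneg _) h
  refine ContinuousLinearMap.opNorm_le_bound _ hC fun v => ?_
  have : fderiv ℝ g x v = iteratedFDeriv ℝ 1 g x (fun _ => v) := by
    rw [iteratedFDeriv_one_apply]
  rw [this]
  calc ‖iteratedFDeriv ℝ 1 g x (fun _ => v)‖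
      ≤ ‖iteratedFDeriv ℝ 1 g x‖ * ∏ i : Fin 1, ‖v‖ :=
        (iteratedFDeriv ℝ 1 g x).le_opNorm _
    _ ≤ C * ‖v‖ := by
        rw [Fin.prod_univ_one]
        exact mul_le_mul_of_nonneg_right h (norm_nonneg v)

theorem fderiv_fst_apply {U : Type*} [NormedAddCommGroup U] [NormedSpace ℝ U]
    (g : V × U → W) (x : V) (z : U) (hg : DifferentiableAt ℝ g (x, z)) (v : V) :
    fderiv ℝ (fun x' => g (x', z)) x v = fderiv ℝ g (x, z) (v, 0) := by
  have h1 : HasFDerivAt (fun x' : V => (x', z))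
      ((ContinuousLinearMap.id ℝ V).prod 0) x :=
    (hasFDerivAt_id x).prodMk (hasFDerivAt_const z x)
  have h2 : HasFDerivAt (fun x' => g (x', z))
      ((fderiv ℝ g (x, z)).comp ((ContinuousLinearMap.id ℝ V).prod 0)) x :=
    hg.hasFDerivAt.comp x h1
  rw [h2.fderiv]
  rfl

theorem fderiv_snd_apply {U : Type*} [NormedAddCommGroup U] [NormedSpace ℝ U]
    (g : V × U → W) (x : V) (z : U) (hg : DifferentiableAt ℝ g (x, z)) (w : U) :
    fderiv ℝ (fun z' => g (x, z')) z w = fderiv ℝ g (x, z) (0, w) := by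
  have h1 : HasFDerivAt (fun z' : U => (x, z'))
      ((0 : U →L[ℝ] V).prod (ContinuousLinearMap.id ℝ U)) z :=
    (hasFDerivAt_const x z).prodMk (hasFDerivAt_id z)
  have h2 : HasFDerivAt (fun z' => g (x, z'))
      ((fderiv ℝ g (x, z)).comp ((0 : U →L[ℝ] V).prod (ContinuousLinearMap.id ℝ U))) z :=
    hg.hasFDerivAt.comp z h1
  rw [h2.fderiv]
  rfl

theorem fderiv_prod_split {U : Type*} [NormedAddCommGroup U] [NormedSpace ℝ U]
    (g : V × U → W) (x : V) (z : U) (hg : DifferentiableAt ℝ g (x, z)) (v : V) (w : U) :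
    fderiv ℝ (fun x' => g (x', z)) x v + fderiv ℝ (fun z' => g (x, z')) z w
      = fderiv ℝ g (x, z) (v, w) := by
  rw [fderiv_fst_apply g x z hg v, fderiv_snd_apply g x z hg w, ← map_add]
  congr 1
  simp [Prod.ext_iff]

end Aux2

set_option linter.unusedSectionVars false

section Fubini



/-- Fubini for a triangle: `∫₀ᵀ ∫ₜᵀ h t s ds dt = ∫₀ᵀ ∫₀ˢ h t s dt ds`
for bounded measurable `h`. -/
theorem triangle_integral_swap {T : ℝ} (hT : 0 ≤ T) {h : ℝ → ℝ → ℝ} {C : ℝ}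
    (hmeas : Measurable fun q : ℝ × ℝ => h q.1 q.2)
    (hbd : ∀ t s, ‖h t s‖ ≤ C) :
    ∫ t in Ioc (0:ℝ) T, (∫ s in Ioc t T, h t s) =
      ∫ s in Ioc (0:ℝ) T, (∫ t in Ioc (0:ℝ) s, h t s) := by
  set K : ℝ × ℝ → ℝ := fun q => if q.1 < q.2 then h q.1 q.2 else 0 with hK
  have hKmeas : Measurable K :=
    Measurable.ite (measurableSet_lt measurable_fst measurable_snd) hmeas measurable_const
  have hKbd : ∀ q, ‖K q‖ ≤ C := by
    intro q
    by_cases hq : q.1 < q.2 <;> simp only [hK, hq, if_true, if_false]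
    · exact hbd _ _
    · simpa using le_trans (norm_nonneg (h q.1 q.2)) (hbd q.1 q.2)
  have hstep1 : ∀ t ∈ Ioc (0:ℝ) T, (∫ s in Ioc t T, h t s) = ∫ s in Ioc (0:ℝ) T, K (t, s) := by
    intro t ht
    have hset : Ioi t ∩ Ioc (0:ℝ) T = Ioc t T := by
      ext s
      simp only [mem_inter_iff, mem_Ioi, mem_Ioc]
      constructor
      · rintro ⟨h1, _, h3⟩; exact ⟨h1, h3⟩
      · rintro ⟨h1, h2⟩; exact ⟨h1, lt_of_le_of_lt ht.1.le (lt_of_le_of_lt (le_refl t) h1), h2⟩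
    have : ∀ s : ℝ, K (t, s) = (Ioi t).indicator (fun s => h t s) s := by
      intro s
      simp only [hK, indicator_apply, mem_Ioi]
    simp_rw [this]
    rw [MeasureTheory.integral_indicator measurableSet_Ioi, Measure.restrict_restrict measurableSet_Ioi, hset]
  have hstep3 : ∀ s ∈ Ioc (0:ℝ) T, (∫ t in Ioc (0:ℝ) T, K (t, s)) = ∫ t in Ioc (0:ℝ) s, h t s := by
    intro s hs
    have hset : Iio s ∩ Ioc (0:ℝ) T = Ioo 0 s := by
      ext t
      simp only [mem_inter_iff, mem_Iio, mem_Ioc, mem_Ioo]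
      constructor
      · rintro ⟨h1, h2, _⟩; exact ⟨h2, h1⟩
      · rintro ⟨h1, h2⟩; exact ⟨h2, h1, le_trans h2.le hs.2⟩
    have : ∀ t : ℝ, K (t, s) = (Iio s).indicator (fun t => h t s) t := by
      intro t
      simp only [hK, indicator_apply, mem_Iio]
    simp_rw [this]
    rw [MeasureTheory.integral_indicator measurableSet_Iio, Measure.restrict_restrict measurableSet_Iio, hset,
      ← integral_Ioc_eq_integral_Ioo]
  have hKint : Integrable (fun q : ℝ × ℝ => K q)
      ((volume.restrict (Ioc (0:ℝ) T)).prod (volume.restrict (Ioc (0:ℝ) T))) := by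
    refine (integrable_const C).mono' hKmeas.aestronglyMeasurable (Eventually.of_forall hKbd)
  calc ∫ t in Ioc (0:ℝ) T, (∫ s in Ioc t T, h t s)
      = ∫ t in Ioc (0:ℝ) T, (∫ s in Ioc (0:ℝ) T, K (t, s)) :=
        setIntegral_congr_fun measurableSet_Ioc fun t ht => hstep1 t ht
    _ = ∫ s in Ioc (0:ℝ) T, (∫ t in Ioc (0:ℝ) T, K (t, s)) := integral_integral_swap hKint
    _ = ∫ s in Ioc (0:ℝ) T, (∫ t in Ioc (0:ℝ) s, h t s) :=
        setIntegral_congr_fun measurableSet_Ioc fun s hs => hstep3 s hs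

end Fubini

section Aux3

variable {α : Type*} [MeasurableSpace α]
variable {V : Type*} [NormedAddCommGroup V] [NormedSpace ℝ V]
variable {W : Type*} [NormedAddCommGroup W] [NormedSpace ℝ W]

/-- Evaluation of a measurable operator family at a measurable vector family. -/
theorem measurable_clm_apply_pair [MeasurableSpace V] [BorelSpace V] [FiniteDimensional ℝ V]
    [MeasurableSpace W] [BorelSpace W] [FiniteDimensional ℝ W]
    {f : α → V →L[ℝ] W} {w : α → V}
    (hf : Measurable f) (hw : Measurable w) :
    Measurable fun a => f a (w a) :=
  (isBoundedBilinearMap_apply (𝕜 := ℝ) (E := V) (F := W)).continuous.measurable.comp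
    (hf.prodMk hw)

theorem measurable_clm_comp_pair {P' : Type*} [NormedAddCommGroup P'] [NormedSpace ℝ P']
    [FiniteDimensional ℝ P'] [FiniteDimensional ℝ V] [FiniteDimensional ℝ W]
    [MeasurableSpace W] [BorelSpace W]
    {f : α → V →L[ℝ] W} {g : α → P' →L[ℝ] V}
    (hf : Measurable f) (hg : Measurable g) :
    Measurable fun a => (f a).comp (g a) := by
  borelize V
  refine measurable_clm_of_apply' fun v => ?_
  have h1 : Measurable fun a => g a v := hg.apply_continuousLinearMap v
  exact measurable_clm_apply_pair (f := f) (w := fun a => g a v) hf h1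

theorem integrableOn_triangle {T : ℝ} (hT : 0 ≤ T) {h : ℝ → ℝ → ℝ} {C : ℝ}
    (hmeas : Measurable fun q : ℝ × ℝ => h q.1 q.2)
    (hbd : ∀ t s, ‖h t s‖ ≤ C) :
    IntegrableOn (fun t => ∫ s in Ioc t T, h t s) (Ioc (0:ℝ) T) volume := by
  set K : ℝ × ℝ → ℝ := fun q => if q.1 < q.2 then h q.1 q.2 else 0 with hK
  have hKmeas : Measurable K :=
    Measurable.ite (measurableSet_lt measurable_fst measurable_snd) hmeas measurable_const
  have hKbd : ∀ q, ‖K q‖ ≤ C := by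
    intro q
    by_cases hq : q.1 < q.2 <;> simp only [hK, hq, if_true, if_false]
    · exact hbd _ _
    · simpa using le_trans (norm_nonneg (h q.1 q.2)) (hbd q.1 q.2)
  have hstep1 : ∀ t ∈ Ioc (0:ℝ) T, (∫ s in Ioc t T, h t s) = ∫ s in Ioc (0:ℝ) T, K (t, s) := by
    intro t ht
    have hset : Ioi t ∩ Ioc (0:ℝ) T = Ioc t T := by
      ext s
      simp only [mem_inter_iff, mem_Ioi, mem_Ioc]
      constructor
      · rintro ⟨h1, _, h3⟩; exact ⟨h1, h3⟩
      · rintro ⟨h1, h2⟩; exact ⟨h1, lt_trans ht.1 h1, h2⟩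
    have hind : ∀ s : ℝ, K (t, s) = (Ioi t).indicator (fun s => h t s) s := by
      intro s
      simp only [hK, indicator_apply, mem_Ioi]
    simp_rw [hind]
    rw [MeasureTheory.integral_indicator measurableSet_Ioi,
      Measure.restrict_restrict measurableSet_Ioi, hset]
  have hq : Integrable (fun t => ∫ s in Ioc (0:ℝ) T, K (t, s)) (volume.restrict (Ioc (0:ℝ) T)) := by
    have hm : StronglyMeasurable fun t => ∫ s in Ioc (0:ℝ) T, K (t, s) :=
      hKmeas.stronglyMeasurable.integral_prod_right'
    refine (integrable_const (C * (volume (Ioc (0:ℝ) T)).toReal)).mono' hm.aestronglyMeasurable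
      (Eventually.of_forall fun t => ?_)
    calc ‖∫ s in Ioc (0:ℝ) T, K (t, s)‖
        ≤ C * ((volume.restrict (Ioc (0:ℝ) T)) univ).toReal :=
          norm_integral_le_of_norm_le_const (Eventually.of_forall fun s => hKbd (t, s))
      _ = C * (volume (Ioc (0:ℝ) T)).toReal := by rw [Measure.restrict_apply_univ]
  exact hq.congr (ae_restrict_of_forall_mem measurableSet_Ioc
    fun t ht => (hstep1 t ht).symm)

end Aux3



open MeasureTheory Set

/-- The Hamiltonian (7.5) of the controlled double Volterra problem. -/
noncomputable def volterraHamiltonian {n m : ℕ} (T : ℝ)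
    (f₁ : ℝ → ℝ → (Fin n → ℝ) → (Fin m → ℝ) → (Fin n → ℝ))
    (f₂ : ℝ → ℝ → ℝ → (Fin n → ℝ) → (Fin n → ℝ) → (Fin m → ℝ) → (Fin m → ℝ) → (Fin n → ℝ))
    (F₀ : ℝ → (Fin n → ℝ) → ℝ)
    (F₁ : ℝ → (Fin n → ℝ) → (Fin m → ℝ) → ℝ)
    (F₂ : ℝ → ℝ → (Fin n → ℝ) → (Fin n → ℝ) → (Fin m → ℝ) → (Fin m → ℝ) → ℝ)
    (y : ℝ → Fin n → ℝ) (u : ℝ → Fin m → ℝ)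
    (ψ : ℝ → ((Fin n → ℝ) →L[ℝ] ℝ)) (ω : (Fin n → ℝ) →L[ℝ] ℝ)
    (t : ℝ) (η : Fin n → ℝ) (ν : Fin m → ℝ) : ℝ :=
  ω (f₁ T t η ν + ∫ σ in (0:ℝ)..T, f₂ T t σ η (y σ) ν (u σ)) +
    F₀ T (y T) + F₁ t η ν + (∫ σ in (0:ℝ)..T, F₂ t σ η (y σ) ν (u σ)) +
    (∫ s in t..T, ψ s (f₁ s t η ν)) +
    ∫ s in t..T, ∫ σ in (0:ℝ)..s, ψ s (f₂ s t σ η (y σ) ν (u σ))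

set_option maxHeartbeats 4000000

/-- Volterra first-order variation formula (7.7): under the costate Hamiltonian equation and
the linearized state equation, the first variation of the cost equals
`∫₀ᵀ ∇_u H(t) δu(t) dt`. -/
theorem volterra_first_variation_formula
    (n m : ℕ) (T : ℝ) (hT : 0 < T)
    (f₁ : ℝ → ℝ → (Fin n → ℝ) → (Fin m → ℝ) → (Fin n → ℝ))
    (f₂ : ℝ → ℝ → ℝ → (Fin n → ℝ) → (Fin n → ℝ) → (Fin m → ℝ) → (Fin m → ℝ) → (Fin n → ℝ))
    (F₀ : ℝ → (Fin n → ℝ) → ℝ)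
    (F₁ : ℝ → (Fin n → ℝ) → (Fin m → ℝ) → ℝ)
    (F₂ : ℝ → ℝ → (Fin n → ℝ) → (Fin n → ℝ) → (Fin m → ℝ) → (Fin m → ℝ) → ℝ)
    -- joint measurability of the data
    (hf₁meas : Measurable fun q : ℝ × ℝ × (Fin n → ℝ) × (Fin m → ℝ) =>
      f₁ q.1 q.2.1 q.2.2.1 q.2.2.2)
    (hf₂meas : Measurable fun q : ℝ × ℝ × ℝ ×
        (Fin n → ℝ) × (Fin n → ℝ) × (Fin m → ℝ) × (Fin m → ℝ) =>
      f₂ q.1 q.2.1 q.2.2.1 q.2.2.2.1 q.2.2.2.2.1 q.2.2.2.2.2.1 q.2.2.2.2.2.2)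
    (hF₀meas : Measurable fun q : ℝ × (Fin n → ℝ) => F₀ q.1 q.2)
    (hF₁meas : Measurable fun q : ℝ × (Fin n → ℝ) × (Fin m → ℝ) => F₁ q.1 q.2.1 q.2.2)
    (hF₂meas : Measurable fun q : ℝ × ℝ ×
        (Fin n → ℝ) × (Fin n → ℝ) × (Fin m → ℝ) × (Fin m → ℝ) =>
      F₂ q.1 q.2.1 q.2.2.1 q.2.2.2.1 q.2.2.2.2.1 q.2.2.2.2.2)
    -- twice continuous differentiability in the state and control arguments
    (hf₁smooth : ∀ t s, ContDiff ℝ 2 fun p : (Fin n → ℝ) × (Fin m → ℝ) => f₁ t s p.1 p.2)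
    (hf₂smooth : ∀ t s σ, ContDiff ℝ 2
      fun p : (Fin n → ℝ) × (Fin n → ℝ) × (Fin m → ℝ) × (Fin m → ℝ) =>
        f₂ t s σ p.1 p.2.1 p.2.2.1 p.2.2.2)
    (hF₀smooth : ∀ t, ContDiff ℝ 2 fun Y : Fin n → ℝ => F₀ t Y)
    (hF₁smooth : ∀ t, ContDiff ℝ 2 fun p : (Fin n → ℝ) × (Fin m → ℝ) => F₁ t p.1 p.2)
    (hF₂smooth : ∀ t σ, ContDiff ℝ 2
      fun p : (Fin n → ℝ) × (Fin n → ℝ) × (Fin m → ℝ) × (Fin m → ℝ) =>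
        F₂ t σ p.1 p.2.1 p.2.2.1 p.2.2.2)
    -- uniform bounds on the data and their derivatives up to order 2
    (hf₁bd : ∃ C, ∀ t s (p : (Fin n → ℝ) × (Fin m → ℝ)) (k : ℕ), k ≤ 2 →
      ‖iteratedFDeriv ℝ k (fun q : (Fin n → ℝ) × (Fin m → ℝ) => f₁ t s q.1 q.2) p‖ ≤ C)
    (hf₂bd : ∃ C, ∀ t s σ (p : (Fin n → ℝ) × (Fin n → ℝ) × (Fin m → ℝ) × (Fin m → ℝ))
      (k : ℕ), k ≤ 2 →
      ‖iteratedFDeriv ℝ k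
        (fun q : (Fin n → ℝ) × (Fin n → ℝ) × (Fin m → ℝ) × (Fin m → ℝ) =>
          f₂ t s σ q.1 q.2.1 q.2.2.1 q.2.2.2) p‖ ≤ C)
    (hF₀bd : ∃ C, ∀ t (Y : Fin n → ℝ) (k : ℕ), k ≤ 2 →
      ‖iteratedFDeriv ℝ k (fun Y' : Fin n → ℝ => F₀ t Y') Y‖ ≤ C)
    (hF₁bd : ∃ C, ∀ t (p : (Fin n → ℝ) × (Fin m → ℝ)) (k : ℕ), k ≤ 2 →
      ‖iteratedFDeriv ℝ k (fun q : (Fin n → ℝ) × (Fin m → ℝ) => F₁ t q.1 q.2) p‖ ≤ C)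
    (hF₂bd : ∃ C, ∀ t σ (p : (Fin n → ℝ) × (Fin n → ℝ) × (Fin m → ℝ) × (Fin m → ℝ))
      (k : ℕ), k ≤ 2 →
      ‖iteratedFDeriv ℝ k
        (fun q : (Fin n → ℝ) × (Fin n → ℝ) × (Fin m → ℝ) × (Fin m → ℝ) =>
          F₂ t σ q.1 q.2.1 q.2.2.1 q.2.2.2) p‖ ≤ C)
    -- symmetry of f₂ and F₂
    (hf₂symm : ∀ t s σ y₁ y₂ u₁ u₂, f₂ t s σ y₁ y₂ u₁ u₂ = f₂ t σ s y₂ y₁ u₂ u₁)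
    (hF₂symm : ∀ t σ y₁ y₂ u₁ u₂, F₂ t σ y₁ y₂ u₁ u₂ = F₂ σ t y₂ y₁ u₂ u₁)
    -- bounded measurable state, control, costate; ω = ∇_Y F₀(T, y(T))
    (y : ℝ → Fin n → ℝ) (u : ℝ → Fin m → ℝ) (ψ : ℝ → ((Fin n → ℝ) →L[ℝ] ℝ))
    (hy : Measurable y) (hybd : ∃ C, ∀ t, ‖y t‖ ≤ C)
    (hu : Measurable u) (hubd : ∃ C, ∀ t, ‖u t‖ ≤ C)
    (hψ : StronglyMeasurable ψ) (hψbd : ∃ C, ∀ t, ‖ψ t‖ ≤ C)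
    (ω : (Fin n → ℝ) →L[ℝ] ℝ) (hω : ω = fderiv ℝ (fun Y : Fin n → ℝ => F₀ T Y) (y T))
    -- bounded measurable variations
    (δy : ℝ → Fin n → ℝ) (δu : ℝ → Fin m → ℝ)
    (hδy : Measurable δy) (hδybd : ∃ C, ∀ t, ‖δy t‖ ≤ C)
    (hδu : Measurable δu) (hδubd : ∃ C, ∀ t, ‖δu t‖ ≤ C)
    -- the costate Hamiltonian equation ψ(t) = ∇_y H(t) a.e. on [0,T]
    (hcostate : ∀ᵐ t ∂volume.restrict (Set.Icc (0 : ℝ) T),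
      ψ t = fderiv ℝ
        (fun η => volterraHamiltonian T f₁ f₂ F₀ F₁ F₂ y u ψ ω t η (u t)) (y t))
    -- the linearized state equation, for every t ∈ [0,T] (including t = T)
    (hlin : ∀ t ∈ Set.Icc (0 : ℝ) T,
      δy t =
        (∫ s in (0:ℝ)..t,
          (fderiv ℝ (fun η => f₁ t s η (u s)) (y s) (δy s) +
            fderiv ℝ (fun ν => f₁ t s (y s) ν) (u s) (δu s))) +
        ∫ s in (0:ℝ)..t, ∫ σ in (0:ℝ)..t,
          (fderiv ℝ (fun η => f₂ t s σ η (y σ) (u s) (u σ)) (y s) (δy s) +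
            fderiv ℝ (fun ν => f₂ t s σ (y s) (y σ) ν (u σ)) (u s) (δu s))) :
    -- conclusion: δJ = ∫₀ᵀ ∇_u H(t) δu(t) dt
    fderiv ℝ (fun Y : Fin n → ℝ => F₀ T Y) (y T) (δy T) +
      (∫ t in (0:ℝ)..T,
        (fderiv ℝ (fun η => F₁ t η (u t)) (y t) (δy t) +
          fderiv ℝ (fun ν => F₁ t (y t) ν) (u t) (δu t))) +
      (∫ t in (0:ℝ)..T, ∫ σ in (0:ℝ)..T,
        (fderiv ℝ (fun η => F₂ t σ η (y σ) (u t) (u σ)) (y t) (δy t) +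
          fderiv ℝ (fun ν => F₂ t σ (y t) (y σ) ν (u σ)) (u t) (δu t))) =
    ∫ t in (0:ℝ)..T,
      fderiv ℝ (fun ν => volterraHamiltonian T f₁ f₂ F₀ F₁ F₂ y u ψ ω t (y t) ν) (u t)
        (δu t) := by
  classical
  have hT' : (0:ℝ) ≤ T := hT.le
  obtain ⟨C1, hC1⟩ := hf₁bd
  obtain ⟨C2, hC2⟩ := hf₂bd
  obtain ⟨CF1, hCF1⟩ := hF₁bd
  obtain ⟨CF2, hCF2⟩ := hF₂bd
  obtain ⟨Cψ, hCψ⟩ := hψbd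
  obtain ⟨Cy, hCy⟩ := hδybd
  obtain ⟨Cu2, hCu2⟩ := hδubd
  have hC1nn : 0 ≤ C1 := le_trans (norm_nonneg _) (hC1 0 0 (0, 0) 0 (by norm_num))
  have hC2nn : 0 ≤ C2 := le_trans (norm_nonneg _) (hC2 0 0 0 (0, 0, 0, 0) 0 (by norm_num))
  have hCF1nn : 0 ≤ CF1 := le_trans (norm_nonneg _) (hCF1 0 (0, 0) 0 (by norm_num))
  have hCF2nn : 0 ≤ CF2 := le_trans (norm_nonneg _) (hCF2 0 0 (0, 0, 0, 0) 0 (by norm_num))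
  have hCψnn : 0 ≤ Cψ := le_trans (norm_nonneg _) (hCψ 0)
  set z : ℝ → (Fin n → ℝ) × (Fin m → ℝ) := fun s => (y s, u s) with hz_def
  set δz : ℝ → (Fin n → ℝ) × (Fin m → ℝ) := fun s => (δy s, δu s) with hδz_def
  have hzmeas : Measurable z := hy.prodMk hu
  have hδzmeas : Measurable δz := hδy.prodMk hδu
  have hδzbd : ∀ s, ‖δz s‖ ≤ max Cy Cu2 := by
    intro s
    have h : ‖δz s‖ = max ‖δy s‖ ‖δu s‖ := rfl
    rw [h]
    exact max_le_max (hCy s) (hCu2 s)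
  set g₁ : ℝ → ℝ → (Fin n → ℝ) × (Fin m → ℝ) → (Fin n → ℝ) :=
    fun t s p => f₁ t s p.1 p.2 with hg₁_def
  set g₂ : ℝ → ℝ → ℝ → (Fin n → ℝ) × (Fin m → ℝ) → (Fin n → ℝ) :=
    fun t s σ p => f₂ t s σ p.1 (y σ) p.2 (u σ) with hg₂_def
  set G₁ : ℝ → (Fin n → ℝ) × (Fin m → ℝ) → ℝ := fun t p => F₁ t p.1 p.2 with hG₁_def
  set G₂ : ℝ → ℝ → (Fin n → ℝ) × (Fin m → ℝ) → ℝ :=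
    fun t σ p => F₂ t σ p.1 (y σ) p.2 (u σ) with hG₂_def
  have hι : ∀ σ : ℝ, Differentiable ℝ (fun p : (Fin n → ℝ) × (Fin m → ℝ) =>
      ((p.1, y σ, p.2, u σ) : (Fin n → ℝ) × (Fin n → ℝ) × (Fin m → ℝ) × (Fin m → ℝ))) :=
    fun σ => differentiable_fst.prodMk ((differentiable_const _).prodMk
      (differentiable_snd.prodMk (differentiable_const _)))
  have hg₁diff : ∀ t s, Differentiable ℝ (g₁ t s) := fun t s =>
    (hf₁smooth t s).differentiable two_ne_zero
  have hg₂diff : ∀ t s σ, Differentiable ℝ (g₂ t s σ) := fun t s σ =>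
    ((hf₂smooth t s σ).differentiable two_ne_zero).comp (hι σ)
  have hG₁diff : ∀ t, Differentiable ℝ (G₁ t) := fun t =>
    (hF₁smooth t).differentiable two_ne_zero
  have hG₂diff : ∀ t σ, Differentiable ℝ (G₂ t σ) := fun t σ =>
    ((hF₂smooth t σ).differentiable two_ne_zero).comp (hι σ)
  have hg₁bd : ∀ t s p, ‖g₁ t s p‖ ≤ C1 := by
    intro t s p
    have h := hC1 t s p 0 (by norm_num)
    rwa [norm_iteratedFDeriv_zero] at h
  have hdg₁bd : ∀ t s p, ‖fderiv ℝ (g₁ t s) p‖ ≤ C1 := fun t s p =>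
    norm_fderiv_le_of_iteratedFDeriv_one (hC1 t s p 1 (by norm_num))
  have hg₂bd : ∀ t s σ p, ‖g₂ t s σ p‖ ≤ C2 := by
    intro t s σ p
    have h := hC2 t s σ (p.1, y σ, p.2, u σ) 0 (by norm_num)
    rwa [norm_iteratedFDeriv_zero] at h
  have hG₁bd : ∀ t p, ‖G₁ t p‖ ≤ CF1 := by
    intro t p
    have h := hCF1 t p 0 (by norm_num)
    rwa [norm_iteratedFDeriv_zero] at h
  have hG₂bd : ∀ t σ p, ‖G₂ t σ p‖ ≤ CF2 := by
    intro t σ p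
    have h := hCF2 t σ (p.1, y σ, p.2, u σ) 0 (by norm_num)
    rwa [norm_iteratedFDeriv_zero] at h
  have hdG₁bd : ∀ t p, ‖fderiv ℝ (G₁ t) p‖ ≤ CF1 := fun t p =>
    norm_fderiv_le_of_iteratedFDeriv_one (hCF1 t p 1 (by norm_num))
  set Lem : ((Fin n → ℝ) × (Fin m → ℝ)) →L[ℝ]
      ((Fin n → ℝ) × (Fin n → ℝ) × (Fin m → ℝ) × (Fin m → ℝ)) :=
    (ContinuousLinearMap.fst ℝ (Fin n → ℝ) (Fin m → ℝ)).prod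
      ((0 : ((Fin n → ℝ) × (Fin m → ℝ)) →L[ℝ] (Fin n → ℝ)).prod
        ((ContinuousLinearMap.snd ℝ (Fin n → ℝ) (Fin m → ℝ)).prod 0)) with hLem_def
  have hLemv : ∀ v : (Fin n → ℝ) × (Fin m → ℝ), ‖Lem v‖ ≤ ‖v‖ := by
    intro v
    have hv : Lem v = (v.1, 0, v.2, 0) := rfl
    rw [hv]
    have e1 : ‖((v.1, 0, v.2, 0) : (Fin n → ℝ) × (Fin n → ℝ) × (Fin m → ℝ) × (Fin m → ℝ))‖
        = max ‖v.1‖ (max 0 (max ‖v.2‖ 0)) := by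
      simp [Prod.norm_def]
    have e2 : ‖v‖ = max ‖v.1‖ ‖v.2‖ := rfl
    rw [e1, e2, max_eq_left (norm_nonneg v.2), max_eq_right (norm_nonneg v.2)]
  have hg₂fder : ∀ t s σ (p : (Fin n → ℝ) × (Fin m → ℝ)), HasFDerivAt (g₂ t s σ)
      ((fderiv ℝ (fun q : (Fin n → ℝ) × (Fin n → ℝ) × (Fin m → ℝ) × (Fin m → ℝ) =>
        f₂ t s σ q.1 q.2.1 q.2.2.1 q.2.2.2) (p.1, y σ, p.2, u σ)).comp Lem) p := by
    intro t s σ p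
    have h1 : HasFDerivAt (fun p : (Fin n → ℝ) × (Fin m → ℝ) =>
        ((p.1, y σ, p.2, u σ) : (Fin n → ℝ) × (Fin n → ℝ) × (Fin m → ℝ) × (Fin m → ℝ))) Lem p :=
      (hasFDerivAt_fst).prodMk ((hasFDerivAt_const _ _).prodMk
        ((hasFDerivAt_snd).prodMk (hasFDerivAt_const _ _)))
    exact ((((hf₂smooth t s σ).differentiable two_ne_zero) _).hasFDerivAt).comp p h1
  have hG₂fder : ∀ t σ (p : (Fin n → ℝ) × (Fin m → ℝ)), HasFDerivAt (G₂ t σ)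
      ((fderiv ℝ (fun q : (Fin n → ℝ) × (Fin n → ℝ) × (Fin m → ℝ) × (Fin m → ℝ) =>
        F₂ t σ q.1 q.2.1 q.2.2.1 q.2.2.2) (p.1, y σ, p.2, u σ)).comp Lem) p := by
    intro t σ p
    have h1 : HasFDerivAt (fun p : (Fin n → ℝ) × (Fin m → ℝ) =>
        ((p.1, y σ, p.2, u σ) : (Fin n → ℝ) × (Fin n → ℝ) × (Fin m → ℝ) × (Fin m → ℝ))) Lem p :=
      (hasFDerivAt_fst).prodMk ((hasFDerivAt_const _ _).prodMk
        ((hasFDerivAt_snd).prodMk (hasFDerivAt_const _ _)))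
    exact ((((hF₂smooth t σ).differentiable two_ne_zero) _).hasFDerivAt).comp p h1
  have hdg₂bd : ∀ t s σ p, ‖fderiv ℝ (g₂ t s σ) p‖ ≤ C2 := by
    intro t s σ p
    rw [(hg₂fder t s σ p).fderiv]
    refine ContinuousLinearMap.opNorm_le_bound _ hC2nn fun v => ?_
    rw [ContinuousLinearMap.comp_apply]
    calc ‖(fderiv ℝ _ (p.1, y σ, p.2, u σ)) (Lem v)‖
        ≤ ‖fderiv ℝ _ (p.1, y σ, p.2, u σ)‖ * ‖Lem v‖ := ContinuousLinearMap.le_opNorm _ _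
      _ ≤ C2 * ‖v‖ :=
        mul_le_mul (norm_fderiv_le_of_iteratedFDeriv_one (hC2 t s σ _ 1 (by norm_num)))
          (hLemv v) (norm_nonneg _) hC2nn
  have hdG₂bd : ∀ t σ p, ‖fderiv ℝ (G₂ t σ) p‖ ≤ CF2 := by
    intro t σ p
    rw [(hG₂fder t σ p).fderiv]
    refine ContinuousLinearMap.opNorm_le_bound _ hCF2nn fun v => ?_
    rw [ContinuousLinearMap.comp_apply]
    calc ‖(fderiv ℝ _ (p.1, y σ, p.2, u σ)) (Lem v)‖
        ≤ ‖fderiv ℝ _ (p.1, y σ, p.2, u σ)‖ * ‖Lem v‖ := ContinuousLinearMap.le_opNorm _ _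
      _ ≤ CF2 * ‖v‖ :=
        mul_le_mul (norm_fderiv_le_of_iteratedFDeriv_one (hCF2 t σ _ 1 (by norm_num)))
          (hLemv v) (norm_nonneg _) hCF2nn
  have hg₁measJ : Measurable fun r : (ℝ × ℝ) × ((Fin n → ℝ) × (Fin m → ℝ)) =>
      g₁ r.1.1 r.1.2 r.2 :=
    hf₁meas.comp ((measurable_fst.fst).prodMk ((measurable_fst.snd).prodMk
      ((measurable_snd.fst).prodMk (measurable_snd.snd))))
  have hg₂measJ : Measurable fun r : ((ℝ × ℝ) × ℝ) × ((Fin n → ℝ) × (Fin m → ℝ)) =>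
      g₂ r.1.1.1 r.1.1.2 r.1.2 r.2 :=
    hf₂meas.comp ((measurable_fst.fst.fst).prodMk ((measurable_fst.fst.snd).prodMk
      ((measurable_fst.snd).prodMk ((measurable_snd.fst).prodMk
        ((hy.comp measurable_fst.snd).prodMk ((measurable_snd.snd).prodMk
          (hu.comp measurable_fst.snd)))))))
  have hG₁measJ : Measurable fun r : ℝ × ((Fin n → ℝ) × (Fin m → ℝ)) =>
      G₁ r.1 r.2 :=
    hF₁meas.comp (measurable_fst.prodMk ((measurable_snd.fst).prodMk (measurable_snd.snd)))
  have hG₂measJ : Measurable fun r : (ℝ × ℝ) × ((Fin n → ℝ) × (Fin m → ℝ)) =>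
      G₂ r.1.1 r.1.2 r.2 :=
    hF₂meas.comp ((measurable_fst.fst).prodMk ((measurable_fst.snd).prodMk
      ((measurable_snd.fst).prodMk ((hy.comp measurable_fst.snd).prodMk
        ((measurable_snd.snd).prodMk (hu.comp measurable_fst.snd))))))
  have M1 : Measurable fun q : ℝ × ℝ => fderiv ℝ (g₁ q.1 q.2) (z q.2) :=
    measurable_fderiv_param (g := fun (q : ℝ × ℝ) p => g₁ q.1 q.2 p)
      hg₁measJ (hzmeas.comp measurable_snd) (fun q => hg₁diff q.1 q.2)
  have M2 : Measurable fun q : (ℝ × ℝ) × ℝ => fderiv ℝ (g₂ q.1.1 q.1.2 q.2) (z q.1.2) :=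
    measurable_fderiv_param (g := fun (q : (ℝ × ℝ) × ℝ) p => g₂ q.1.1 q.1.2 q.2 p)
      hg₂measJ (hzmeas.comp (measurable_fst.snd)) (fun q => hg₂diff q.1.1 q.1.2 q.2)
  have M3 : Measurable fun t : ℝ => fderiv ℝ (G₁ t) (z t) :=
    measurable_fderiv_param (g := fun (t : ℝ) p => G₁ t p)
      hG₁measJ hzmeas (fun t => hG₁diff t)
  have M4 : Measurable fun q : ℝ × ℝ => fderiv ℝ (G₂ q.1 q.2) (z q.1) :=
    measurable_fderiv_param (g := fun (q : ℝ × ℝ) p => G₂ q.1 q.2 p)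
      hG₂measJ (hzmeas.comp measurable_fst) (fun q => hG₂diff q.1 q.2)
  set Dg₁ : ℝ → ℝ → ((Fin n → ℝ) × (Fin m → ℝ)) →L[ℝ] (Fin n → ℝ) :=
    fun t s => fderiv ℝ (g₁ t s) (z s) with hDg₁_def
  set Dg₂ : ℝ → ℝ → ℝ → ((Fin n → ℝ) × (Fin m → ℝ)) →L[ℝ] (Fin n → ℝ) :=
    fun t s σ => fderiv ℝ (g₂ t s σ) (z s) with hDg₂_def
  set DG₁ : ℝ → ((Fin n → ℝ) × (Fin m → ℝ)) →L[ℝ] ℝ :=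
    fun t => fderiv ℝ (G₁ t) (z t) with hDG₁_def
  set DG₂ : ℝ → ℝ → ((Fin n → ℝ) × (Fin m → ℝ)) →L[ℝ] ℝ :=
    fun t σ => fderiv ℝ (G₂ t σ) (z t) with hDG₂_def
  set ind : ℝ → ℝ → ℝ := fun s σ => (Ioc (0:ℝ) s).indicator (fun _ => (1:ℝ)) σ with hind_def
  have hindmeas : Measurable fun q : ℝ × ℝ => ind q.1 q.2 := by
    have h : (fun q : ℝ × ℝ => ind q.1 q.2)
        = ({q : ℝ × ℝ | 0 < q.2 ∧ q.2 ≤ q.1} : Set (ℝ × ℝ)).indicator (fun _ => (1:ℝ)) := by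
      funext q
      simp only [hind_def, indicator_apply, mem_Ioc, Set.mem_setOf_eq]
    rw [h]
    exact measurable_const.indicator
      ((measurableSet_lt measurable_const measurable_snd).inter
        (measurableSet_le measurable_snd measurable_fst))
  have hindbd : ∀ s σ, ‖ind s σ‖ ≤ 1 := by
    intro s σ
    simp only [hind_def, indicator_apply, mem_Ioc, Real.norm_eq_abs]
    split_ifs <;> norm_num
  have hfinIoc : ∀ a b : ℝ, IsFiniteMeasure (volume.restrict (Ioc a b)) := by
    intro a b
    constructor
    rw [Measure.restrict_apply_univ]
    exact measure_Ioc_lt_top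
  haveI := hfinIoc 0 T
  set R : ℝ := (volume (Ioc (0:ℝ) T)).toReal with hR_def
  have hRnn : 0 ≤ R := ENNReal.toReal_nonneg
  have hvol : ∀ a b : ℝ, Ioc a b ⊆ Ioc (0:ℝ) T →
      ((volume.restrict (Ioc a b)) univ).toReal ≤ R := by
    intro a b hsub
    rw [Measure.restrict_apply_univ, hR_def]
    exact ENNReal.toReal_mono measure_Ioc_lt_top.ne (measure_mono hsub)
  have hind_eq : ∀ s : ℝ, s ≤ T → ∀ X : ℝ → ℝ,
      (∫ σ in Ioc (0:ℝ) T, ind s σ • X σ) = ∫ σ in Ioc (0:ℝ) s, X σ := by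
    intro s hsT X
    have h1 : ∀ σ, ind s σ • X σ = (Ioc (0:ℝ) s).indicator X σ := by
      intro σ
      simp only [hind_def, indicator_apply]
      by_cases h : σ ∈ Ioc (0:ℝ) s
      · rw [if_pos h, if_pos h, one_smul]
      · rw [if_neg h, if_neg h, zero_smul]
    simp_rw [h1]
    rw [MeasureTheory.integral_indicator measurableSet_Ioc,
      Measure.restrict_restrict measurableSet_Ioc,
      inter_eq_left.2 (Ioc_subset_Ioc le_rfl hsT)]
  have hHeq : ∀ t ∈ Icc (0:ℝ) T,
      (fun p : (Fin n → ℝ) × (Fin m → ℝ) =>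
          volterraHamiltonian T f₁ f₂ F₀ F₁ F₂ y u ψ ω t p.1 p.2)
        = fun p => ω (g₁ T t p + ∫ σ in Ioc (0:ℝ) T, g₂ T t σ p) + F₀ T (y T) + G₁ t p
            + (∫ σ in Ioc (0:ℝ) T, G₂ t σ p) + (∫ s in Ioc t T, ψ s (g₁ s t p))
            + ∫ s in Ioc t T, ∫ σ in Ioc (0:ℝ) T, ind s σ • ψ s (g₂ s t σ p) := by
    intro t ht
    funext p
    unfold volterraHamiltonian
    simp only [intervalIntegral.integral_of_le hT', intervalIntegral.integral_of_le ht.2]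
    congr 1
    apply setIntegral_congr_fun measurableSet_Ioc
    intro s hs
    dsimp only
    rw [intervalIntegral.integral_of_le (le_trans ht.1 hs.1.le)]
    exact (hind_eq s hs.2 _).symm
  have mψ : Measurable ψ := hψ.measurable
  have mDg₂Tt : ∀ t, Measurable fun σ => Dg₂ T t σ := fun t =>
    M2.comp ((measurable_const.prodMk measurable_const).prodMk measurable_id)
  have iDg₂Tt : ∀ t, Integrable (fun σ => Dg₂ T t σ) (volume.restrict (Ioc (0:ℝ) T)) :=
    fun t => integrable_of_bdd_meas (mDg₂Tt t).aestronglyMeasurable (fun σ => hdg₂bd T t σ _)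
  have mDG₂t : ∀ t, Measurable fun σ => DG₂ t σ := fun t =>
    M4.comp (measurable_const.prodMk measurable_id)
  have iDG₂t : ∀ t, Integrable (fun σ => DG₂ t σ) (volume.restrict (Ioc (0:ℝ) T)) :=
    fun t => integrable_of_bdd_meas (mDG₂t t).aestronglyMeasurable (fun σ => hdG₂bd t σ _)
  have mψDg₁ : ∀ t, Measurable fun s => (ψ s).comp (Dg₁ s t) := fun t =>
    measurable_clm_comp_pair mψ (M1.comp (measurable_id.prodMk measurable_const))
  have hψDg₁bd : ∀ t s, ‖(ψ s).comp (Dg₁ s t)‖ ≤ Cψ * C1 := fun t s =>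
    le_trans (ContinuousLinearMap.opNorm_comp_le _ _)
      (mul_le_mul (hCψ s) (hdg₁bd s t _) (norm_nonneg _) hCψnn)
  have iψDg₁ : ∀ (t a b : ℝ), Integrable (fun s => (ψ s).comp (Dg₁ s t))
      (volume.restrict (Ioc a b)) := by
    intro t a b
    haveI := hfinIoc a b
    exact integrable_of_bdd_meas (mψDg₁ t).aestronglyMeasurable (fun s => hψDg₁bd t s)
  have M2p : ∀ w : (Fin n → ℝ) × (Fin m → ℝ),
      Measurable fun q : (ℝ × ℝ) × ℝ => fderiv ℝ (g₂ q.1.1 q.1.2 q.2) w := fun w =>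
    measurable_fderiv_param (g := fun (q : (ℝ × ℝ) × ℝ) p => g₂ q.1.1 q.1.2 q.2 p)
      hg₂measJ measurable_const (fun q => hg₂diff q.1.1 q.1.2 q.2)
  have mΛker : ∀ t, Measurable fun q : ℝ × ℝ => ind q.1 q.2 • ((ψ q.1).comp (Dg₂ q.1 t q.2)) := by
    intro t
    refine measurable_clm_of_apply' fun v => ?_
    have h1 : Measurable fun q : ℝ × ℝ => Dg₂ q.1 t q.2 v :=
      (M2.comp ((measurable_fst.prodMk measurable_const).prodMk
        measurable_snd)).apply_continuousLinearMap v
    have h2 : Measurable fun q : ℝ × ℝ => (ψ q.1) (Dg₂ q.1 t q.2 v) :=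
      measurable_clm_apply_pair (mψ.comp measurable_fst) h1
    simp only [ContinuousLinearMap.smul_apply, ContinuousLinearMap.comp_apply, smul_eq_mul]
    exact hindmeas.mul h2
  have hΛkerbd : ∀ t s σ, ‖ind s σ • ((ψ s).comp (Dg₂ s t σ))‖ ≤ Cψ * C2 := by
    intro t s σ
    refine le_trans (ContinuousLinearMap.opNorm_smul_le _ _) ?_
    calc ‖ind s σ‖ * ‖(ψ s).comp (Dg₂ s t σ)‖
        ≤ 1 * (Cψ * C2) := by
          refine mul_le_mul (hindbd s σ) ?_ (norm_nonneg _) zero_le_one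
          exact le_trans (ContinuousLinearMap.opNorm_comp_le _ _)
            (mul_le_mul (hCψ s) (hdg₂bd s t σ _) (norm_nonneg _) hCψnn)
      _ = Cψ * C2 := one_mul _
  set Λ : ℝ → ℝ → ((Fin n → ℝ) × (Fin m → ℝ)) →L[ℝ] ℝ :=
    fun t s => ∫ σ in Ioc (0:ℝ) T, ind s σ • ((ψ s).comp (Dg₂ s t σ)) with hΛ_def
  have iΛker : ∀ t s, Integrable (fun σ => ind s σ • ((ψ s).comp (Dg₂ s t σ)))
      (volume.restrict (Ioc (0:ℝ) T)) := by
    intro t s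
    refine integrable_of_bdd_meas ?_ (fun σ => hΛkerbd t s σ)
    exact ((mΛker t).comp (measurable_const.prodMk measurable_id)).aestronglyMeasurable
  have mΛ : ∀ t, Measurable fun s => Λ t s := fun t =>
    ((mΛker t).stronglyMeasurable.integral_prod_right').measurable
  have hΛbd : ∀ t s, ‖Λ t s‖ ≤ Cψ * C2 * R := by
    intro t s
    refine le_trans (norm_integral_le_of_norm_le_const
      (Eventually.of_forall fun σ => hΛkerbd t s σ)) ?_
    exact mul_le_mul_of_nonneg_left (hvol 0 T (subset_refl _)) (mul_nonneg hCψnn hC2nn)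
  have iΛ : ∀ (t a b : ℝ), Integrable (fun s => Λ t s) (volume.restrict (Ioc a b)) := by
    intro t a b
    haveI := hfinIoc a b
    exact integrable_of_bdd_meas (mΛ t).aestronglyMeasurable (fun s => hΛbd t s)
  set D : ℝ → ((Fin n → ℝ) × (Fin m → ℝ)) →L[ℝ] ℝ := fun t =>
    ω.comp (Dg₁ T t + ∫ σ in Ioc (0:ℝ) T, Dg₂ T t σ) + DG₁ t
      + (∫ σ in Ioc (0:ℝ) T, DG₂ t σ)
      + (∫ s in Ioc t T, (ψ s).comp (Dg₁ s t)) + (∫ s in Ioc t T, Λ t s) with hD_def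
  have hH : ∀ t ∈ Icc (0:ℝ) T, HasFDerivAt (fun p : (Fin n → ℝ) × (Fin m → ℝ) =>
      volterraHamiltonian T f₁ f₂ F₀ F₁ F₂ y u ψ ω t p.1 p.2) (D t) (z t) := by
    intro t ht
    rw [hHeq t ht]
    haveI := hfinIoc t T
    have hA2 : HasFDerivAt (fun p => ∫ σ in Ioc (0:ℝ) T, g₂ T t σ p)
        (∫ σ in Ioc (0:ℝ) T, fderiv ℝ (g₂ T t σ) (z t)) (z t) := by
      refine hasFDerivAt_integral_param_s8 (C := C2)
        (g := fun σ p => g₂ T t σ p) (fun x => ?_) (mDg₂Tt t).aestronglyMeasurable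
        (fun σ => hg₂diff T t σ) (fun σ x => hg₂bd T t σ x) (fun σ x => hdg₂bd T t σ x)
      exact (hg₂measJ.comp (((measurable_const.prodMk measurable_const).prodMk
        measurable_id).prodMk measurable_const)).aestronglyMeasurable
    have hA : HasFDerivAt (fun p : (Fin n → ℝ) × (Fin m → ℝ) =>
        ω (g₁ T t p + ∫ σ in Ioc (0:ℝ) T, g₂ T t σ p))
        (ω.comp (Dg₁ T t + ∫ σ in Ioc (0:ℝ) T, Dg₂ T t σ)) (z t) :=
      (ω.hasFDerivAt).comp (z t) (((hg₁diff T t (z t)).hasFDerivAt).add hA2)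
    have hDterm : HasFDerivAt (fun p => ∫ σ in Ioc (0:ℝ) T, G₂ t σ p)
        (∫ σ in Ioc (0:ℝ) T, DG₂ t σ) (z t) := by
      refine hasFDerivAt_integral_param_s8 (C := CF2)
        (g := fun σ p => G₂ t σ p) (fun x => ?_) (mDG₂t t).aestronglyMeasurable
        (fun σ => hG₂diff t σ) (fun σ x => hG₂bd t σ x) (fun σ x => hdG₂bd t σ x)
      exact (hG₂measJ.comp ((measurable_const.prodMk measurable_id).prodMk
        measurable_const)).aestronglyMeasurable
    have hfdE : ∀ s (p : (Fin n → ℝ) × (Fin m → ℝ)),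
        HasFDerivAt (fun p => ψ s (g₁ s t p)) ((ψ s).comp (fderiv ℝ (g₁ s t) p)) p :=
      fun s p => ((ψ s).hasFDerivAt).comp p ((hg₁diff s t p).hasFDerivAt)
    have hfdEeq : ∀ s, fderiv ℝ (fun p => ψ s (g₁ s t p)) (z t) = (ψ s).comp (Dg₁ s t) :=
      fun s => (hfdE s (z t)).fderiv
    have hE : HasFDerivAt (fun p => ∫ s in Ioc t T, ψ s (g₁ s t p))
        (∫ s in Ioc t T, (ψ s).comp (Dg₁ s t)) (z t) := by
      have h := hasFDerivAt_integral_param_s8 (μ := volume.restrict (Ioc t T)) (C := Cψ * C1)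
        (g := fun s p => ψ s (g₁ s t p)) (x₀ := z t)
        (fun x => (measurable_clm_apply_pair mψ
          ((hg₁measJ.comp ((measurable_id.prodMk measurable_const).prodMk
            measurable_const)).comp measurable_id : Measurable fun s : ℝ => g₁ s t x)
          : Measurable fun s => ψ s (g₁ s t x)).aestronglyMeasurable)
        (by simp only [hfdEeq]; exact (mψDg₁ t).aestronglyMeasurable)
        (fun s p => ((hfdE s p).differentiableAt))
        (fun s x => le_trans ((ψ s).le_opNorm _)
          (mul_le_mul (hCψ s) (hg₁bd s t x) (norm_nonneg _) hCψnn))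
        (fun s p => by
          rw [(hfdE s p).fderiv]
          exact le_trans (ContinuousLinearMap.opNorm_comp_le _ _)
            (mul_le_mul (hCψ s) (hdg₁bd s t p) (norm_nonneg _) hCψnn))
      simp only [hfdEeq] at h
      exact h
    have hfdF : ∀ s σ (p : (Fin n → ℝ) × (Fin m → ℝ)),
        HasFDerivAt (fun p => ind s σ • ψ s (g₂ s t σ p))
          (ind s σ • ((ψ s).comp (fderiv ℝ (g₂ s t σ) p))) p := fun s σ p =>
      (((ψ s).hasFDerivAt).comp p ((hg₂diff s t σ p).hasFDerivAt)).const_smul (ind s σ)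
    have hFkerbd : ∀ s σ (p : (Fin n → ℝ) × (Fin m → ℝ)),
        ‖ind s σ • ((ψ s).comp (fderiv ℝ (g₂ s t σ) p))‖ ≤ Cψ * C2 := by
      intro s σ p
      refine le_trans (ContinuousLinearMap.opNorm_smul_le _ _) ?_
      calc ‖ind s σ‖ * ‖(ψ s).comp (fderiv ℝ (g₂ s t σ) p)‖
          ≤ 1 * (Cψ * C2) := by
            refine mul_le_mul (hindbd s σ) ?_ (norm_nonneg _) zero_le_one
            exact le_trans (ContinuousLinearMap.opNorm_comp_le _ _)
              (mul_le_mul (hCψ s) (hdg₂bd s t σ _) (norm_nonneg _) hCψnn)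
        _ = Cψ * C2 := one_mul _
    have hFin : ∀ s (p : (Fin n → ℝ) × (Fin m → ℝ)),
        HasFDerivAt (fun p => ∫ σ in Ioc (0:ℝ) T, ind s σ • ψ s (g₂ s t σ p))
          (∫ σ in Ioc (0:ℝ) T, ind s σ • ((ψ s).comp (fderiv ℝ (g₂ s t σ) p))) p := by
      intro s p
      have hker : ∀ x, Measurable fun σ : ℝ => ind s σ • ψ s (g₂ s t σ x) := by
        intro x
        have h1 : Measurable fun σ : ℝ => g₂ s t σ x :=
          hg₂measJ.comp (((measurable_const.prodMk measurable_const).prodMk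
            measurable_id).prodMk measurable_const)
        have h2 : Measurable fun σ : ℝ => ψ s (g₂ s t σ x) :=
          measurable_clm_apply_pair measurable_const h1
        simp only [smul_eq_mul]
        exact (hindmeas.comp (measurable_const.prodMk measurable_id)).mul h2
      have hker' : Measurable fun σ : ℝ => ind s σ • ((ψ s).comp (fderiv ℝ (g₂ s t σ) p)) := by
        refine measurable_clm_of_apply' fun v => ?_
        have h1 : Measurable fun σ : ℝ => fderiv ℝ (g₂ s t σ) p v :=
          ((M2p p).comp ((measurable_const.prodMk measurable_const).prodMk
            measurable_id)).apply_continuousLinearMap v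
        have h2 : Measurable fun σ : ℝ => ψ s (fderiv ℝ (g₂ s t σ) p v) :=
          measurable_clm_apply_pair measurable_const h1
        simp only [ContinuousLinearMap.smul_apply, ContinuousLinearMap.comp_apply, smul_eq_mul]
        exact (hindmeas.comp (measurable_const.prodMk measurable_id)).mul h2
      have h := hasFDerivAt_integral_param_s8 (μ := volume.restrict (Ioc (0:ℝ) T)) (C := Cψ * C2)
        (g := fun σ p => ind s σ • ψ s (g₂ s t σ p)) (x₀ := p)
        (fun x => (hker x).aestronglyMeasurable)
        (by simp only [fun σ => (hfdF s σ p).fderiv]; exact hker'.aestronglyMeasurable)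
        (fun σ q => (hfdF s σ q).differentiableAt)
        (fun σ x => by
          refine le_trans (norm_smul_le _ _) ?_
          calc ‖ind s σ‖ * ‖ψ s (g₂ s t σ x)‖
              ≤ 1 * (Cψ * C2) := by
                refine mul_le_mul (hindbd s σ) ?_ (norm_nonneg _) zero_le_one
                exact le_trans ((ψ s).le_opNorm _)
                  (mul_le_mul (hCψ s) (hg₂bd s t σ x) (norm_nonneg _) hCψnn)
            _ = Cψ * C2 := one_mul _)
        (fun σ q => by
          rw [(hfdF s σ q).fderiv]
          exact hFkerbd s σ q)
      simp only [fun σ => (hfdF s σ p).fderiv] at h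
      exact h
    have hFeq : ∀ s, fderiv ℝ (fun p => ∫ σ in Ioc (0:ℝ) T, ind s σ • ψ s (g₂ s t σ p)) (z t)
        = Λ t s := fun s => (hFin s (z t)).fderiv
    have hF : HasFDerivAt
        (fun p => ∫ s in Ioc t T, ∫ σ in Ioc (0:ℝ) T, ind s σ • ψ s (g₂ s t σ p))
        (∫ s in Ioc t T, Λ t s) (z t) := by
      have hkerJ : ∀ x, Measurable fun q : ℝ × ℝ => ind q.1 q.2 • ψ q.1 (g₂ q.1 t q.2 x) := by
        intro x
        have h1 : Measurable fun q : ℝ × ℝ => g₂ q.1 t q.2 x :=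
          hg₂measJ.comp (((measurable_fst.prodMk measurable_const).prodMk
            measurable_snd).prodMk measurable_const)
        have h2 : Measurable fun q : ℝ × ℝ => ψ q.1 (g₂ q.1 t q.2 x) :=
          measurable_clm_apply_pair (mψ.comp measurable_fst) h1
        simp only [smul_eq_mul]
        exact hindmeas.mul h2
      have h := hasFDerivAt_integral_param_s8 (μ := volume.restrict (Ioc t T)) (C := Cψ * C2 * R)
        (g := fun s p => ∫ σ in Ioc (0:ℝ) T, ind s σ • ψ s (g₂ s t σ p)) (x₀ := z t)
        (fun x => ((hkerJ x).stronglyMeasurable.integral_prod_right').aestronglyMeasurable)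
        (by simp only [hFeq]; exact (mΛ t).aestronglyMeasurable)
        (fun s p => (hFin s p).differentiableAt)
        (fun s x => by
          show ‖∫ σ in Ioc (0:ℝ) T, ind s σ • ψ s (g₂ s t σ x)‖ ≤ Cψ * C2 * R
          refine le_trans (norm_integral_le_of_norm_le_const (C := Cψ * C2)
            (Eventually.of_forall fun σ => ?_)) ?_
          · show ‖ind s σ • ψ s (g₂ s t σ x)‖ ≤ Cψ * C2
            refine le_trans (norm_smul_le _ _) ?_
            calc ‖ind s σ‖ * ‖ψ s (g₂ s t σ x)‖
                ≤ 1 * (Cψ * C2) := by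
                  refine mul_le_mul (hindbd s σ) ?_ (norm_nonneg _) zero_le_one
                  exact le_trans ((ψ s).le_opNorm _)
                    (mul_le_mul (hCψ s) (hg₂bd s t σ x) (norm_nonneg _) hCψnn)
              _ = Cψ * C2 := one_mul _
          · exact mul_le_mul_of_nonneg_left (hvol 0 T (subset_refl _)) (mul_nonneg hCψnn hC2nn))
        (fun s p => by
          show ‖fderiv ℝ (fun p => ∫ σ in Ioc (0:ℝ) T, ind s σ • ψ s (g₂ s t σ p)) p‖
            ≤ Cψ * C2 * R
          rw [(hFin s p).fderiv]
          refine le_trans (norm_integral_le_of_norm_le_const (C := Cψ * C2)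
            (Eventually.of_forall fun σ => hFkerbd s σ p)) ?_
          exact mul_le_mul_of_nonneg_left (hvol 0 T (subset_refl _)) (mul_nonneg hCψnn hC2nn))
      simp only [hFeq] at h
      exact h
    exact ((((hA.add_const (F₀ T (y T))).add ((hG₁diff t (z t)).hasFDerivAt)).add
      hDterm).add hE).add hF
  have hDapply : ∀ t ∈ Icc (0:ℝ) T, ∀ w : (Fin n → ℝ) × (Fin m → ℝ),
      D t w = ω (Dg₁ T t w + ∫ σ in Ioc (0:ℝ) T, Dg₂ T t σ w) + DG₁ t w
        + (∫ σ in Ioc (0:ℝ) T, DG₂ t σ w)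
        + (∫ s in Ioc t T, ψ s (Dg₁ s t w))
        + ∫ s in Ioc t T, ∫ σ in Ioc (0:ℝ) T, ind s σ • ψ s (Dg₂ s t σ w) := by
    intro t ht w
    haveI := hfinIoc t T
    have e1 : (∫ σ in Ioc (0:ℝ) T, Dg₂ T t σ) w = ∫ σ in Ioc (0:ℝ) T, Dg₂ T t σ w :=
      ContinuousLinearMap.integral_apply (iDg₂Tt t) w
    have e2 : (∫ σ in Ioc (0:ℝ) T, DG₂ t σ) w = ∫ σ in Ioc (0:ℝ) T, DG₂ t σ w :=
      ContinuousLinearMap.integral_apply (iDG₂t t) w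
    have e3 : (∫ s in Ioc t T, (ψ s).comp (Dg₁ s t)) w = ∫ s in Ioc t T, ψ s (Dg₁ s t w) :=
      ContinuousLinearMap.integral_apply (iψDg₁ t t T) w
    have e4 : (∫ s in Ioc t T, Λ t s) w
        = ∫ s in Ioc t T, ∫ σ in Ioc (0:ℝ) T, ind s σ • ψ s (Dg₂ s t σ w) := by
      rw [ContinuousLinearMap.integral_apply (iΛ t t T) w]
      refine setIntegral_congr_fun measurableSet_Ioc (fun s hs => ?_)
      exact ContinuousLinearMap.integral_apply (iΛker t s) w
    show (ω.comp (Dg₁ T t + ∫ σ in Ioc (0:ℝ) T, Dg₂ T t σ) + DG₁ t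
      + (∫ σ in Ioc (0:ℝ) T, DG₂ t σ)
      + (∫ s in Ioc t T, (ψ s).comp (Dg₁ s t)) + (∫ s in Ioc t T, Λ t s)) w = _
    rw [ContinuousLinearMap.add_apply, ContinuousLinearMap.add_apply,
      ContinuousLinearMap.add_apply, ContinuousLinearMap.add_apply,
      ContinuousLinearMap.comp_apply, ContinuousLinearMap.add_apply, e1, e2, e3, e4]
  have hsplit₁ : ∀ t s : ℝ, fderiv ℝ (fun η => f₁ t s η (u s)) (y s) (δy s)
      + fderiv ℝ (fun ν => f₁ t s (y s) ν) (u s) (δu s) = Dg₁ t s (δz s) := fun t s =>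
    fderiv_prod_split (g₁ t s) (y s) (u s) (hg₁diff t s _) (δy s) (δu s)
  have hsplit₂ : ∀ t s σ : ℝ, fderiv ℝ (fun η => f₂ t s σ η (y σ) (u s) (u σ)) (y s) (δy s)
      + fderiv ℝ (fun ν => f₂ t s σ (y s) (y σ) ν (u σ)) (u s) (δu s) = Dg₂ t s σ (δz s) :=
    fun t s σ => fderiv_prod_split (g₂ t s σ) (y s) (u s) (hg₂diff t s σ _) (δy s) (δu s)
  have hsplitF₁ : ∀ t : ℝ, fderiv ℝ (fun η => F₁ t η (u t)) (y t) (δy t)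
      + fderiv ℝ (fun ν => F₁ t (y t) ν) (u t) (δu t) = DG₁ t (δz t) := fun t =>
    fderiv_prod_split (G₁ t) (y t) (u t) (hG₁diff t _) (δy t) (δu t)
  have hsplitF₂ : ∀ t σ : ℝ, fderiv ℝ (fun η => F₂ t σ η (y σ) (u t) (u σ)) (y t) (δy t)
      + fderiv ℝ (fun ν => F₂ t σ (y t) (y σ) ν (u σ)) (u t) (δu t) = DG₂ t σ (δz t) :=
    fun t σ => fderiv_prod_split (G₂ t σ) (y t) (u t) (hG₂diff t σ _) (δy t) (δu t)
  have hlin' : ∀ t ∈ Icc (0:ℝ) T, δy t = (∫ s in Ioc (0:ℝ) t, Dg₁ t s (δz s))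
      + ∫ s in Ioc (0:ℝ) t, ∫ σ in Ioc (0:ℝ) t, Dg₂ t s σ (δz s) := by
    intro t ht
    have h := hlin t ht
    simp only [intervalIntegral.integral_of_le ht.1] at h
    rw [h]
    congr 1
    · exact setIntegral_congr_fun measurableSet_Ioc fun s _ => hsplit₁ t s
    · refine setIntegral_congr_fun measurableSet_Ioc fun s _ => ?_
      exact setIntegral_congr_fun measurableSet_Ioc fun σ _ => hsplit₂ t s σ
  have hcost' : ∀ᵐ t ∂(volume.restrict (Ioc (0:ℝ) T)), ψ t (δy t) = D t (δy t, 0) := by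
    have h1 : ∀ᵐ t ∂(volume.restrict (Ioc (0:ℝ) T)), ψ t = fderiv ℝ
        (fun η => volterraHamiltonian T f₁ f₂ F₀ F₁ F₂ y u ψ ω t η (u t)) (y t) :=
      ae_restrict_of_ae_restrict_of_subset Ioc_subset_Icc_self hcostate
    have h2 : ∀ᵐ t ∂(volume.restrict (Ioc (0:ℝ) T)), t ∈ Ioc (0:ℝ) T :=
      ae_restrict_mem measurableSet_Ioc
    filter_upwards [h1, h2] with t hpsi hmem
    have hmem' := Ioc_subset_Icc_self hmem
    have e2 : fderiv ℝ (fun p : (Fin n → ℝ) × (Fin m → ℝ) =>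
        volterraHamiltonian T f₁ f₂ F₀ F₁ F₂ y u ψ ω t p.1 p.2) (z t) = D t :=
      (hH t hmem').fderiv
    have e1 : fderiv ℝ (fun η => volterraHamiltonian T f₁ f₂ F₀ F₁ F₂ y u ψ ω t η (u t))
          (y t) (δy t)
        = fderiv ℝ (fun p : (Fin n → ℝ) × (Fin m → ℝ) =>
            volterraHamiltonian T f₁ f₂ F₀ F₁ F₂ y u ψ ω t p.1 p.2) (z t) (δy t, 0) :=
      fderiv_fst_apply _ (y t) (u t) ((hH t hmem').differentiableAt) (δy t)
    rw [hpsi, e1, e2]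
  have hRHS : (∫ t in (0:ℝ)..T, fderiv ℝ
        (fun ν => volterraHamiltonian T f₁ f₂ F₀ F₁ F₂ y u ψ ω t (y t) ν) (u t) (δu t))
      = ∫ t in Ioc (0:ℝ) T, D t (0, δu t) := by
    rw [intervalIntegral.integral_of_le hT']
    refine setIntegral_congr_fun measurableSet_Ioc fun t ht => ?_
    have hmem' := Ioc_subset_Icc_self ht
    have e2 : fderiv ℝ (fun p : (Fin n → ℝ) × (Fin m → ℝ) =>
        volterraHamiltonian T f₁ f₂ F₀ F₁ F₂ y u ψ ω t p.1 p.2) (z t) = D t :=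
      (hH t hmem').fderiv
    have e1 : fderiv ℝ (fun ν => volterraHamiltonian T f₁ f₂ F₀ F₁ F₂ y u ψ ω t (y t) ν)
          (u t) (δu t)
        = fderiv ℝ (fun p : (Fin n → ℝ) × (Fin m → ℝ) =>
            volterraHamiltonian T f₁ f₂ F₀ F₁ F₂ y u ψ ω t p.1 p.2) (z t) (0, δu t) :=
      fderiv_snd_apply _ (y t) (u t) ((hH t hmem').differentiableAt) (δu t)
    rw [e1, e2]
  set CZ : ℝ := max Cy Cu2 with hCZ_def
  have hCZnn : 0 ≤ CZ := le_trans (norm_nonneg (δz 0)) (hδzbd 0)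
  have mDg₁T : Measurable fun t => Dg₁ T t (δz t) :=
    measurable_clm_apply_pair (M1.comp (measurable_const.prodMk measurable_id)) hδzmeas
  have mDg₂TJ : Measurable fun q : ℝ × ℝ => Dg₂ T q.1 q.2 (δz q.1) :=
    measurable_clm_apply_pair (M2.comp ((measurable_const.prodMk measurable_fst).prodMk
      measurable_snd)) (hδzmeas.comp measurable_fst)
  have iDg₁T : Integrable (fun t => Dg₁ T t (δz t)) (volume.restrict (Ioc (0:ℝ) T)) :=
    integrable_of_bdd_meas (C := C1 * CZ) mDg₁T.aestronglyMeasurable (fun t =>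
      le_trans ((Dg₁ T t).le_opNorm _)
        (mul_le_mul (hdg₁bd T t _) (hδzbd t) (norm_nonneg _) hC1nn))
  have mΦ₂ : Measurable fun t => ∫ σ in Ioc (0:ℝ) T, Dg₂ T t σ (δz t) :=
    (mDg₂TJ.stronglyMeasurable.integral_prod_right').measurable
  have hΦ₂bd : ∀ t, ‖∫ σ in Ioc (0:ℝ) T, Dg₂ T t σ (δz t)‖ ≤ C2 * CZ * R := by
    intro t
    refine le_trans (norm_integral_le_of_norm_le_const (C := C2 * CZ)
      (Eventually.of_forall fun σ => ?_)) ?_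
    · exact le_trans ((Dg₂ T t σ).le_opNorm _)
        (mul_le_mul (hdg₂bd T t σ _) (hδzbd t) (norm_nonneg _) hC2nn)
    · exact mul_le_mul_of_nonneg_left (hvol 0 T (subset_refl _)) (mul_nonneg hC2nn hCZnn)
  have iΦ₂ : Integrable (fun t => ∫ σ in Ioc (0:ℝ) T, Dg₂ T t σ (δz t))
      (volume.restrict (Ioc (0:ℝ) T)) :=
    integrable_of_bdd_meas mΦ₂.aestronglyMeasurable hΦ₂bd
  have iΦ : Integrable (fun t => Dg₁ T t (δz t) + ∫ σ in Ioc (0:ℝ) T, Dg₂ T t σ (δz t))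
      (volume.restrict (Ioc (0:ℝ) T)) := iDg₁T.add iΦ₂
  have hP1 : ∫ t in Ioc (0:ℝ) T, ω (Dg₁ T t (δz t) + ∫ σ in Ioc (0:ℝ) T, Dg₂ T t σ (δz t))
      = ω (δy T) := by
    calc ∫ t in Ioc (0:ℝ) T, ω (Dg₁ T t (δz t) + ∫ σ in Ioc (0:ℝ) T, Dg₂ T t σ (δz t))
        = ω (∫ t in Ioc (0:ℝ) T,
            (Dg₁ T t (δz t) + ∫ σ in Ioc (0:ℝ) T, Dg₂ T t σ (δz t))) :=
          ContinuousLinearMap.integral_comp_comm ω iΦ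
      _ = ω ((∫ t in Ioc (0:ℝ) T, Dg₁ T t (δz t))
            + ∫ t in Ioc (0:ℝ) T, ∫ σ in Ioc (0:ℝ) T, Dg₂ T t σ (δz t)) := by
          rw [integral_add iDg₁T iΦ₂]
      _ = ω (δy T) := by rw [← hlin' T ⟨hT', le_rfl⟩]
  have mP1 : Measurable fun t =>
      ω (Dg₁ T t (δz t) + ∫ σ in Ioc (0:ℝ) T, Dg₂ T t σ (δz t)) :=
    ω.continuous.measurable.comp (mDg₁T.add mΦ₂)
  have iP1 : Integrable
      (fun t => ω (Dg₁ T t (δz t) + ∫ σ in Ioc (0:ℝ) T, Dg₂ T t σ (δz t)))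
      (volume.restrict (Ioc (0:ℝ) T)) :=
    integrable_of_bdd_meas (C := ‖ω‖ * (C1 * CZ + C2 * CZ * R)) mP1.aestronglyMeasurable
      (fun t => le_trans (ω.le_opNorm _) (mul_le_mul_of_nonneg_left
        (le_trans (norm_add_le _ _) (add_le_add (le_trans ((Dg₁ T t).le_opNorm _)
          (mul_le_mul (hdg₁bd T t _) (hδzbd t) (norm_nonneg _) hC1nn)) (hΦ₂bd t)))
        (norm_nonneg ω)))
  have mP2 : Measurable fun t => DG₁ t (δz t) := measurable_clm_apply_pair M3 hδzmeas
  have iP2 : Integrable (fun t => DG₁ t (δz t)) (volume.restrict (Ioc (0:ℝ) T)) :=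
    integrable_of_bdd_meas (C := CF1 * CZ) mP2.aestronglyMeasurable (fun t =>
      le_trans ((DG₁ t).le_opNorm _)
        (mul_le_mul (hdG₁bd t _) (hδzbd t) (norm_nonneg _) hCF1nn))
  have mP3J : Measurable fun q : ℝ × ℝ => DG₂ q.1 q.2 (δz q.1) :=
    measurable_clm_apply_pair M4 (hδzmeas.comp measurable_fst)
  have mP3 : Measurable fun t => ∫ σ in Ioc (0:ℝ) T, DG₂ t σ (δz t) :=
    (mP3J.stronglyMeasurable.integral_prod_right').measurable
  have iP3 : Integrable (fun t => ∫ σ in Ioc (0:ℝ) T, DG₂ t σ (δz t))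
      (volume.restrict (Ioc (0:ℝ) T)) := by
    refine integrable_of_bdd_meas (C := CF2 * CZ * R) mP3.aestronglyMeasurable (fun t => ?_)
    refine le_trans (norm_integral_le_of_norm_le_const (C := CF2 * CZ)
      (Eventually.of_forall fun σ => ?_)) ?_
    · exact le_trans ((DG₂ t σ).le_opNorm _)
        (mul_le_mul (hdG₂bd t σ _) (hδzbd t) (norm_nonneg _) hCF2nn)
    · exact mul_le_mul_of_nonneg_left (hvol 0 T (subset_refl _)) (mul_nonneg hCF2nn hCZnn)
  set hker : ℝ → ℝ → ℝ := fun t s => ψ s (Dg₁ s t (δz t))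
    + ∫ σ in Ioc (0:ℝ) T, ind s σ • ψ s (Dg₂ s t σ (δz t)) with hker_def
  have mhker1 : Measurable fun q : ℝ × ℝ => ψ q.2 (Dg₁ q.2 q.1 (δz q.1)) :=
    measurable_clm_apply_pair (mψ.comp measurable_snd)
      (measurable_clm_apply_pair (M1.comp (measurable_snd.prodMk measurable_fst))
        (hδzmeas.comp measurable_fst))
  have mhker2J : Measurable fun r : (ℝ × ℝ) × ℝ =>
      ind r.1.2 r.2 • ψ r.1.2 (Dg₂ r.1.2 r.1.1 r.2 (δz r.1.1)) := by
    have h1 : Measurable fun r : (ℝ × ℝ) × ℝ => Dg₂ r.1.2 r.1.1 r.2 (δz r.1.1) :=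
      measurable_clm_apply_pair (M2.comp (((measurable_fst.snd).prodMk
        (measurable_fst.fst)).prodMk measurable_snd)) (hδzmeas.comp measurable_fst.fst)
    have h2 : Measurable fun r : (ℝ × ℝ) × ℝ => ψ r.1.2 (Dg₂ r.1.2 r.1.1 r.2 (δz r.1.1)) :=
      measurable_clm_apply_pair (mψ.comp measurable_fst.snd) h1
    simp only [smul_eq_mul]
    exact (hindmeas.comp ((measurable_fst.snd).prodMk measurable_snd)).mul h2
  have mhker : Measurable fun q : ℝ × ℝ => hker q.1 q.2 :=
    mhker1.add (mhker2J.stronglyMeasurable.integral_prod_right').measurable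
  have hψDg₁δzbd : ∀ t s : ℝ, ‖ψ s (Dg₁ s t (δz t))‖ ≤ Cψ * C1 * CZ := by
    intro t s
    calc ‖ψ s (Dg₁ s t (δz t))‖ ≤ ‖ψ s‖ * ‖Dg₁ s t (δz t)‖ := (ψ s).le_opNorm _
      _ ≤ Cψ * (C1 * CZ) := mul_le_mul (hCψ s) (le_trans ((Dg₁ s t).le_opNorm _)
          (mul_le_mul (hdg₁bd s t _) (hδzbd t) (norm_nonneg _) hC1nn))
          (norm_nonneg _) hCψnn
      _ = Cψ * C1 * CZ := by ring
  have hindψDg₂bd : ∀ t s σ : ℝ, ‖ind s σ • ψ s (Dg₂ s t σ (δz t))‖ ≤ Cψ * C2 * CZ := by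
    intro t s σ
    refine le_trans (norm_smul_le _ _) ?_
    calc ‖ind s σ‖ * ‖ψ s (Dg₂ s t σ (δz t))‖ ≤ 1 * (Cψ * (C2 * CZ)) := by
          refine mul_le_mul (hindbd s σ) ?_ (norm_nonneg _) zero_le_one
          exact le_trans ((ψ s).le_opNorm _) (mul_le_mul (hCψ s)
            (le_trans ((Dg₂ s t σ).le_opNorm _)
              (mul_le_mul (hdg₂bd s t σ _) (hδzbd t) (norm_nonneg _) hC2nn))
            (norm_nonneg _) hCψnn)
      _ = Cψ * C2 * CZ := by ring
  have hker2bd : ∀ t s : ℝ,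
      ‖∫ σ in Ioc (0:ℝ) T, ind s σ • ψ s (Dg₂ s t σ (δz t))‖ ≤ Cψ * C2 * CZ * R := by
    intro t s
    refine le_trans (norm_integral_le_of_norm_le_const (C := Cψ * C2 * CZ)
      (Eventually.of_forall fun σ => hindψDg₂bd t s σ)) ?_
    exact mul_le_mul_of_nonneg_left (hvol 0 T (subset_refl _))
      (mul_nonneg (mul_nonneg hCψnn hC2nn) hCZnn)
  have hkerbd : ∀ t s, ‖hker t s‖ ≤ Cψ * C1 * CZ + Cψ * C2 * CZ * R := fun t s =>
    le_trans (norm_add_le _ _) (add_le_add (hψDg₁δzbd t s) (hker2bd t s))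
  have iP4 : IntegrableOn (fun t => ∫ s in Ioc t T, hker t s) (Ioc (0:ℝ) T) volume :=
    integrableOn_triangle hT' mhker hkerbd
  have hmerge : ∀ t : ℝ, (∫ s in Ioc t T, ψ s (Dg₁ s t (δz t)))
      + (∫ s in Ioc t T, ∫ σ in Ioc (0:ℝ) T, ind s σ • ψ s (Dg₂ s t σ (δz t)))
      = ∫ s in Ioc t T, hker t s := by
    intro t
    haveI := hfinIoc t T
    refine (integral_add ?_ ?_).symm
    · exact integrable_of_bdd_meas (C := Cψ * C1 * CZ)
        ((mhker1.comp (measurable_const.prodMk measurable_id)).aestronglyMeasurable)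
        (fun s => hψDg₁δzbd t s)
    · refine integrable_of_bdd_meas (C := Cψ * C2 * CZ * R) ?_ (fun s => hker2bd t s)
      exact (((mhker2J.stronglyMeasurable.integral_prod_right').measurable).comp
        (measurable_const.prodMk measurable_id)).aestronglyMeasurable
  have hDexp : ∀ t ∈ Ioc (0:ℝ) T, D t (δz t)
      = ω (Dg₁ T t (δz t) + ∫ σ in Ioc (0:ℝ) T, Dg₂ T t σ (δz t)) + DG₁ t (δz t)
        + (∫ σ in Ioc (0:ℝ) T, DG₂ t σ (δz t)) + ∫ s in Ioc t T, hker t s := by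
    intro t ht
    rw [hDapply t (Ioc_subset_Icc_self ht) (δz t), add_assoc, hmerge t]
  have hmain : ∫ t in Ioc (0:ℝ) T, D t (δz t)
      = ω (δy T) + (∫ t in Ioc (0:ℝ) T, DG₁ t (δz t))
        + (∫ t in Ioc (0:ℝ) T, ∫ σ in Ioc (0:ℝ) T, DG₂ t σ (δz t))
        + ∫ s in Ioc (0:ℝ) T, ψ s (δy s) := by
    have h1 : ∫ t in Ioc (0:ℝ) T, D t (δz t) = ∫ t in Ioc (0:ℝ) T,
        (ω (Dg₁ T t (δz t) + ∫ σ in Ioc (0:ℝ) T, Dg₂ T t σ (δz t)) + DG₁ t (δz t)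
        + (∫ σ in Ioc (0:ℝ) T, DG₂ t σ (δz t)) + ∫ s in Ioc t T, hker t s) :=
      setIntegral_congr_fun measurableSet_Ioc fun t ht => hDexp t ht
    have iP12 : Integrable (fun t =>
        ω (Dg₁ T t (δz t) + ∫ σ in Ioc (0:ℝ) T, Dg₂ T t σ (δz t)) + DG₁ t (δz t))
        (volume.restrict (Ioc (0:ℝ) T)) := iP1.add iP2
    have iP123 : Integrable (fun t =>
        ω (Dg₁ T t (δz t) + ∫ σ in Ioc (0:ℝ) T, Dg₂ T t σ (δz t)) + DG₁ t (δz t)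
          + ∫ σ in Ioc (0:ℝ) T, DG₂ t σ (δz t))
        (volume.restrict (Ioc (0:ℝ) T)) := iP12.add iP3
    rw [h1, integral_add iP123 iP4, integral_add iP12 iP3, integral_add iP1 iP2, hP1]
    congr 1
    rw [triangle_integral_swap hT' mhker hkerbd]
    refine setIntegral_congr_fun measurableSet_Ioc fun s hs => ?_
    haveI := hfinIoc 0 s
    have hs' : s ∈ Icc (0:ℝ) T := ⟨hs.1.le, hs.2⟩
    have ia : Integrable (fun t => Dg₁ s t (δz t)) (volume.restrict (Ioc (0:ℝ) s)) :=
      integrable_of_bdd_meas (C := C1 * CZ)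
        ((measurable_clm_apply_pair (M1.comp (measurable_const.prodMk measurable_id))
          hδzmeas).aestronglyMeasurable)
        (fun t => le_trans ((Dg₁ s t).le_opNorm _)
          (mul_le_mul (hdg₁bd s t _) (hδzbd t) (norm_nonneg _) hC1nn))
    have ibJ : Measurable fun q : ℝ × ℝ => Dg₂ s q.1 q.2 (δz q.1) :=
      measurable_clm_apply_pair (M2.comp ((measurable_const.prodMk
        measurable_fst).prodMk measurable_snd)) (hδzmeas.comp measurable_fst)
    have e1 : ∫ t in Ioc (0:ℝ) s, ψ s (Dg₁ s t (δz t))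
        = ψ s (∫ t in Ioc (0:ℝ) s, Dg₁ s t (δz t)) :=
      ContinuousLinearMap.integral_comp_comm (ψ s) ia
    have e2 : ∀ t : ℝ, (∫ σ in Ioc (0:ℝ) T, ind s σ • ψ s (Dg₂ s t σ (δz t)))
        = ψ s (∫ σ in Ioc (0:ℝ) s, Dg₂ s t σ (δz t)) := by
      intro t
      rw [hind_eq s hs.2 (fun σ => ψ s (Dg₂ s t σ (δz t)))]
      refine ContinuousLinearMap.integral_comp_comm (ψ s) ?_
      exact integrable_of_bdd_meas (C := C2 * CZ)
        ((ibJ.comp (measurable_const.prodMk measurable_id)).aestronglyMeasurable)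
        (fun σ => le_trans ((Dg₂ s t σ).le_opNorm _)
          (mul_le_mul (hdg₂bd s t σ _) (hδzbd t) (norm_nonneg _) hC2nn))
    have ib : Integrable (fun t => ∫ σ in Ioc (0:ℝ) s, Dg₂ s t σ (δz t))
        (volume.restrict (Ioc (0:ℝ) s)) := by
      refine integrable_of_bdd_meas (C := C2 * CZ * R)
        ((ibJ.stronglyMeasurable.integral_prod_right').measurable).aestronglyMeasurable
        (fun t => ?_)
      refine le_trans (norm_integral_le_of_norm_le_const (C := C2 * CZ)
        (Eventually.of_forall fun σ => ?_)) ?_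
      · exact le_trans ((Dg₂ s t σ).le_opNorm _)
          (mul_le_mul (hdg₂bd s t σ _) (hδzbd t) (norm_nonneg _) hC2nn)
      · exact mul_le_mul_of_nonneg_left (hvol 0 s (Ioc_subset_Ioc le_rfl hs.2))
          (mul_nonneg hC2nn hCZnn)
    calc ∫ t in Ioc (0:ℝ) s, hker t s
        = (∫ t in Ioc (0:ℝ) s, ψ s (Dg₁ s t (δz t)))
          + ∫ t in Ioc (0:ℝ) s, ∫ σ in Ioc (0:ℝ) T, ind s σ • ψ s (Dg₂ s t σ (δz t)) := by
          refine integral_add ?_ ?_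
          · exact integrable_of_bdd_meas (C := Cψ * C1 * CZ)
              ((mhker1.comp (measurable_id.prodMk measurable_const)).aestronglyMeasurable)
              (fun t => hψDg₁δzbd t s)
          · refine integrable_of_bdd_meas (C := Cψ * C2 * CZ * R) ?_ (fun t => hker2bd t s)
            exact (((mhker2J.stronglyMeasurable.integral_prod_right').measurable).comp
              (measurable_id.prodMk measurable_const)).aestronglyMeasurable
      _ = ψ s (∫ t in Ioc (0:ℝ) s, Dg₁ s t (δz t))
          + ∫ t in Ioc (0:ℝ) s, ψ s (∫ σ in Ioc (0:ℝ) s, Dg₂ s t σ (δz t)) := by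
          rw [e1]
          congr 1
          exact setIntegral_congr_fun measurableSet_Ioc fun t _ => e2 t
      _ = ψ s ((∫ t in Ioc (0:ℝ) s, Dg₁ s t (δz t))
          + ∫ t in Ioc (0:ℝ) s, ∫ σ in Ioc (0:ℝ) s, Dg₂ s t σ (δz t)) := by
          rw [ContinuousLinearMap.integral_comp_comm (ψ s) ib, ← map_add]
      _ = ψ s (δy s) := by rw [← hlin' s hs']
  have hsplitD : ∀ t : ℝ, D t (δz t) = D t (δy t, 0) + D t (0, δu t) := by
    intro t
    rw [← map_add]
    congr 1
    show δz t = _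
    rw [Prod.mk_add_mk, add_zero, zero_add]
  have iψδy : Integrable (fun t => ψ t (δy t)) (volume.restrict (Ioc (0:ℝ) T)) :=
    integrable_of_bdd_meas (C := Cψ * Cy)
      ((measurable_clm_apply_pair mψ hδy).aestronglyMeasurable)
      (fun t => le_trans ((ψ t).le_opNorm _)
        (mul_le_mul (hCψ t) (hCy t) (norm_nonneg _) hCψnn))
  have iDδz : Integrable (fun t => D t (δz t)) (volume.restrict (Ioc (0:ℝ) T)) := by
    refine ((((iP1.add iP2).add iP3).add iP4).congr ?_)
    exact ae_restrict_of_forall_mem measurableSet_Ioc fun t ht => (hDexp t ht).symm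
  have hDdu : ∀ᵐ t ∂(volume.restrict (Ioc (0:ℝ) T)),
      D t (0, δu t) = D t (δz t) - ψ t (δy t) := by
    filter_upwards [hcost'] with t hc
    rw [hsplitD t, hc]
    ring
  have hIntRHS : ∫ t in Ioc (0:ℝ) T, D t (0, δu t)
      = (∫ t in Ioc (0:ℝ) T, D t (δz t)) - ∫ t in Ioc (0:ℝ) T, ψ t (δy t) := by
    rw [integral_congr_ae hDdu, integral_sub iDδz iψδy]
  have hgoalL2 : (∫ t in (0:ℝ)..T, (fderiv ℝ (fun η => F₁ t η (u t)) (y t) (δy t)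
        + fderiv ℝ (fun ν => F₁ t (y t) ν) (u t) (δu t)))
      = ∫ t in Ioc (0:ℝ) T, DG₁ t (δz t) := by
    rw [intervalIntegral.integral_of_le hT']
    exact setIntegral_congr_fun measurableSet_Ioc fun t _ => hsplitF₁ t
  have hgoalL3 : (∫ t in (0:ℝ)..T, ∫ σ in (0:ℝ)..T,
        (fderiv ℝ (fun η => F₂ t σ η (y σ) (u t) (u σ)) (y t) (δy t)
        + fderiv ℝ (fun ν => F₂ t σ (y t) (y σ) ν (u σ)) (u t) (δu t)))
      = ∫ t in Ioc (0:ℝ) T, ∫ σ in Ioc (0:ℝ) T, DG₂ t σ (δz t) := by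
    rw [intervalIntegral.integral_of_le hT']
    refine setIntegral_congr_fun measurableSet_Ioc fun t _ => ?_
    rw [intervalIntegral.integral_of_le hT']
    exact setIntegral_congr_fun measurableSet_Ioc fun σ _ => hsplitF₂ t σ
  rw [hRHS, hIntRHS, hmain, ← hω, hgoalL2, hgoalL3]
  ring
end
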